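/- arXiv:1312.6652 — 14 statements merged into one kernel-verified Lean document; each statement's English description precedes it below -/
import Mathlib

section
/- Let n, d, c, k be positive integers, let ℓ be an integer with ℓ ≥ 10·d·c·k, let Ẽ be a level-ℓ pseudoexpectation functional on polynomials in x₁,…,xₙ, and let P be a sum of squares of real polynomials with total degree of P at most d. Set r = c·k and r' = (c+1)·k. Then Ẽ(P^r) ≥ 0 and Ẽ(P^{r'}) ≥ (Ẽ(P^r))^{(c+1)/c}, where the right-hand side is the real power (Ẽ(P^r))^{r'/r}. -/
open MvPolynomial Finset Real

private lemma sos_totalDegree {n m : ℕ} (P : MvPolynomial (Fin n) ℝ)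
    (R : Fin m → MvPolynomial (Fin n) ℝ) (hSOS : P = ∑ i, R i ^ 2) (i₀ : Fin m) :
    2 * (R i₀).totalDegree ≤ P.totalDegree := by
  classical
  set D : ℕ := Finset.univ.sup (fun i => (R i).totalDegree) with hD
  have hle : ∀ i : Fin m, (R i).totalDegree ≤ D := by
    intro i; rw [hD]; exact Finset.le_sup (f := fun i => (R i).totalDegree) (Finset.mem_univ i)
  rcases Nat.eq_zero_or_pos D with h0 | hDpos
  · have h1 : (R i₀).totalDegree = 0 := le_antisymm (h0 ▸ hle i₀) (Nat.zero_le _)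
    simp [h1]
  have hmain : 2 * D ≤ P.totalDegree := by
    -- pick an index attaining the max degree
    have huniv : (Finset.univ : Finset (Fin m)).Nonempty := by
      rcases (Finset.univ : Finset (Fin m)).eq_empty_or_nonempty with h | h
      · exfalso; rw [hD, h, Finset.sup_empty] at hDpos; exact absurd hDpos (lt_irrefl 0)
      · exact h
    obtain ⟨i₁, -, hi₁⟩ := Finset.exists_mem_eq_sup Finset.univ huniv
      (fun i => (R i : MvPolynomial (Fin n) ℝ).totalDegree)
    rw [← hD] at hi₁
    have hRne : R i₁ ≠ 0 := by
      intro h; rw [h] at hi₁; simp [totalDegree_zero] at hi₁; omega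
    obtain ⟨s₁, hs₁mem, hs₁⟩ := Finset.exists_mem_eq_sup (R i₁).support
      (MvPolynomial.support_nonempty.mpr hRne) (fun s => s.sum fun _ e => e)
    -- the finite set of top-degree monomials present in some `R i`
    set T : Finset (Fin n →₀ ℕ) :=
      (Finset.univ.biUnion fun i => (R i).support).filter (fun s => (s.sum fun _ e => e) = D)
      with hT
    have hs₁T : s₁ ∈ T := by
      rw [hT, Finset.mem_filter]
      constructor
      · exact Finset.mem_biUnion.mpr ⟨i₁, Finset.mem_univ _, hs₁mem⟩
      · have hdeg : (R i₁).totalDegree = s₁.sum fun _ e => e := hs₁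
        rw [← hdeg]; exact hi₁.symm
    obtain ⟨M, hMT, hMmax⟩ := Finset.exists_max_image T (toLex : (Fin n →₀ ℕ) → Lex _) ⟨s₁, hs₁T⟩
    rw [hT, Finset.mem_filter] at hMT
    obtain ⟨hMmem, hMsum⟩ := hMT
    obtain ⟨i₂, -, hMi₂⟩ := Finset.mem_biUnion.mp hMmem
    -- the key coefficient computation
    have hcoeff : ∀ i : Fin m, coeff (M + M) (R i ^ 2) = coeff M (R i) ^ 2 := by
      intro i
      rw [sq, coeff_mul]
      rw [Finset.sum_eq_single_of_mem (M, M) (Finset.HasAntidiagonal.mem_antidiagonal.mpr rfl)]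
      · rw [sq]
      rintro ⟨s, t⟩ hst hne
      rw [Finset.HasAntidiagonal.mem_antidiagonal] at hst
      by_contra hne0
      have hs : s ∈ (R i).support := by
        rw [mem_support_iff]; intro h; apply hne0; simp [h]
      have ht : t ∈ (R i).support := by
        rw [mem_support_iff]; intro h; apply hne0; simp [h]
      have hssum : (s.sum fun _ e => e) ≤ D := le_trans (le_totalDegree hs) (hle i)
      have htsum : (t.sum fun _ e => e) ≤ D := le_trans (le_totalDegree ht) (hle i)
      have haddsum : (s.sum fun _ e => e) + (t.sum fun _ e => e) = D + D := by
        have h1 : ((s + t).sum fun _ e => e) = (s.sum fun _ e => e) + (t.sum fun _ e => e) :=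
          Finsupp.sum_add_index' (fun _ => rfl) (fun _ _ _ => rfl)
        have h2 : ((M + M).sum fun _ e => e) = (M.sum fun _ e => e) + (M.sum fun _ e => e) :=
          Finsupp.sum_add_index' (fun _ => rfl) (fun _ _ _ => rfl)
        rw [hst, h2, hMsum] at h1
        omega
      have hsD : (s.sum fun _ e => e) = D := by omega
      have htD : (t.sum fun _ e => e) = D := by omega
      have hsT : s ∈ T := Finset.mem_filter.mpr
        ⟨Finset.mem_biUnion.mpr ⟨i, Finset.mem_univ _, hs⟩, hsD⟩
      have htT : t ∈ T := Finset.mem_filter.mpr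
        ⟨Finset.mem_biUnion.mpr ⟨i, Finset.mem_univ _, ht⟩, htD⟩
      have h1 : toLex s ≤ toLex M := hMmax s hsT
      have h2 : toLex t ≤ toLex M := hMmax t htT
      have hsM : s = M := by
        by_contra hsne
        have hlt : toLex s < toLex M :=
          lt_of_le_of_ne h1 (fun h => hsne (toLex.injective h))
        have : toLex s + toLex t < toLex M + toLex M := add_lt_add_of_lt_of_le hlt h2
        have heq : toLex s + toLex t = toLex M + toLex M := by
          have : toLex (s + t) = toLex (M + M) := congrArg toLex hst
          exact this
        rw [heq] at this
        exact absurd this (lt_irrefl _)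
      have htM : t = M := by
        rw [hsM] at hst
        exact add_left_cancel hst
      exact hne (by rw [hsM, htM])
    have hPcoeff : coeff (M + M) P = ∑ i, coeff M (R i) ^ 2 := by
      rw [hSOS]
      rw [coeff_sum]
      exact Finset.sum_congr rfl fun i _ => hcoeff i
    have hpos : 0 < coeff (M + M) P := by
      rw [hPcoeff]
      apply Finset.sum_pos' (fun i _ => sq_nonneg _)
      refine ⟨i₂, Finset.mem_univ _, ?_⟩
      have := mem_support_iff.mp hMi₂
      positivity
    have hmem : (M + M) ∈ P.support := mem_support_iff.mpr (ne_of_gt hpos)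
    have := le_totalDegree hmem
    have h2 : ((M + M).sum fun _ e => e) = (M.sum fun _ e => e) + (M.sum fun _ e => e) :=
      Finsupp.sum_add_index' (fun _ => rfl) (fun _ _ _ => rfl)
    rw [h2, hMsum] at this
    omega
  have := hle i₀
  omega


private lemma seq_holder (b : ℕ → ℝ) (N : ℕ) (h0 : b 0 = 1)
    (hnn : ∀ j, j ≤ N → 0 ≤ b j)
    (hconv : ∀ a, a + 2 ≤ N → b (a + 1) ^ 2 ≤ b a * b (a + 2))
    (r : ℕ) (hr1 : 1 ≤ r) (hrN : r + 1 ≤ N) (hbr : 0 < b r) :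
    ∀ t, r + t ≤ N → b r ^ (r + t) ≤ b (r + t) ^ r := by
  have hup : ∀ j, 1 ≤ j → j + 2 ≤ N → b j = 0 → b (j + 1) = 0 := by
    intro j h1 h2 hz
    have hcv := hconv j h2
    rw [hz, zero_mul] at hcv
    exact pow_eq_zero_iff two_ne_zero |>.mp (le_antisymm hcv (sq_nonneg _))
  have hdown : ∀ j, 2 ≤ j → j ≤ N → b j = 0 → b (j - 1) = 0 := by
    intro j h1 h2 hz
    have hcv := hconv (j - 2) (by omega)
    rw [show j - 2 + 2 = j from by omega, show j - 2 + 1 = j - 1 from by omega, hz, mul_zero] at hcv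
    exact pow_eq_zero_iff two_ne_zero |>.mp (le_antisymm hcv (sq_nonneg _))
  have hzup : ∀ t j, 1 ≤ j → j + t = r → b j = 0 → b r = 0 := by
    intro t
    induction t with
    | zero => intro j h1 h2 h3; rw [show r = j from by omega]; exact h3
    | succ t ih =>
      intro j h1 h2 h3
      exact ih (j + 1) (by omega) (by omega) (hup j h1 (by omega) h3)
  have hzdown : ∀ t j, j = r + t → j ≤ N → b j = 0 → b r = 0 := by
    intro t
    induction t with
    | zero => intro j h1 h2 h3; rw [show r = j from by omega]; exact h3
    | succ t ih =>
      intro j h1 h2 h3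
      have := hdown j (by omega) h2 h3
      exact ih (j - 1) (by omega) (by omega) this
  have hpos : ∀ j, 1 ≤ j → j ≤ N → 0 < b j := by
    intro j h1 h2
    rcases lt_or_eq_of_le (hnn j h2) with h | h
    · exact h
    · exfalso
      rcases le_or_gt j r with hle | hlt
      · exact hbr.ne' (hzup (r - j) j h1 (by omega) h.symm)
      · exact hbr.ne' (hzdown (j - r) j (by omega) h2 h.symm)
  have hD : ∀ j, j + 1 ≤ N → b j ^ (j + 1) ≤ b (j + 1) ^ j := by
    intro j
    induction j with
    | zero => intro _; simp [h0]
    | succ j ih =>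
      intro hj2
      have hDj := ih (by omega)
      have hcv := hconv j (by omega)
      have hp1 : 0 < b (j + 1) := hpos (j + 1) (by omega) (by omega)
      have hnn2 : 0 ≤ b (j + 2) := hnn _ (by omega)
      have hnn0 : 0 ≤ b j := hnn _ (by omega)
      have step1 : (b (j + 1) ^ 2) ^ (j + 1) ≤ (b j * b (j + 2)) ^ (j + 1) :=
        pow_le_pow_left₀ (sq_nonneg _) hcv _
      rw [mul_pow] at step1
      have step2 : b j ^ (j + 1) * b (j + 2) ^ (j + 1) ≤ b (j + 1) ^ j * b (j + 2) ^ (j + 1) :=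
        mul_le_mul_of_nonneg_right hDj (pow_nonneg hnn2 _)
      have key : b (j + 1) ^ j * b (j + 1) ^ (j + 2) ≤ b (j + 1) ^ j * b (j + 2) ^ (j + 1) := by
        calc b (j + 1) ^ j * b (j + 1) ^ (j + 2) = (b (j + 1) ^ 2) ^ (j + 1) := by
              rw [← pow_add, ← pow_mul]; congr 1; omega
          _ ≤ b j ^ (j + 1) * b (j + 2) ^ (j + 1) := step1
          _ ≤ _ := step2
      exact le_of_mul_le_mul_left key (pow_pos hp1 j)
  intro t
  induction t with
  | zero => intro _; exact le_refl _
  | succ t ih =>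
    intro htN
    have hprev := ih (by omega)
    have hDrt := hD (r + t) (by omega)
    have h1 : 0 ≤ b (r + t) := hnn _ (by omega)
    have h2 : 0 ≤ b (r + t + 1) := hnn _ (by omega)
    have hbrnn : 0 ≤ b r := hbr.le
    have big : (b r ^ (r + t + 1)) ^ (r + t) ≤ (b (r + t + 1) ^ r) ^ (r + t) := by
      calc (b r ^ (r + t + 1)) ^ (r + t) = (b r ^ (r + t)) ^ (r + t + 1) := by
            rw [← pow_mul, ← pow_mul]; congr 1; ring
        _ ≤ (b (r + t) ^ r) ^ (r + t + 1) := pow_le_pow_left₀ (pow_nonneg hbrnn _) hprev _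
        _ = (b (r + t) ^ (r + t + 1)) ^ r := by rw [← pow_mul, ← pow_mul]; congr 1; ring
        _ ≤ (b (r + t + 1) ^ (r + t)) ^ r := pow_le_pow_left₀ (pow_nonneg h1 _) hDrt _
        _ = (b (r + t + 1) ^ r) ^ (r + t) := by rw [← pow_mul, ← pow_mul]; congr 1; ring
    have := le_of_pow_le_pow_left₀ (by omega) (pow_nonneg h2 r) big
    rw [show r + (t + 1) = r + t + 1 from by omega]
    exact this

/-- **Pseudoexpectation Hölder.**
Let `E` be a level-`ℓ` pseudoexpectation functional (linear, `E 1 = 1`,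
`E (R²) ≥ 0` for all `R` of total degree at most `ℓ/2`) with `ℓ ≥ 10·d·c·k`,
and let `P` be a sum of squares of total degree at most `d`.  With `r = c·k`
and `r' = (c+1)·k`, we have `E (P^r) ≥ 0` and
`E (P^{r'}) ≥ (E (P^r))^{r'/r} = (E (P^r))^{(c+1)/c}` (real power). -/
theorem pseudoexpectation_holder
    (n d c k : ℕ) (hn : 0 < n) (hd : 0 < d) (hc : 0 < c) (hk : 0 < k)
    (ℓ : ℕ) (hℓ : 10 * d * c * k ≤ ℓ)
    (E : MvPolynomial (Fin n) ℝ →ₗ[ℝ] ℝ)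
    (hE1 : E 1 = 1)
    (hEpos : ∀ R : MvPolynomial (Fin n) ℝ, R.totalDegree ≤ ℓ / 2 → 0 ≤ E (R ^ 2))
    (P : MvPolynomial (Fin n) ℝ) (hPdeg : P.totalDegree ≤ d)
    (m : ℕ) (R : Fin m → MvPolynomial (Fin n) ℝ) (hSOS : P = ∑ i, R i ^ 2) :
    0 ≤ E (P ^ (c * k)) ∧
      (E (P ^ (c * k))) ^ (((c : ℝ) + 1) / (c : ℝ)) ≤ E (P ^ ((c + 1) * k)) := by
  classical
  have hck1 : 1 ≤ c * k := Nat.one_le_iff_ne_zero.mpr (Nat.mul_ne_zero hc.ne' hk.ne')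
  have hkck : k ≤ c * k := Nat.le_mul_of_pos_left k hc
  have hNeq : (c + 1) * k = c * k + k := by ring
  -- degree bound for applying `hEpos`
  have hB : d + d * (c * k) ≤ ℓ / 2 := by
    rw [Nat.le_div_iff_mul_le (by norm_num : 0 < 2)]
    have h1 : d * 1 ≤ d * (c * k) := Nat.mul_le_mul_left d hck1
    nlinarith [hℓ]
  have hE2 : ∀ Q : MvPolynomial (Fin n) ℝ, Q.totalDegree ≤ d + d * (c * k) → 0 ≤ E (Q ^ 2) :=
    fun Q h => hEpos Q (le_trans h hB)
  have hRd : ∀ i, (R i).totalDegree ≤ d := by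
    intro i
    have := sos_totalDegree P R hSOS i
    omega
  have hdegP : ∀ u, u ≤ c * k → (P ^ u).totalDegree ≤ d + d * (c * k) := by
    intro u hu
    refine le_trans (totalDegree_pow P u) ?_
    calc u * P.totalDegree ≤ (c * k) * d := Nat.mul_le_mul hu hPdeg
      _ ≤ d + d * (c * k) := by rw [mul_comm]; omega
  have hdegRP : ∀ i u, u ≤ c * k → (R i * P ^ u).totalDegree ≤ d + d * (c * k) := by
    intro i u hu
    refine le_trans (totalDegree_mul _ _) ?_
    have h1 := hRd i
    have h2 : (P ^ u).totalDegree ≤ d * (c * k) := by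
      refine le_trans (totalDegree_pow P u) ?_
      calc u * P.totalDegree ≤ (c * k) * d := Nat.mul_le_mul hu hPdeg
        _ = d * (c * k) := by ring
    omega
  -- expansion of E (P * Q) through the SOS certificate
  have expand : ∀ Q : MvPolynomial (Fin n) ℝ, E (P * Q) = ∑ i, E (R i ^ 2 * Q) := by
    intro Q
    conv_lhs => rw [hSOS]
    rw [Finset.sum_mul, map_sum]
  -- nonnegativity of pseudo-moments
  have hnn : ∀ s, s ≤ c * k + k → 0 ≤ E (P ^ s) := by
    intro s hs
    rcases Nat.even_or_odd s with ⟨u, hu⟩ | ⟨u, hu⟩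
    · have huk : u ≤ c * k := by omega
      have h1 : P ^ s = (P ^ u) ^ 2 := by rw [hu]; ring
      rw [h1]
      exact hE2 _ (hdegP u huk)
    · have huk : u ≤ c * k := by omega
      have h1 : P ^ s = P * P ^ (2 * u) := by rw [hu, pow_succ']
      rw [h1, expand]
      refine Finset.sum_nonneg fun i _ => ?_
      have h2 : R i ^ 2 * P ^ (2 * u) = (R i * P ^ u) ^ 2 := by ring
      rw [h2]
      exact hE2 _ (hdegRP i u huk)
  -- Cauchy–Schwarz for the pseudoexpectation
  have CS : ∀ f g : MvPolynomial (Fin n) ℝ, f.totalDegree ≤ d + d * (c * k) →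
      g.totalDegree ≤ d + d * (c * k) → E (f * g) ^ 2 ≤ E (f ^ 2) * E (g ^ 2) := by
    intro f g hf hg
    have key : ∀ t : ℝ, 0 ≤ E (g ^ 2) * (t * t) + 2 * E (f * g) * t + E (f ^ 2) := by
      intro t
      have hdeg : (f + C t * g).totalDegree ≤ d + d * (c * k) := by
        refine le_trans (totalDegree_add _ _) (max_le hf ?_)
        refine le_trans (totalDegree_mul _ _) ?_
        simpa [totalDegree_C] using hg
      have h0 := hE2 _ hdeg
      have hexp : (f + C t * g) ^ 2 = f ^ 2 + C (2 * t) * (f * g) + C (t * t) * g ^ 2 := by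
        rw [map_mul, map_mul]
        have hC2 : (C 2 : MvPolynomial (Fin n) ℝ) = 2 := by
          simp [map_ofNat]
        rw [hC2]
        ring
      rw [hexp] at h0
      rw [map_add, map_add, C_mul', C_mul', map_smul, map_smul, smul_eq_mul, smul_eq_mul] at h0
      linarith
    have hdisc := discrim_le_zero key
    rw [discrim] at hdisc
    nlinarith [hdisc]
  -- log-convexity of pseudo-moments
  have hconv : ∀ a, a + 2 ≤ c * k + k →
      E (P ^ (a + 1)) ^ 2 ≤ E (P ^ a) * E (P ^ (a + 2)) := by
    intro a ha
    rcases Nat.even_or_odd a with ⟨u, hu⟩ | ⟨u, hu⟩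
    · -- a even : plain Cauchy–Schwarz
      have huk : u + 1 ≤ c * k := by omega
      have e0 : P ^ (a + 1) = P ^ u * P ^ (u + 1) := by rw [hu]; ring
      have e1 : (P ^ u) ^ 2 = P ^ a := by rw [hu]; ring
      have e2 : (P ^ (u + 1)) ^ 2 = P ^ (a + 2) := by rw [hu]; ring
      calc E (P ^ (a + 1)) ^ 2 = E (P ^ u * P ^ (u + 1)) ^ 2 := by rw [e0]
        _ ≤ E ((P ^ u) ^ 2) * E ((P ^ (u + 1)) ^ 2) :=
            CS _ _ (hdegP u (by omega)) (hdegP (u + 1) huk)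
        _ = E (P ^ a) * E (P ^ (a + 2)) := by rw [e1, e2]
    · -- a odd : Cauchy–Schwarz through the SOS certificate
      have huk : u + 1 ≤ c * k := by omega
      have hAnn : ∀ i, 0 ≤ E ((R i * P ^ u) ^ 2) := fun i => hE2 _ (hdegRP i u (by omega))
      have hBnn : ∀ i, 0 ≤ E ((R i * P ^ (u + 1)) ^ 2) := fun i => hE2 _ (hdegRP i (u + 1) huk)
      have hA : ∑ i, E ((R i * P ^ u) ^ 2) = E (P ^ a) := by
        have h1 : P ^ a = P * P ^ (2 * u) := by rw [hu, pow_succ']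
        rw [h1, expand]
        exact Finset.sum_congr rfl fun i _ => congrArg E (by ring)
      have hB : ∑ i, E ((R i * P ^ (u + 1)) ^ 2) = E (P ^ (a + 2)) := by
        have h1 : P ^ (a + 2) = P * P ^ (2 * (u + 1)) := by rw [hu]; ring
        rw [h1, expand]
        exact Finset.sum_congr rfl fun i _ => congrArg E (by ring)
      have hx : E (P ^ (a + 1)) = ∑ i, E ((R i * P ^ u) * (R i * P ^ (u + 1))) := by
        have h1 : P ^ (a + 1) = P * P ^ (2 * u + 1) := by rw [hu]; ring
        rw [h1, expand]
        exact Finset.sum_congr rfl fun i _ => congrArg E (by ring)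
      have hxle : ∀ i ∈ Finset.univ, E ((R i * P ^ u) * (R i * P ^ (u + 1)))
          ≤ Real.sqrt (E ((R i * P ^ u) ^ 2)) * Real.sqrt (E ((R i * P ^ (u + 1)) ^ 2)) := by
        intro i _
        have hcs : E ((R i * P ^ u) * (R i * P ^ (u + 1))) ^ 2 ≤ E ((R i * P ^ u) ^ 2) * E ((R i * P ^ (u + 1)) ^ 2) :=
          CS _ _ (hdegRP i u (by omega)) (hdegRP i (u + 1) huk)
        calc E ((R i * P ^ u) * (R i * P ^ (u + 1)))
            ≤ |E ((R i * P ^ u) * (R i * P ^ (u + 1)))| := le_abs_self _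
          _ = Real.sqrt (E ((R i * P ^ u) * (R i * P ^ (u + 1))) ^ 2) :=
              (Real.sqrt_sq_eq_abs _).symm
          _ ≤ Real.sqrt (E ((R i * P ^ u) ^ 2) * E ((R i * P ^ (u + 1)) ^ 2)) := Real.sqrt_le_sqrt hcs
          _ = Real.sqrt (E ((R i * P ^ u) ^ 2)) * Real.sqrt (E ((R i * P ^ (u + 1)) ^ 2)) := Real.sqrt_mul (hAnn i) _
      have hsum : E (P ^ (a + 1)) ≤ Real.sqrt (∑ i, E ((R i * P ^ u) ^ 2)) * Real.sqrt (∑ i, E ((R i * P ^ (u + 1)) ^ 2)) := by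
        rw [hx]
        exact le_trans (Finset.sum_le_sum hxle) (Real.sum_sqrt_mul_sqrt_le _ hAnn hBnn)
      have hEnn : 0 ≤ E (P ^ (a + 1)) := hnn (a + 1) (by omega)
      have hsA : 0 ≤ ∑ i, E ((R i * P ^ u) ^ 2) := Finset.sum_nonneg fun i _ => hAnn i
      have hsB : 0 ≤ ∑ i, E ((R i * P ^ (u + 1)) ^ 2) := Finset.sum_nonneg fun i _ => hBnn i
      calc E (P ^ (a + 1)) ^ 2 = E (P ^ (a + 1)) * E (P ^ (a + 1)) := sq (E (P ^ (a + 1))) ▸ rfl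
        _ ≤ (Real.sqrt (∑ i, E ((R i * P ^ u) ^ 2)) * Real.sqrt (∑ i, E ((R i * P ^ (u + 1)) ^ 2)))
            * (Real.sqrt (∑ i, E ((R i * P ^ u) ^ 2)) * Real.sqrt (∑ i, E ((R i * P ^ (u + 1)) ^ 2))) :=
            mul_le_mul (α := ℝ) hsum hsum hEnn (mul_nonneg (Real.sqrt_nonneg _) (Real.sqrt_nonneg _))
        _ = (∑ i, E ((R i * P ^ u) ^ 2)) * (∑ i, E ((R i * P ^ (u + 1)) ^ 2)) := by
            rw [mul_mul_mul_comm, Real.mul_self_sqrt hsA, Real.mul_self_sqrt hsB]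
        _ = E (P ^ a) * E (P ^ (a + 2)) := by rw [hA, hB]
  -- assemble
  have hb0 : E ((P : MvPolynomial (Fin n) ℝ) ^ 0) = 1 := by simpa using hE1
  have goal1 : 0 ≤ E (P ^ (c * k)) := hnn (c * k) (by omega)
  refine ⟨goal1, ?_⟩
  rcases lt_or_eq_of_le goal1 with hbr | hbr
  · -- positive case
    have hkey := seq_holder (fun j => E (P ^ j)) (c * k + k) hb0 hnn hconv (c * k) hck1
      (by omega) hbr k (by omega)
    beta_reduce at hkey
    have hrk : c * k + k = (c + 1) * k := by ring
    rw [hrk] at hkey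
    -- hkey : E (P ^ (c*k)) ^ ((c+1)*k) ≤ E (P ^ ((c+1)*k)) ^ (c*k)
    have hc0 : (c : ℝ) ≠ 0 := Nat.cast_ne_zero.mpr hc.ne'
    have hk0 : (k : ℝ) ≠ 0 := Nat.cast_ne_zero.mpr hk.ne'
    have hr0 : ((c * k : ℕ) : ℝ) ≠ 0 := by positivity
    have hexp : ((c : ℝ) + 1) / c = (((c + 1) * k : ℕ) : ℝ) * (((c * k : ℕ) : ℝ))⁻¹ := by
      push_cast
      field_simp
    have hNnn : 0 ≤ E (P ^ ((c + 1) * k)) := hnn ((c + 1) * k) (by omega)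
    rw [hexp]
    rw [Real.rpow_mul hbr.le, Real.rpow_natCast]
    have step : (E (P ^ (c * k)) ^ ((c + 1) * k) : ℝ) ^ (((c * k : ℕ) : ℝ))⁻¹
        ≤ (E (P ^ ((c + 1) * k)) ^ (c * k) : ℝ) ^ (((c * k : ℕ) : ℝ))⁻¹ := by
      apply Real.rpow_le_rpow (pow_nonneg hbr.le _) hkey
      positivity
    refine le_trans step ?_
    rw [← Real.rpow_natCast (E (P ^ ((c + 1) * k))) (c * k), ← Real.rpow_mul hNnn,
      mul_inv_cancel₀ hr0, Real.rpow_one]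
  · -- zero case
    rw [← hbr, Real.zero_rpow]
    · exact hnn ((c + 1) * k) (by omega)
    · positivity
end

section
/- Let n, m and ℓ be positive integers, let Ẽ_X be a level-ℓ pseudoexpectation functional on polynomials in x₁,…,xₙ and let Ẽ_Y be a level-ℓ pseudoexpectation functional on polynomials in y₁,…,y_m. Then there exists a level-ℓ pseudoexpectation functional Ẽ on polynomials in the n + m variables x₁,…,xₙ,y₁,…,y_m such that Ẽ(P(x)·Q(y)) = Ẽ_X(P) · Ẽ_Y(Q) for every polynomial P in the x-variables and every polynomial Q in the y-variables with deg(P) + deg(Q) ≤ ℓ. -/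
open MvPolynomial Finsupp
open scoped Matrix

noncomputable section PEProd

/-- Sum of entrywise products of two PSD real matrices is nonnegative. -/
lemma PEProd.sum_mul_nonneg {ι : Type*} [Fintype ι] [DecidableEq ι] {M N : Matrix ι ι ℝ}
    (hM : M.PosSemidef) (hN : N.PosSemidef) :
    0 ≤ ∑ i, ∑ j, M i j * N i j := by
  obtain ⟨r, B, hB⟩ : ∃ r : ℕ, ∃ B : Matrix (Fin r) ι ℝ, M = Bᴴ * B := by
    obtain ⟨r, v, hv⟩ := Matrix.posSemidef_iff_eq_sum_vecMulVec.mp hM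
    exact ⟨r, Matrix.of fun k i => v k i, by
      rw [hv]; ext i j; simp [Matrix.mul_apply, Matrix.vecMulVec_apply, Matrix.sum_apply]⟩
  have hrw : ∀ i j, M i j = ∑ k, B k i * B k j := by
    intro i j
    rw [hB]
    simp [Matrix.mul_apply, Matrix.conjTranspose_apply]
  have hterm : ∀ k, ((star fun j => B k j) ⬝ᵥ (N *ᵥ fun j => B k j))
      = ∑ i, ∑ j, (B k i * B k j) * N i j := by
    intro k
    simp only [dotProduct, Matrix.mulVec, Pi.star_apply, star_trivial,
      Finset.mul_sum]
    exact Finset.sum_congr rfl fun i _ => Finset.sum_congr rfl fun j _ => by ring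
  calc (0:ℝ) ≤ ∑ k, ((star fun j => B k j) ⬝ᵥ (N *ᵥ fun j => B k j)) :=
        Finset.sum_nonneg fun k _ => hN.dotProduct_mulVec_nonneg _
    _ = ∑ k, ∑ i, ∑ j, (B k i * B k j) * N i j := by
        exact Finset.sum_congr rfl fun k _ => hterm k
    _ = ∑ i, ∑ j, ∑ k, (B k i * B k j) * N i j := by
        rw [Finset.sum_comm]
        exact Finset.sum_congr rfl fun i _ => Finset.sum_comm
    _ = ∑ i, ∑ j, M i j * N i j := by
        refine Finset.sum_congr rfl fun i _ => Finset.sum_congr rfl fun j _ => ?_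
        rw [hrw, Finset.sum_mul]

/-- Gram matrices of pseudoexpectations are PSD. -/
lemma PEProd.gram_psd {σ : Type*} (E : MvPolynomial σ ℝ →ₗ[ℝ] ℝ) (k : ℕ)
    (hE : ∀ P : MvPolynomial σ ℝ, P.totalDegree ≤ k → 0 ≤ E (P ^ 2))
    {ι : Type*} [Fintype ι] (q : ι → MvPolynomial σ ℝ)
    (hq : ∀ i, (q i).totalDegree ≤ k) :
    Matrix.PosSemidef (Matrix.of fun i j => E (q i * q j)) := by
  refine Matrix.PosSemidef.of_dotProduct_mulVec_nonneg ?_ ?_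
  · ext i j
    simp [Matrix.conjTranspose_apply, mul_comm]
  · intro x
    have hdeg : (∑ i, x i • q i).totalDegree ≤ k :=
      totalDegree_finsetSum_le fun i _ => (totalDegree_smul_le _ _).trans (hq i)
    have key : (∑ i, x i • q i) ^ 2 = ∑ i, ∑ j, (x i * x j) • (q i * q j) := by
      rw [sq, Finset.sum_mul_sum]
      exact Finset.sum_congr rfl fun i _ => Finset.sum_congr rfl fun j _ =>
        smul_mul_smul_comm (x i) (q i) (x j) (q j)
    have hpos := hE _ hdeg
    rw [key] at hpos
    simp only [map_sum, map_smul, smul_eq_mul] at hpos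
    have goal_eq : (star x) ⬝ᵥ ((Matrix.of fun i j => E (q i * q j)) *ᵥ x)
        = ∑ i, ∑ j, (x i * x j) * E (q i * q j) := by
      simp only [dotProduct, Matrix.mulVec, Pi.star_apply, star_trivial,
        Matrix.of_apply, Finset.mul_sum]
      exact Finset.sum_congr rfl fun i _ => Finset.sum_congr rfl fun j _ => by ring
    rw [goal_eq]
    exact hpos

namespace PEProd

variable {n m : ℕ}

/-- The `inl`-part of an exponent vector. -/
def dL (d : (Fin n ⊕ Fin m) →₀ ℕ) : Fin n →₀ ℕ :=
  Finsupp.comapDomain Sum.inl d Sum.inl_injective.injOn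

/-- The `inr`-part of an exponent vector. -/
def dR (d : (Fin n ⊕ Fin m) →₀ ℕ) : Fin m →₀ ℕ :=
  Finsupp.comapDomain Sum.inr d Sum.inr_injective.injOn

@[simp] lemma dL_apply (d : (Fin n ⊕ Fin m) →₀ ℕ) (i : Fin n) : dL d i = d (Sum.inl i) := rfl
@[simp] lemma dR_apply (d : (Fin n ⊕ Fin m) →₀ ℕ) (j : Fin m) : dR d j = d (Sum.inr j) := rfl

lemma dL_add (d e : (Fin n ⊕ Fin m) →₀ ℕ) : dL (d + e) = dL d + dL e := by
  ext i; simp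

lemma dR_add (d e : (Fin n ⊕ Fin m) →₀ ℕ) : dR (d + e) = dR d + dR e := by
  ext j; simp

lemma dL_mapDomain_inl (a : Fin n →₀ ℕ) : dL (m := m) (Finsupp.mapDomain Sum.inl a) = a := by
  ext i
  simp [Finsupp.mapDomain_apply Sum.inl_injective]

lemma dL_mapDomain_inr (b : Fin m →₀ ℕ) : dL (n := n) (Finsupp.mapDomain Sum.inr b) = 0 := by
  ext i
  rw [dL_apply, Finsupp.mapDomain_notin_range]
  · rfl
  · rintro ⟨j, h⟩; exact Sum.inr_ne_inl h

lemma dR_mapDomain_inr (b : Fin m →₀ ℕ) : dR (n := n) (Finsupp.mapDomain Sum.inr b) = b := by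
  ext j
  simp [Finsupp.mapDomain_apply Sum.inr_injective]

lemma dR_mapDomain_inl (a : Fin n →₀ ℕ) : dR (m := m) (Finsupp.mapDomain Sum.inl a) = 0 := by
  ext j
  rw [dR_apply, Finsupp.mapDomain_notin_range]
  · rfl
  · rintro ⟨i, h⟩; exact Sum.inl_ne_inr h

lemma split (d : (Fin n ⊕ Fin m) →₀ ℕ) :
    Finsupp.mapDomain Sum.inl (dL d) + Finsupp.mapDomain Sum.inr (dR d) = d := by
  ext s
  cases s with
  | inl i =>
      rw [Finsupp.add_apply, Finsupp.mapDomain_apply Sum.inl_injective,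
        Finsupp.mapDomain_notin_range]
      · simp
      · rintro ⟨j, h⟩; exact Sum.inr_ne_inl h
  | inr j =>
      rw [Finsupp.add_apply, Finsupp.mapDomain_apply Sum.inr_injective,
        Finsupp.mapDomain_notin_range]
      · simp
      · rintro ⟨i, h⟩; exact Sum.inl_ne_inr h

lemma sum_mapDomain_eq {α β : Type*} (f : α → β) (v : α →₀ ℕ) :
    (Finsupp.mapDomain f v).sum (fun _ e => e) = v.sum (fun _ e => e) :=
  Finsupp.sum_mapDomain_index (fun _ => rfl) (fun _ _ _ => rfl)

lemma dL_sum_le (d : (Fin n ⊕ Fin m) →₀ ℕ) :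
    (dL d).sum (fun _ e => e) ≤ d.sum (fun _ e => e) := by
  conv_rhs => rw [← split d]
  rw [Finsupp.sum_add_index' (fun _ => rfl) (fun _ _ _ => rfl),
    sum_mapDomain_eq, sum_mapDomain_eq]
  exact Nat.le_add_right _ _

lemma dR_sum_le (d : (Fin n ⊕ Fin m) →₀ ℕ) :
    (dR d).sum (fun _ e => e) ≤ d.sum (fun _ e => e) := by
  conv_rhs => rw [← split d]
  rw [Finsupp.sum_add_index' (fun _ => rfl) (fun _ _ _ => rfl),
    sum_mapDomain_eq, sum_mapDomain_eq]
  exact Nat.le_add_left _ _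

end PEProd

end PEProd

open PEProd in
/-- **Independent product of pseudodistributions.**
Given level-`ℓ` pseudoexpectation functionals `EX` on polynomials in `x₁,…,xₙ`
and `EY` on polynomials in `y₁,…,y_m`, there is a level-`ℓ` pseudoexpectation
functional `E` on polynomials in the `n + m` variables (modelled via `Fin n ⊕ Fin m`)
with `E (P(x)·Q(y)) = EX P · EY Q` whenever `deg P + deg Q ≤ ℓ`. -/
theorem pseudoexpectation_product
    (n m ℓ : ℕ) (hn : 0 < n) (hm : 0 < m) (hℓ : 0 < ℓ)
    (EX : MvPolynomial (Fin n) ℝ →ₗ[ℝ] ℝ)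
    (hEX1 : EX 1 = 1)
    (hEXpos : ∀ P : MvPolynomial (Fin n) ℝ, P.totalDegree ≤ ℓ / 2 → 0 ≤ EX (P ^ 2))
    (EY : MvPolynomial (Fin m) ℝ →ₗ[ℝ] ℝ)
    (hEY1 : EY 1 = 1)
    (hEYpos : ∀ Q : MvPolynomial (Fin m) ℝ, Q.totalDegree ≤ ℓ / 2 → 0 ≤ EY (Q ^ 2)) :
    ∃ E : MvPolynomial (Fin n ⊕ Fin m) ℝ →ₗ[ℝ] ℝ,
      E 1 = 1 ∧
      (∀ R : MvPolynomial (Fin n ⊕ Fin m) ℝ, R.totalDegree ≤ ℓ / 2 → 0 ≤ E (R ^ 2)) ∧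
      ∀ (P : MvPolynomial (Fin n) ℝ) (Q : MvPolynomial (Fin m) ℝ),
        P.totalDegree + Q.totalDegree ≤ ℓ →
        E (MvPolynomial.rename Sum.inl P * MvPolynomial.rename Sum.inr Q)
          = EX P * EY Q := by
  classical
  set E : MvPolynomial (Fin n ⊕ Fin m) ℝ →ₗ[ℝ] ℝ :=
    (MvPolynomial.basisMonomials (Fin n ⊕ Fin m) ℝ).constr ℝ
      (fun d => EX (monomial (dL d) 1) * EY (monomial (dR d) 1)) with hEdef
  have E_mono : ∀ d : (Fin n ⊕ Fin m) →₀ ℕ,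
      E (monomial d 1) = EX (monomial (dL d) 1) * EY (monomial (dR d) 1) := by
    intro d
    have hb : (MvPolynomial.basisMonomials (Fin n ⊕ Fin m) ℝ) d = monomial d 1 :=
      congrFun (MvPolynomial.coe_basisMonomials _ _) d
    rw [hEdef, ← hb, Module.Basis.constr_basis]
  -- the key multiplicativity property
  have hmul : ∀ (P : MvPolynomial (Fin n) ℝ) (Q : MvPolynomial (Fin m) ℝ),
      E (rename Sum.inl P * rename Sum.inr Q) = EX P * EY Q := by
    have hterm : ∀ (a : Fin n →₀ ℕ) (b : Fin m →₀ ℕ) (c c' : ℝ),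
        E (rename Sum.inl (monomial a c) * rename Sum.inr (monomial b c'))
          = EX (monomial a c) * EY (monomial b c') := by
      intro a b c c'
      have h1 : ∀ {τ : Type} (s : τ →₀ ℕ) (r : ℝ),
          (monomial s r : MvPolynomial τ ℝ) = r • monomial s 1 := by
        intro τ s r; rw [smul_monomial, smul_eq_mul, mul_one]
      rw [rename_monomial, rename_monomial, monomial_mul,
        h1 (Finsupp.mapDomain Sum.inl a + Finsupp.mapDomain Sum.inr b) (c * c'),
        map_smul, E_mono, dL_add, dR_add, dL_mapDomain_inl, dL_mapDomain_inr,
        dR_mapDomain_inl, dR_mapDomain_inr, add_zero, zero_add,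
        h1 a c, h1 b c', map_smul, map_smul]
      simp only [smul_eq_mul]
      ring
    intro P Q
    conv_lhs => rw [P.as_sum, Q.as_sum, map_sum, map_sum, Finset.sum_mul_sum, map_sum]
    conv_rhs => rw [P.as_sum, Q.as_sum, map_sum, map_sum, Finset.sum_mul_sum]
    simp only [map_sum, hterm]
  have hE1 : E 1 = 1 := by
    have h := hmul 1 1
    simpa [hEX1, hEY1] using h
  refine ⟨E, hE1, ?_, fun P Q _ => hmul P Q⟩
  -- positivity
  intro R hR
  set A : Finset (Fin n →₀ ℕ) := R.support.image dL with hA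
  set q : (Fin n →₀ ℕ) → MvPolynomial (Fin m) ℝ :=
    fun α => ∑ d ∈ R.support.filter (fun d => dL d = α),
      MvPolynomial.coeff d R • monomial (dR d) 1 with hq
  have hsplit : R = ∑ α ∈ A, rename Sum.inl (monomial α 1) * rename Sum.inr (q α) := by
    conv_lhs => rw [R.as_sum]
    rw [← Finset.sum_fiberwise_of_maps_to (g := dL) (t := A)
        (fun d hd => Finset.mem_image_of_mem dL hd)
        (fun d => monomial d (MvPolynomial.coeff d R))]
    refine Finset.sum_congr rfl fun α hα => ?_
    rw [hq]
    simp only [map_sum, map_smul, Finset.mul_sum]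
    refine Finset.sum_congr rfl fun d hd => ?_
    obtain ⟨hd1, hd2⟩ := Finset.mem_filter.mp hd
    rw [mul_smul_comm, rename_monomial, rename_monomial, monomial_mul, one_mul, ← hd2,
      split d, smul_monomial, smul_eq_mul, mul_one]
  have hαdeg : ∀ α ∈ A, (α.sum fun _ e => e) ≤ ℓ / 2 := by
    intro α hα
    obtain ⟨d, hd, rfl⟩ := Finset.mem_image.mp hα
    exact (dL_sum_le d).trans ((MvPolynomial.le_totalDegree hd).trans hR)
  have hqdeg : ∀ α, (q α).totalDegree ≤ ℓ / 2 := by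
    intro α
    refine totalDegree_finsetSum_le fun d hd => ?_
    obtain ⟨hd1, _⟩ := Finset.mem_filter.mp hd
    refine (totalDegree_smul_le _ _).trans ?_
    refine (MvPolynomial.totalDegree_monomial_le _ _).trans ?_
    exact (dR_sum_le d).trans ((MvPolynomial.le_totalDegree hd1).trans hR)
  have hmono_deg : ∀ α ∈ A, (monomial α (1:ℝ) : MvPolynomial (Fin n) ℝ).totalDegree ≤ ℓ / 2 := by
    intro α hα
    exact (MvPolynomial.totalDegree_monomial_le _ _).trans (hαdeg α hα)
  have hsq : E (R ^ 2) = ∑ α ∈ A, ∑ β ∈ A,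
      EX (monomial α 1 * monomial β 1) * EY (q α * q β) := by
    have hR2 : R ^ 2 = ∑ α ∈ A, ∑ β ∈ A,
        rename Sum.inl (monomial α 1 * monomial β 1) * rename Sum.inr (q α * q β) := by
      rw [sq]
      conv_lhs => rw [hsplit]
      rw [Finset.sum_mul_sum]
      refine Finset.sum_congr rfl fun α _ => Finset.sum_congr rfl fun β _ => ?_
      rw [map_mul, map_mul]
      ring
    rw [hR2, map_sum]
    simp only [map_sum, hmul]
  rw [hsq]
  -- reduce to the matrix statement over the subtype ↥A
  have hM : Matrix.PosSemidef (Matrix.of fun i j : A =>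
      EX (monomial (i : Fin n →₀ ℕ) 1 * monomial (j : Fin n →₀ ℕ) 1)) :=
    PEProd.gram_psd EX (ℓ / 2) hEXpos (fun i : A => monomial (i : Fin n →₀ ℕ) 1)
      (fun i => hmono_deg i i.2)
  have hN : Matrix.PosSemidef (Matrix.of fun i j : A => EY (q i * q j)) :=
    PEProd.gram_psd EY (ℓ / 2) hEYpos (fun i : A => q i) (fun i => hqdeg i)
  have hnn := PEProd.sum_mul_nonneg hM hN
  calc (0:ℝ) ≤ ∑ i : A, ∑ j : A,
        (Matrix.of fun i j : A =>
          EX (monomial (i : Fin n →₀ ℕ) 1 * monomial (j : Fin n →₀ ℕ) 1)) i j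
        * (Matrix.of fun i j : A => EY (q i * q j)) i j := hnn
    _ = ∑ α ∈ A, ∑ β ∈ A, EX (monomial α 1 * monomial β 1) * EY (q α * q β) := by
        rw [← Finset.sum_coe_sort A
          (fun α => ∑ β ∈ A, EX (monomial α 1 * monomial β 1) * EY (q α * q β))]
        refine Finset.sum_congr rfl fun i _ => ?_
        rw [← Finset.sum_coe_sort A
          (fun β => EX (monomial (i : Fin n →₀ ℕ) 1 * monomial β 1) * EY (q (i : Fin n →₀ ℕ) * q β))]
        rfl
end

section
/- Let X and Y be jointly distributed random variables taking values in finite sets A and B respectively, with joint probability mass function p on A×B and marginals p_X on A and p_Y on B. Then 2·d_H(p, p_X ⊗ p_Y)² ≤ I(X;Y), i.e., 2·(1 − Σ_{(a,b)} √(p(a,b)·p_X(a)·p_Y(b))) ≤ H(X) + H(Y) − H(X,Y). -/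
/-- **Hellinger distance vs. mutual information** (Lemma 2.2).
For jointly distributed finite random variables `X, Y` with joint pmf `p`,
marginals `pX, pY`, and entropy taken with the natural logarithm:
`2·d_H(p, pX ⊗ pY)² = 2·(1 − Σ √(p(a,b)·pX(a)·pY(b))) ≤ I(X;Y) = H(X) + H(Y) − H(X,Y)`. -/
theorem hellinger_le_mutualInformation
    (A B : Type) [Fintype A] [Fintype B]
    (p : A × B → ℝ) (hp : ∀ x, 0 ≤ p x) (hp1 : ∑ x, p x = 1)
    (pX : A → ℝ) (hpX : ∀ a, pX a = ∑ b, p (a, b))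
    (pY : B → ℝ) (hpY : ∀ b, pY b = ∑ a, p (a, b)) :
    2 * (1 - ∑ x : A × B, Real.sqrt (p x * (pX x.1 * pY x.2)))
      ≤ (-∑ a, pX a * Real.log (pX a)) + (-∑ b, pY b * Real.log (pY b))
        - (-∑ x, p x * Real.log (p x)) := by
  -- rewrite the marginal entropy sums as sums over the product
  have hX : ∑ a, pX a * Real.log (pX a) = ∑ x : A × B, p x * Real.log (pX x.1) := by
    rw [Fintype.sum_prod_type]
    refine Finset.sum_congr rfl fun a _ => ?_
    nth_rewrite 1 [hpX a]
    rw [Finset.sum_mul]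
  have hY : ∑ b, pY b * Real.log (pY b) = ∑ x : A × B, p x * Real.log (pY x.2) := by
    rw [Fintype.sum_prod_type_right]
    refine Finset.sum_congr rfl fun b _ => ?_
    nth_rewrite 1 [hpY b]
    rw [Finset.sum_mul]
  rw [hX, hY]
  have key : ∀ x : A × B,
      2 * p x - 2 * Real.sqrt (p x * (pX x.1 * pY x.2))
        ≤ p x * Real.log (p x) - p x * Real.log (pX x.1) - p x * Real.log (pY x.2) := by
    intro x
    rcases eq_or_lt_of_le (hp x) with h0 | hpos
    · rw [← h0]
      simp
    · -- positivity of the marginals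
      have hXpos : 0 < pX x.1 := by
        rw [hpX x.1]
        refine lt_of_lt_of_le hpos ?_
        have : p (x.1, x.2) ≤ ∑ b, p (x.1, b) :=
          Finset.single_le_sum (f := fun b => p (x.1, b)) (fun b _ => hp _) (Finset.mem_univ x.2)
        simpa using this
      have hYpos : 0 < pY x.2 := by
        rw [hpY x.2]
        refine lt_of_lt_of_le hpos ?_
        have : p (x.1, x.2) ≤ ∑ a, p (a, x.2) :=
          Finset.single_le_sum (f := fun a => p (a, x.2)) (fun a _ => hp _) (Finset.mem_univ x.1)
        simpa using this
      set q : ℝ := pX x.1 * pY x.2 with hqdef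
      have hqpos : 0 < q := mul_pos hXpos hYpos
      set t : ℝ := q / p x with htdef
      have htpos : 0 < t := div_pos hqpos hpos
      -- log t ≤ 2 (√t − 1)
      have hlog : Real.log t ≤ 2 * (Real.sqrt t - 1) := by
        have h1 : Real.log (Real.sqrt t) ≤ Real.sqrt t - 1 :=
          Real.log_le_sub_one_of_pos (Real.sqrt_pos.mpr htpos)
        rw [Real.log_sqrt htpos.le] at h1
        linarith
      have hsqrt : Real.sqrt (p x * q) = p x * Real.sqrt t := by
        rw [htdef, Real.sqrt_div hqpos.le, Real.sqrt_mul (hp x)]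
        have hsp : 0 < Real.sqrt (p x) := Real.sqrt_pos.mpr hpos
        field_simp
        nlinarith [Real.mul_self_sqrt (hp x), Real.sqrt_nonneg q, hsp]
      have hlogq : Real.log q = Real.log (pX x.1) + Real.log (pY x.2) :=
        Real.log_mul (ne_of_gt hXpos) (ne_of_gt hYpos)
      have hlogt : Real.log t = Real.log q - Real.log (p x) :=
        Real.log_div (ne_of_gt hqpos) (ne_of_gt hpos)
      have hmul : p x * Real.log t ≤ p x * (2 * (Real.sqrt t - 1)) :=
        mul_le_mul_of_nonneg_left hlog (hp x)
      rw [hlogt, hlogq] at hmul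
      have : p x * Real.sqrt t = Real.sqrt (p x * q) := hsqrt.symm
      nlinarith [hmul, hsqrt]
  calc 2 * (1 - ∑ x : A × B, Real.sqrt (p x * (pX x.1 * pY x.2)))
      = ∑ x : A × B, (2 * p x - 2 * Real.sqrt (p x * (pX x.1 * pY x.2))) := by
        rw [Finset.sum_sub_distrib, ← Finset.mul_sum, ← Finset.mul_sum, hp1]
        ring
    _ ≤ ∑ x : A × B, (p x * Real.log (p x) - p x * Real.log (pX x.1)
          - p x * Real.log (pY x.2)) := Finset.sum_le_sum fun x _ => key x
    _ = (-∑ x : A × B, p x * Real.log (pX x.1)) + (-∑ x : A × B, p x * Real.log (pY x.2))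
          - (-∑ x, p x * Real.log (p x)) := by
        rw [Finset.sum_sub_distrib, Finset.sum_sub_distrib]
        ring
end

section
/- Let t ≥ 1 and let A₁,…,A_t be jointly distributed random variables taking values in a finite set, whose joint distribution is exchangeable (invariant under every permutation of the t coordinates). Let ε > 0. If the Hellinger distance between the joint distribution of (A₁,…,A_t) and the t-fold product of the common marginal distribution is at least ε, then H(A_t | A₁,…,A_{t−1}) ≤ H(A₁) − 2ε²/t². -/
open Finset

set_option linter.unusedSectionVars false

noncomputable section MP

variable {A : Type} [Fintype A] [DecidableEq A]

def BCv {I : Type} [Fintype I] (u v : I → ℝ) : ℝ := ∑ i, Real.sqrt (u i * v i)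

def mar {T : ℕ} (p : (Fin (T+1) → A) → ℝ) (a : A) : ℝ :=
  ∑ f, if f 0 = a then p f else 0

def pre {T : ℕ} (p : (Fin (T+1) → A) → ℝ) (g : Fin T → A) : ℝ :=
  ∑ a, p (Fin.snoc g a)

def NN {T : ℕ} (p : (Fin (T+1) → A) → ℝ) (f : Fin (T+1) → A) : ℝ :=
  pre p (Fin.init f) * mar p (f (Fin.last T))

def Qf {T : ℕ} (p : (Fin (T+1) → A) → ℝ) (f : Fin (T+1) → A) : ℝ :=
  ∏ i, mar p (f i)

lemma sum_snoc {T : ℕ} (F : (Fin (T+1) → A) → ℝ) :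
    ∑ f, F f = ∑ g : Fin T → A, ∑ a : A, F (Fin.snoc g a) := by
  rw [← (Fin.snocEquiv (fun _ => A)).sum_comp F, Fintype.sum_prod_type]
  rw [Finset.sum_comm]
  rfl

section basic
variable {T : ℕ} (p : (Fin (T+1) → A) → ℝ)

lemma mar_nonneg (hp : ∀ f, 0 ≤ p f) (a : A) : 0 ≤ mar p a :=
  Finset.sum_nonneg fun f _ => by split <;> [exact hp f; exact le_rfl]

lemma mar_sum (hp1 : ∑ f, p f = 1) : ∑ a, mar p a = 1 := by
  simp only [mar]
  rw [Finset.sum_comm]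
  simp [hp1]

lemma pre_nonneg (hp : ∀ f, 0 ≤ p f) (g : Fin T → A) : 0 ≤ pre p g :=
  Finset.sum_nonneg fun a _ => hp _

lemma pre_sum (hp1 : ∑ f, p f = 1) : ∑ g, pre p g = 1 := by
  rw [← hp1, sum_snoc p]; rfl

lemma mar_eq_coord (hexch : ∀ (σ : Equiv.Perm (Fin (T+1))) f, p (f ∘ σ) = p f) (j : Fin (T+1))
    (a : A) : mar p a = ∑ f, if f j = a then p f else 0 := by
  refine Fintype.sum_bijective (· ∘ Equiv.swap 0 j)
    ((Equiv.arrowCongr (Equiv.swap 0 j) (Equiv.refl A)).symm.bijective) _ _ fun f => ?_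
  show _ = ite ((f ∘ (Equiv.swap 0 j)) j = a) (p (f ∘ (Equiv.swap 0 j))) 0
  have h1 : (f ∘ (Equiv.swap 0 j)) j = f 0 := by simp
  rw [h1, hexch]

lemma mar_ge (hp : ∀ f, 0 ≤ p f) (hexch : ∀ (σ : Equiv.Perm (Fin (T+1))) f, p (f ∘ σ) = p f)
    (f : Fin (T+1) → A) (j : Fin (T+1)) : p f ≤ mar p (f j) := by
  rw [mar_eq_coord p hexch j]
  have := Finset.single_le_sum (f := fun h => if h j = f j then p h else 0)
    (fun i _ => by split <;> [exact hp i; exact le_rfl]) (Finset.mem_univ f)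
  simpa using this

lemma pre_ge (hp : ∀ f, 0 ≤ p f) (f : Fin (T+1) → A) : p f ≤ pre p (Fin.init f) := by
  have := Finset.single_le_sum (f := fun a => p (Fin.snoc (Fin.init f) a))
    (fun a _ => hp _) (Finset.mem_univ (f (Fin.last T)))
  simpa [Fin.snoc_init_self, pre] using this

end basic

lemma log_ineq (a b : ℝ) (ha : 0 ≤ a) (hab : a ≠ 0 → 0 < b) :
    2*a - 2*Real.sqrt (a*b) ≤ a * Real.log a - a * Real.log b := by
  rcases eq_or_lt_of_le ha with h|h
  · simp [← h]
  · have hb : 0 < b := hab h.ne'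
    have h2 : Real.log (Real.sqrt (b/a)) ≤ Real.sqrt (b/a) - 1 :=
      Real.log_le_sub_one_of_pos (Real.sqrt_pos.2 (by positivity))
    have h1 : Real.log b - Real.log a = 2 * Real.log (Real.sqrt (b/a)) := by
      rw [Real.log_sqrt (by positivity), Real.log_div (ne_of_gt hb) (ne_of_gt h)]; ring
    have h3 : a * Real.sqrt (b/a) = Real.sqrt (a*b) := by
      rw [show a * Real.sqrt (b/a) = Real.sqrt (a^2) * Real.sqrt (b/a) by
            rw [Real.sqrt_sq h.le],
          ← Real.sqrt_mul (by positivity)]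
      congr 1
      field_simp
    have h4 : 2*a * Real.log (Real.sqrt (b/a)) ≤ 2*a * (Real.sqrt (b/a) - 1) :=
      mul_le_mul_of_nonneg_left h2 (by positivity)
    nlinarith [h4, h1, h3]

lemma bc_fiber {I J : Type} [Fintype I] [Fintype J] [DecidableEq J]
    (u v : I → ℝ) (hu : ∀ i, 0 ≤ u i) (hv : ∀ i, 0 ≤ v i) (φ : I → J)
    (U V : J → ℝ) (hU : ∀ j, U j = ∑ i, if φ i = j then u i else 0)
    (hV : ∀ j, V j = ∑ i, if φ i = j then v i else 0) :
    BCv u v ≤ BCv U V := by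
  rw [BCv, BCv, ← Finset.sum_fiberwise Finset.univ φ (fun i => Real.sqrt (u i * v i))]
  refine Finset.sum_le_sum fun j _ => ?_
  calc ∑ i ∈ Finset.univ.filter (φ · = j), Real.sqrt (u i * v i)
      = ∑ i ∈ Finset.univ.filter (φ · = j), Real.sqrt (u i) * Real.sqrt (v i) := by
        exact Finset.sum_congr rfl fun i _ => Real.sqrt_mul (hu i) _
    _ ≤ Real.sqrt (∑ i ∈ Finset.univ.filter (φ · = j), u i) *
          Real.sqrt (∑ i ∈ Finset.univ.filter (φ · = j), v i) :=
        Real.sum_sqrt_mul_sqrt_le _ hu hv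
    _ = Real.sqrt (U j * V j) := by
        rw [hU, hV, ← Finset.sum_filter, ← Finset.sum_filter,
          Real.sqrt_mul (Finset.sum_nonneg fun i _ => hu i)]

lemma bcv_le_one {I : Type} [Fintype I] (u v : I → ℝ) (hu : ∀ i, 0 ≤ u i)
    (hv : ∀ i, 0 ≤ v i) (hu1 : ∑ i, u i = 1) (hv1 : ∑ i, v i = 1) : BCv u v ≤ 1 := by
  have := Real.sum_sqrt_mul_sqrt_le (Finset.univ (α := I)) hu hv
  rw [hu1, hv1] at this
  simpa [BCv, fun i => Real.sqrt_mul (hu i) (v i)] using this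

def ES {I : Type} [Fintype I] (u : I → ℝ) : EuclideanSpace ℝ I := WithLp.toLp 2 (fun i => Real.sqrt (u i))

lemma dist_sqrt_eq {I : Type} [Fintype I] (u v : I → ℝ) (hu : ∀ i, 0 ≤ u i)
    (hv : ∀ i, 0 ≤ v i) (hu1 : ∑ i, u i = 1) (hv1 : ∑ i, v i = 1) :
    dist (ES u) (ES v) = Real.sqrt (2 - 2 * BCv u v) := by
  rw [EuclideanSpace.dist_eq]
  congr 1
  have hpt : ∀ i : I, dist (ES u i) (ES v i) ^ 2
      = u i + v i - 2 * Real.sqrt (u i * v i) := by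
    intro i
    show dist (Real.sqrt (u i)) (Real.sqrt (v i)) ^ 2 = _
    rw [Real.dist_eq, sq_abs, sub_sq, Real.sq_sqrt (hu i), Real.sq_sqrt (hv i),
      Real.sqrt_mul (hu i)]
    ring
  rw [Finset.sum_congr rfl fun i _ => hpt i]
  rw [Finset.sum_sub_distrib, Finset.sum_add_distrib, hu1, hv1, ← Finset.mul_sum, BCv]
  ring

def extPerm {T : ℕ} (σ : Equiv.Perm (Fin T)) : Equiv.Perm (Fin (T+1)) :=
  finSuccEquivLast.symm.permCongr σ.optionCongr

lemma snoc_comp_extPerm {T : ℕ} (σ : Equiv.Perm (Fin T)) (g : Fin T → A) (a : A) :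
    (Fin.snoc g a : Fin (T+1) → A) ∘ (extPerm σ) = Fin.snoc (g ∘ σ) a := by
  funext i
  induction i using Fin.lastCases with
  | last =>
    simp [extPerm, Equiv.permCongr_apply, finSuccEquivLast_last]
  | cast j =>
    simp [extPerm, Equiv.permCongr_apply, finSuccEquivLast_castSucc]

section step
variable {T : ℕ} (p : (Fin (T+1) → A) → ℝ)

lemma pre_exch (hexch : ∀ (σ : Equiv.Perm (Fin (T+1))) f, p (f ∘ σ) = p f)
    (σ : Equiv.Perm (Fin T)) (g : Fin T → A) : pre p (g ∘ σ) = pre p g := by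
  unfold pre
  refine Finset.sum_congr rfl fun a _ => ?_
  rw [← snoc_comp_extPerm σ g a, hexch]

lemma sum_prod_pow (w : A → ℝ) : ∀ (k : ℕ), ∑ g : Fin k → A, ∏ i, w (g i) = (∑ a, w a)^k := by
  intro k
  induction k with
  | zero =>
    haveI : Unique (Fin 0 → A) := ⟨⟨fun i => i.elim0⟩, fun f => funext fun i => i.elim0⟩
    simp
  | succ k ih =>
    rw [sum_snoc (fun g => ∏ i, w (g i))]
    have : ∀ (g : Fin k → A) (a : A), ∏ i, w ((Fin.snoc g a : Fin (k+1) → A) i) = (∏ i, w (g i)) * w a := by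
      intro g a
      rw [Fin.prod_univ_castSucc]
      simp
    simp_rw [this]
    rw [← Finset.sum_mul_sum, ih, pow_succ]

lemma qf_nonneg (hp : ∀ f, 0 ≤ p f) (f : Fin (T+1) → A) : 0 ≤ Qf p f :=
  Finset.prod_nonneg fun i _ => mar_nonneg p hp _

lemma qf_sum (hp1 : ∑ f, p f = 1) : ∑ f, Qf p f = 1 := by
  rw [show ∑ f, Qf p f = ∑ f : Fin (T+1) → A, ∏ i, mar p (f i) from rfl,
    sum_prod_pow (mar p) (T+1), mar_sum p hp1, one_pow]

lemma nn_nonneg (hp : ∀ f, 0 ≤ p f) (f : Fin (T+1) → A) : 0 ≤ NN p f :=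
  mul_nonneg (pre_nonneg p hp _) (mar_nonneg p hp _)

lemma nn_sum (hp : ∀ f, 0 ≤ p f) (hp1 : ∑ f, p f = 1) : ∑ f, NN p f = 1 := by
  rw [sum_snoc (NN p)]
  have : ∀ (g : Fin T → A) (a : A), NN p (Fin.snoc g a) = pre p g * mar p a := by
    intro g a
    rw [NN, Fin.init_snoc, Fin.snoc_last]
  simp_rw [this]
  rw [← Finset.sum_mul_sum, pre_sum p hp1, mar_sum p hp1, one_mul]

end step

section step2
variable {T : ℕ} (p : (Fin (T+2) → A) → ℝ)

lemma snoc_zero' (g : Fin (T+1) → A) (b : A) : (Fin.snoc g b : Fin (T+2) → A) 0 = g 0 := by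
  rw [show (0 : Fin (T+2)) = Fin.castSucc 0 from (Fin.castSucc_zero).symm, Fin.snoc_castSucc]

lemma mar_pre (a : A) : mar (pre p) a = mar p a := by
  rw [mar, mar, sum_snoc (fun f => if f 0 = a then p f else 0)]
  refine Finset.sum_congr rfl fun g _ => ?_
  rw [pre]
  rw [show (∑ b, if ((Fin.snoc g b : Fin (T+2) → A)) 0 = a then p (Fin.snoc g b) else 0)
      = ∑ b, if g 0 = a then p (Fin.snoc g b) else 0 from
    Finset.sum_congr rfl fun b _ => by rw [snoc_zero' g b]]
  split <;> simp

lemma bcv_nn_qf (hp : ∀ f, 0 ≤ p f) (hp1 : ∑ f, p f = 1) : BCv (NN p) (Qf p) = BCv (pre p) (Qf (pre p)) := by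
  rw [BCv, BCv, sum_snoc (fun f => Real.sqrt (NN p f * Qf p f))]
  have key : ∀ (g : Fin (T+1) → A) (b : A),
      Real.sqrt (NN p (Fin.snoc g b) * Qf p (Fin.snoc g b))
        = Real.sqrt (pre p g * Qf (pre p) g) * mar p b := by
    intro g b
    have h1 : NN p (Fin.snoc g b) = pre p g * mar p b := by
      rw [NN, Fin.init_snoc, Fin.snoc_last]
    have h2 : Qf p (Fin.snoc g b) = Qf (pre p) g * mar p b := by
      rw [Qf, Fin.prod_univ_castSucc, Fin.snoc_last]
      congr 1
      rw [Qf]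
      exact Finset.prod_congr rfl fun i _ => by rw [Fin.snoc_castSucc, mar_pre]
    rw [h1, h2, show pre p g * mar p b * (Qf (pre p) g * mar p b)
        = (pre p g * Qf (pre p) g) * (mar p b)^2 by ring,
      Real.sqrt_mul' _ (sq_nonneg _), Real.sqrt_sq (mar_nonneg p hp b)]
  simp_rw [key]
  rw [← Finset.sum_mul_sum, mar_sum p hp1, mul_one]

end step2

def delE {T : ℕ} : (Fin (T+2) → A) ≃ ((Fin (T+1) → A) × A) where
  toFun f := (Fin.snoc (Fin.init (Fin.init f)) (f (Fin.last (T+1))),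
      f (Fin.castSucc (Fin.last T)))
  invFun x := Fin.snoc (Fin.snoc (Fin.init x.1) x.2) (x.1 (Fin.last T))
  left_inv f := by
    funext i
    induction i using Fin.lastCases with
    | last => simp
    | cast j =>
      induction j using Fin.lastCases with
      | last => simp
      | cast k => simp [Fin.init]
  right_inv x := by
    obtain ⟨j, b⟩ := x
    refine Prod.ext ?_ ?_
    · simp only [Fin.snoc_last, Fin.init_snoc, Fin.snoc_init_self]
    · simp only [Fin.snoc_castSucc, Fin.snoc_last]

lemma delE_symm_eq {T : ℕ} (j : Fin (T+1) → A) (b : A) :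
    (delE.symm (j, b) : Fin (T+2) → A)
      = (Fin.snoc j b : Fin (T+2) → A)
          ∘ (Equiv.swap (Fin.castSucc (Fin.last T)) (Fin.last (T+1))) := by
  funext i
  induction i using Fin.lastCases with
  | last =>
    show (Fin.snoc _ _ : Fin (T+2) → A) _ = _
    rw [Fin.snoc_last, Function.comp_apply, Equiv.swap_apply_right, Fin.snoc_castSucc]
  | cast k =>
    induction k using Fin.lastCases with
    | last =>
      show (Fin.snoc _ _ : Fin (T+2) → A) _ = _
      rw [Fin.snoc_castSucc, Fin.snoc_last, Function.comp_apply, Equiv.swap_apply_left,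
        Fin.snoc_last]
    | cast m =>
      show (Fin.snoc _ _ : Fin (T+2) → A) _ = _
      rw [Fin.snoc_castSucc, Fin.snoc_castSucc, Function.comp_apply,
        Equiv.swap_apply_of_ne_of_ne (by
          intro h
          exact (Fin.castSucc_lt_last m).ne (Fin.castSucc_injective _ h))
        (Fin.castSucc_lt_last _).ne,
        Fin.snoc_castSucc, Fin.init]

section step3
variable {T : ℕ} (p : (Fin (T+2) → A) → ℝ)

lemma fiber_sum (hexch : ∀ (σ : Equiv.Perm (Fin (T+2))) f, p (f ∘ σ) = p f)
    (u : (Fin (T+2) → A) → ℝ) (j : Fin (T+1) → A) :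
    (∑ f, if (delE f).1 = j then u f else 0)
      = ∑ b, u (delE.symm (j, b)) := by
  rw [← (delE (A:=A) (T:=T)).symm.sum_comp (fun f => if (delE f).1 = j then u f else 0)]
  rw [Fintype.sum_prod_type]
  simp only [Equiv.apply_symm_apply]
  rw [show (∑ j' : Fin (T+1) → A, ∑ b : A,
        if j' = j then u (delE.symm (j', b)) else 0)
      = ∑ j' : Fin (T+1) → A,
          if j' = j then (∑ b : A, u (delE.symm (j', b))) else 0 from
    Finset.sum_congr rfl fun j' _ => by split <;> simp]
  rw [Finset.sum_ite_eq' Finset.univ j (fun j' => ∑ b : A, u (delE.symm (j', b)))]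
  simp

lemma fiber_p (hexch : ∀ (σ : Equiv.Perm (Fin (T+2))) f, p (f ∘ σ) = p f)
    (j : Fin (T+1) → A) :
    (∑ f, if (delE f).1 = j then p f else 0) = pre p j := by
  rw [fiber_sum p hexch p j, pre]
  refine Finset.sum_congr rfl fun b _ => ?_
  rw [delE_symm_eq j b, hexch]

lemma fiber_NN (hexch : ∀ (σ : Equiv.Perm (Fin (T+2))) f, p (f ∘ σ) = p f)
    (j : Fin (T+1) → A) :
    (∑ f, if (delE f).1 = j then NN p f else 0) = NN (pre p) j := by
  rw [fiber_sum p hexch (NN p) j]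
  have hs : ∀ b : A, (delE.symm (j, b) : Fin (T+2) → A)
      = Fin.snoc (Fin.snoc (Fin.init j) b) (j (Fin.last T)) := fun b => rfl
  have : ∀ b : A, NN p (delE.symm (j, b))
      = pre p (Fin.snoc (Fin.init j) b) * mar p (j (Fin.last T)) := by
    intro b
    rw [hs b, NN, Fin.init_snoc, Fin.snoc_last]
  simp_rw [this]
  rw [← Finset.sum_mul, NN, mar_pre]
  rfl

end step3

lemma key (T : ℕ) : ∀ (p : (Fin (T+1) → A) → ℝ), (∀ f, 0 ≤ p f) → (∑ f, p f = 1) →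
    (∀ (σ : Equiv.Perm (Fin (T+1))) f, p (f ∘ σ) = p f) →
    Real.sqrt (2 - 2 * BCv p (Qf p))
      ≤ ((T : ℝ)+1) * Real.sqrt (2 - 2 * BCv p (NN p)) := by
  induction T with
  | zero =>
    intro p hp hp1 hexch
    have hqn : Qf p = NN p := by
      funext f
      rw [Qf, NN, Fin.prod_univ_one]
      have h1 : pre p (Fin.init f) = 1 := by
        rw [pre]
        have h2 : ∀ a : A, (Fin.snoc (Fin.init f) a : Fin 1 → A) = fun _ => a := by
          intro a
          funext i
          rw [show i = Fin.last 0 from Fin.ext (by omega), Fin.snoc_last]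
        simp_rw [h2]
        have h3 := (Equiv.funUnique (Fin 1) A).symm.sum_comp p
        rw [hp1] at h3
        rw [← h3]
        rfl
      rw [h1, one_mul]
      rfl
    rw [hqn]
    norm_num
  | succ T ih =>
    intro p hp hp1 hexch
    have hr0 : ∀ g, 0 ≤ pre p g := pre_nonneg p hp
    have hr1 : ∑ g, pre p g = 1 := pre_sum p hp1
    have hrex : ∀ (σ : Equiv.Perm (Fin (T+1))) g, pre p (g ∘ σ) = pre p g :=
      fun σ g => pre_exch p hexch σ g
    have hQ0 : ∀ f, 0 ≤ Qf p f := qf_nonneg p hp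
    have hQ1 : ∑ f, Qf p f = 1 := qf_sum p hp1
    have hN0 : ∀ f, 0 ≤ NN p f := nn_nonneg p hp
    have hN1 : ∑ f, NN p f = 1 := nn_sum p hp hp1
    have hQr0 : ∀ g, 0 ≤ Qf (pre p) g := qf_nonneg _ hr0
    have hQr1 : ∑ g, Qf (pre p) g = 1 := qf_sum _ hr1
    have hNr0 : ∀ g, 0 ≤ NN (pre p) g := nn_nonneg _ hr0
    have hNr1 : ∑ g, NN (pre p) g = 1 := nn_sum _ hr0 hr1
    have htri : dist (ES p) (ES (Qf p))
        ≤ dist (ES p) (ES (NN p)) + dist (ES (NN p)) (ES (Qf p)) := dist_triangle _ _ _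
    rw [dist_sqrt_eq p (Qf p) hp hQ0 hp1 hQ1, dist_sqrt_eq p (NN p) hp hN0 hp1 hN1,
      dist_sqrt_eq (NN p) (Qf p) hN0 hQ0 hN1 hQ1] at htri
    have hmid : BCv (NN p) (Qf p) = BCv (pre p) (Qf (pre p)) := bcv_nn_qf p hp hp1
    have hIH := ih (pre p) hr0 hr1 hrex
    have hmono : BCv p (NN p) ≤ BCv (pre p) (NN (pre p)) :=
      bc_fiber p (NN p) hp hN0 (fun f => (delE f).1) (pre p) (NN (pre p))
        (fun j => (fiber_p p hexch j).symm) (fun j => (fiber_NN p hexch j).symm)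
    have hmono' : Real.sqrt (2 - 2 * BCv (pre p) (NN (pre p)))
        ≤ Real.sqrt (2 - 2 * BCv p (NN p)) := by
      apply Real.sqrt_le_sqrt
      linarith
    have hT1 : (0:ℝ) ≤ (T : ℝ) + 1 := by positivity
    calc Real.sqrt (2 - 2 * BCv p (Qf p))
        ≤ Real.sqrt (2 - 2 * BCv p (NN p))
            + Real.sqrt (2 - 2 * BCv (NN p) (Qf p)) := htri
      _ = Real.sqrt (2 - 2 * BCv p (NN p))
            + Real.sqrt (2 - 2 * BCv (pre p) (Qf (pre p))) := by rw [hmid]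
      _ ≤ Real.sqrt (2 - 2 * BCv p (NN p))
            + ((T:ℝ)+1) * Real.sqrt (2 - 2 * BCv (pre p) (NN (pre p))) := by linarith
      _ ≤ Real.sqrt (2 - 2 * BCv p (NN p))
            + ((T:ℝ)+1) * Real.sqrt (2 - 2 * BCv p (NN p)) := by nlinarith [hmono', hT1]
      _ = (((T+1 : ℕ) : ℝ)+1) * Real.sqrt (2 - 2 * BCv p (NN p)) := by
          push_cast
          ring

end MP

/-- **Making progress** (Lemma 3.3).
Let `A₁,…,A_t` (with `t = T+1 ≥ 1`) be exchangeable random variables on a finite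
set `A`, with joint pmf `p`, common marginal `q`, and first-`(t−1)`-coordinates
marginal `r`.  If the Hellinger distance between the joint distribution and the
`t`-fold product of the marginal is at least `ε`, then
`H(A_t | A₁ ⋯ A_{t−1}) = H(p) − H(r) ≤ H(q) − 2ε²/t²`
(entropies with the natural logarithm). -/
theorem making_progress
    (T : ℕ) (A : Type) [Fintype A] [DecidableEq A] [Nonempty A]
    (p : (Fin (T + 1) → A) → ℝ) (hp : ∀ f, 0 ≤ p f) (hp1 : ∑ f, p f = 1)
    (hexch : ∀ (σ : Equiv.Perm (Fin (T + 1))) (f : Fin (T + 1) → A), p (f ∘ σ) = p f)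
    (q : A → ℝ) (hq : ∀ a, q a = ∑ f : Fin (T + 1) → A, if f 0 = a then p f else 0)
    (r : (Fin T → A) → ℝ) (hr : ∀ g, r g = ∑ a, p (Fin.snoc g a))
    (ε : ℝ) (hε : 0 < ε)
    (hhell : ε ≤ Real.sqrt (1 - ∑ f : Fin (T + 1) → A, Real.sqrt (p f * ∏ i, q (f i)))) :
    (-∑ f, p f * Real.log (p f)) - (-∑ g, r g * Real.log (r g))
      ≤ (-∑ a, q a * Real.log (q a)) - 2 * ε ^ 2 / ((T : ℝ) + 1) ^ 2 := by
  have hq' : q = mar p := funext fun a => (hq a).trans rfl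
  have hr' : r = pre p := funext fun g => (hr g).trans rfl
  subst hq' hr'
  have hN0 : ∀ f, 0 ≤ NN p f := nn_nonneg p hp
  have hN1 : ∑ f, NN p f = 1 := nn_sum p hp hp1
  -- Hellinger hypothesis in BCv form
  have hhell' : ε ≤ Real.sqrt (1 - BCv p (Qf p)) := hhell
  have hε2 : ε ^ 2 ≤ 1 - BCv p (Qf p) := (Real.le_sqrt' hε).1 hhell'
  have hkey := key T p hp hp1 hexch
  have hBCN : BCv p (NN p) ≤ 1 := bcv_le_one p (NN p) hp hN0 hp1 hN1
  have h2N : 0 ≤ 2 - 2 * BCv p (NN p) := by linarith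
  have h2Q : 0 ≤ 2 - 2 * BCv p (Qf p) := by nlinarith [sq_nonneg ε]
  have hT1 : (0:ℝ) ≤ (T : ℝ) + 1 := by positivity
  have hsq : 2 - 2 * BCv p (Qf p)
      ≤ ((T:ℝ)+1)^2 * (2 - 2 * BCv p (NN p)) := by
    nlinarith [hkey, Real.sq_sqrt h2Q, Real.sq_sqrt h2N,
      Real.sqrt_nonneg (2 - 2 * BCv p (Qf p)),
      Real.sqrt_nonneg (2 - 2 * BCv p (NN p)), hT1,
      mul_nonneg hT1 (Real.sqrt_nonneg (2 - 2 * BCv p (NN p)))]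
  have hfinal1 : 2 * ε ^ 2 / ((T:ℝ)+1)^2 ≤ 2 - 2 * BCv p (NN p) := by
    rw [div_le_iff₀ (by positivity)]
    nlinarith
  have hNpos : ∀ f, p f ≠ 0 → 0 < NN p f := by
    intro f hf
    have h1 : 0 < p f := (hp f).lt_of_ne (Ne.symm hf)
    exact mul_pos (lt_of_lt_of_le h1 (pre_ge p hp f))
      (lt_of_lt_of_le h1 (mar_ge p hp hexch f (Fin.last T)))
  have hKL : 2 - 2 * BCv p (NN p)
      ≤ (∑ f, p f * Real.log (p f)) - (∑ f, p f * Real.log (NN p f)) := by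
    calc 2 - 2 * BCv p (NN p)
        = ∑ f, (2 * (p f) - 2 * Real.sqrt (p f * NN p f)) := by
          rw [Finset.sum_sub_distrib, ← Finset.mul_sum, ← Finset.mul_sum, hp1, BCv]
          ring
      _ ≤ ∑ f, (p f * Real.log (p f) - p f * Real.log (NN p f)) :=
          Finset.sum_le_sum fun f _ => log_ineq _ _ (hp f) (hNpos f)
      _ = _ := by rw [Finset.sum_sub_distrib]
  have hsplit : ∑ f, p f * Real.log (NN p f)
      = (∑ g, pre p g * Real.log (pre p g))
        + (∑ a, mar p a * Real.log (mar p a)) := by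
    have hpt : ∀ f, p f * Real.log (NN p f)
        = p f * Real.log (pre p (Fin.init f))
          + p f * Real.log (mar p (f (Fin.last T))) := by
      intro f
      rcases eq_or_ne (p f) 0 with h|h
      · simp [h]
      · have h1 : 0 < p f := (hp f).lt_of_ne (Ne.symm h)
        have h2 : 0 < pre p (Fin.init f) := lt_of_lt_of_le h1 (pre_ge p hp f)
        have h3 : 0 < mar p (f (Fin.last T)) :=
          lt_of_lt_of_le h1 (mar_ge p hp hexch f _)
        rw [NN, Real.log_mul h2.ne' h3.ne', mul_add]
    simp_rw [hpt]
    rw [Finset.sum_add_distrib]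
    congr 1
    · rw [sum_snoc (fun f => p f * Real.log (pre p (Fin.init f)))]
      refine Finset.sum_congr rfl fun g _ => ?_
      have hini : ∀ a : A, Fin.init (Fin.snoc g a : Fin (T+1) → A) = g :=
        fun a => by rw [Fin.init_snoc]
      simp_rw [hini]
      rw [← Finset.sum_mul, pre]
    · have hptt : ∀ f : Fin (T+1) → A, p f * Real.log (mar p (f (Fin.last T)))
          = ∑ a, if f (Fin.last T) = a then p f * Real.log (mar p a) else 0 := by
        intro f
        rw [Finset.sum_ite_eq]
        simp
      simp_rw [hptt]
      rw [Finset.sum_comm]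
      refine Finset.sum_congr rfl fun a _ => ?_
      rw [show (∑ f, if f (Fin.last T) = a then p f * Real.log (mar p a) else 0)
          = (∑ f, if f (Fin.last T) = a then p f else 0) * Real.log (mar p a) from by
        rw [Finset.sum_mul]
        exact Finset.sum_congr rfl fun f _ => by split <;> simp]
      rw [← mar_eq_coord p hexch (Fin.last T) a]
  linarith
end

section
/- Let n, t ≥ 1, let M̂ : [n]^{2t} → ℝ be nonnegative and symmetric under swapping its first t and last t indices (M̂(I,J) = M̂(J,I) for I,J ∈ [n]^t), let M(x) = Σ_{i₁,…,i_{2t}} M̂(i₁,…,i_{2t})·x_{i₁}⋯x_{i_{2t}}, and let Q be the n^t × n^t symmetric matrix with entries Q_{I,J} = M̂(I,J), with operator (spectral) norm ‖Q‖. Let 𝒳 be a finitely supported probability distribution on the unit sphere of ℝⁿ, let 𝒜 be the probability distribution on [n]^t given by 𝒜(i₁,…,i_t) = E_{x∼𝒳}[x_{i₁}²⋯x_{i_t}²], and let a be the distribution on [n] given by a(i) = E_{x∼𝒳}[x_i²] (each coordinate marginal of 𝒜 equals a). If the Hellinger distance between 𝒜 and the t-fold product a^{⊗t} is at most ε, then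 the unit vector x* ∈ ℝⁿ defined by x*_i = (E_{x∼𝒳}[x_i²])^{1/2} satisfies M(x*) ≥ E_{x∼𝒳}[M(x)] − 4ε‖Q‖. -/
open Finset RealInnerProductSpace

private lemma sqrt_prod'' {ι : Type*} (s : Finset ι) (f : ι → ℝ) (h : ∀ i ∈ s, 0 ≤ f i) :
    Real.sqrt (∏ i ∈ s, f i) = ∏ i ∈ s, Real.sqrt (f i) := by
  induction s using Finset.cons_induction with
  | empty => simp
  | cons a s ha ih =>
    rw [Finset.prod_cons, Finset.prod_cons,
      Real.sqrt_mul (h a (Finset.mem_cons_self a s)),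
      ih (fun i hi => h i (Finset.mem_cons.2 (Or.inr hi)))]


/-- **Direct rounding** (Lemma 3.2).
Let `M̂` be nonnegative on `[n]^t × [n]^t` with `M̂(I,J) = M̂(J,I)`, defining the
degree-`2t` polynomial `M(x) = Σ_{I,J} M̂(I,J)·Π x_{Iᵢ}·Π x_{Jᵢ}`, and let `Q` be the
corresponding `n^t × n^t` symmetric matrix with operator norm `‖Q‖`.  Let `𝒳` be a
finitely supported distribution (weights `w` on a finite sample space `Ω`, vectors
`x ω` on the unit sphere of `ℝⁿ`).  If the Hellinger distance between the distribution
`𝒜(I) = E[Π x_{Iᵢ}²]` on `[n]^t` and the `t`-fold product of `a(i) = E[xᵢ²]` is at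
most `ε`, then the unit vector `x*` with `x*ᵢ = √(E[xᵢ²])` satisfies
`M(x*) ≥ E[M(x)] − 4ε‖Q‖`. -/
theorem direct_rounding
    (n t : ℕ) (hn : 1 ≤ n) (ht : 1 ≤ t)
    (Mhat : ((Fin t → Fin n) × (Fin t → Fin n)) → ℝ)
    (hMnonneg : ∀ p, 0 ≤ Mhat p)
    (hMsymm : ∀ I J : Fin t → Fin n, Mhat (I, J) = Mhat (J, I))
    (Q : Matrix (Fin t → Fin n) (Fin t → Fin n) ℝ)
    (hQ : ∀ I J, Q I J = Mhat (I, J))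
    (Ω : Type) [Fintype Ω]
    (w : Ω → ℝ) (hw : ∀ ω, 0 ≤ w ω) (hw1 : ∑ ω, w ω = 1)
    (x : Ω → Fin n → ℝ) (hx : ∀ ω, ∑ i, x ω i ^ 2 = 1)
    (ε : ℝ)
    (hhell :
      Real.sqrt (1 - ∑ I : Fin t → Fin n,
        Real.sqrt ((∑ ω, w ω * ∏ i, x ω (I i) ^ 2) *
          ∏ i, (∑ ω, w ω * x ω (I i) ^ 2))) ≤ ε) :
    ∑ p : (Fin t → Fin n) × (Fin t → Fin n),
        Mhat p * ((∏ i, Real.sqrt (∑ ω, w ω * x ω (p.1 i) ^ 2)) *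
          ∏ i, Real.sqrt (∑ ω, w ω * x ω (p.2 i) ^ 2))
      ≥ (∑ ω, w ω * ∑ p : (Fin t → Fin n) × (Fin t → Fin n),
            Mhat p * ((∏ i, x ω (p.1 i)) * ∏ i, x ω (p.2 i)))
        - 4 * ε * ‖Matrix.toEuclideanCLM (𝕜 := ℝ) Q‖ := by
  classical
  have hε : 0 ≤ ε := le_trans (Real.sqrt_nonneg _) hhell
  let a : Fin n → ℝ := fun i => ∑ ω, w ω * x ω i ^ 2
  let A : (Fin t → Fin n) → ℝ := fun I => ∑ ω, w ω * ∏ i, x ω (I i) ^ 2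
  let B : (Fin t → Fin n) → ℝ := fun I => ∏ i, a (I i)
  let u : Ω → (Fin t → Fin n) → ℝ := fun ω I => ∏ i, x ω (I i)
  let sf : (Fin t → Fin n) → ℝ := fun I => Real.sqrt (A I)
  let vf : (Fin t → Fin n) → ℝ := fun I => ∏ i, Real.sqrt (a (I i))
  let T := Matrix.toEuclideanCLM (𝕜 := ℝ) Q
  let s : EuclideanSpace ℝ (Fin t → Fin n) := (WithLp.equiv 2 _).symm sf
  let v : EuclideanSpace ℝ (Fin t → Fin n) := (WithLp.equiv 2 _).symm vf
  have ha0 : ∀ i, 0 ≤ a i := fun i =>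
    Finset.sum_nonneg fun ω _ => mul_nonneg (hw ω) (sq_nonneg _)
  have hA0 : ∀ I, 0 ≤ A I := fun I =>
    Finset.sum_nonneg fun ω _ =>
      mul_nonneg (hw ω) (Finset.prod_nonneg fun i _ => sq_nonneg _)
  have hB0 : ∀ I, 0 ≤ B I := fun I => Finset.prod_nonneg fun i _ => ha0 _
  have hbil : ∀ f g : (Fin t → Fin n) → ℝ,
      ⟪(WithLp.equiv 2 ((Fin t → Fin n) → ℝ)).symm f,
        T ((WithLp.equiv 2 ((Fin t → Fin n) → ℝ)).symm g)⟫
        = ∑ I, ∑ J, f I * (Mhat (I, J) * g J) := by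
    intro f g
    show ⟪_, Matrix.toEuclideanCLM (𝕜 := ℝ) Q _⟫ = _
    rw [WithLp.equiv_symm_apply, Matrix.toEuclideanCLM_toLp]
    simp only [PiLp.inner_apply, RCLike.inner_apply, starRingEnd_apply, star_trivial,
      PiLp.toLp_apply, Matrix.toLin'_apply, Matrix.mulVec, dotProduct, hQ]
    exact Finset.sum_congr rfl fun I _ => by rw [mul_comm, Finset.mul_sum]
  have hnormeq : ∀ f : (Fin t → Fin n) → ℝ,
      ‖(WithLp.equiv 2 ((Fin t → Fin n) → ℝ)).symm f‖ = Real.sqrt (∑ I, f I ^ 2) := by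
    intro f
    rw [EuclideanSpace.norm_eq]
    congr 1
    exact Finset.sum_congr rfl fun I _ => by
      rw [WithLp.equiv_symm_apply, PiLp.toLp_apply, Real.norm_eq_abs, sq_abs]
  have hsum1 : ∀ ω, ∑ I : Fin t → Fin n, ∏ i, x ω (I i) ^ 2 = 1 := by
    intro ω
    rw [← Fintype.piFinset_univ, ← Finset.prod_univ_sum
      (fun _ : Fin t => (Finset.univ : Finset (Fin n))) (fun _ j => x ω j ^ 2)]
    simp [hx ω]
  have hsumA : ∑ I, A I = 1 := by
    calc ∑ I, A I = ∑ ω, ∑ I : Fin t → Fin n, w ω * ∏ i, x ω (I i) ^ 2 :=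
          Finset.sum_comm
      _ = ∑ ω, w ω := Finset.sum_congr rfl fun ω _ => by
          rw [← Finset.mul_sum, hsum1 ω, mul_one]
      _ = 1 := hw1
  have hsuma : ∑ i, a i = 1 := by
    calc ∑ i, a i = ∑ ω, ∑ i, w ω * x ω i ^ 2 := Finset.sum_comm
      _ = ∑ ω, w ω := Finset.sum_congr rfl fun ω _ => by
          rw [← Finset.mul_sum, hx ω, mul_one]
      _ = 1 := hw1
  have hsumB : ∑ I, B I = 1 := by
    show ∑ I : Fin t → Fin n, ∏ i, a (I i) = 1
    rw [← Fintype.piFinset_univ, ← Finset.prod_univ_sum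
      (fun _ : Fin t => (Finset.univ : Finset (Fin n))) (fun _ j => a j)]
    simp [hsuma]
  have hns : ‖s‖ = 1 := by
    rw [hnormeq sf, Finset.sum_congr rfl fun I _ => Real.sq_sqrt (hA0 I), hsumA,
      Real.sqrt_one]
  have hvf_sqrt : ∀ I, vf I = Real.sqrt (B I) := fun I =>
    (sqrt_prod'' Finset.univ _ fun i _ => ha0 _).symm
  have hnv : ‖v‖ = 1 := by
    rw [hnormeq vf, Finset.sum_congr rfl fun I _ => by
      rw [hvf_sqrt I, Real.sq_sqrt (hB0 I)], hsumB, Real.sqrt_one]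
  have hsv : ⟪s, v⟫ = ∑ I, Real.sqrt (A I * B I) := by
    simp only [PiLp.inner_apply, RCLike.inner_apply, starRingEnd_apply, star_trivial]
    exact Finset.sum_congr rfl fun I _ => by
      rw [show s I = sf I from rfl, show v I = vf I from rfl,
        Real.sqrt_mul (hA0 I), hvf_sqrt I, mul_comm]
  have hsv1 : ⟪s, v⟫ ≤ 1 := by
    have := real_inner_le_norm s v
    rwa [hns, hnv, mul_one] at this
  have hhell' : 1 - ⟪s, v⟫ ≤ ε ^ 2 := by
    have h1 : 0 ≤ 1 - ⟪s, v⟫ := by linarith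
    have h2 : Real.sqrt (1 - ⟪s, v⟫) ≤ ε := by rw [hsv]; exact hhell
    nlinarith [Real.sq_sqrt h1, Real.sqrt_nonneg (1 - ⟪s, v⟫)]
  have hdist : ‖s - v‖ ≤ Real.sqrt 2 * ε := by
    have h2 : ‖s - v‖ ^ 2 ≤ 2 * ε ^ 2 := by
      rw [norm_sub_sq_real, hns, hnv]; nlinarith [hhell']
    calc ‖s - v‖ = Real.sqrt (‖s - v‖ ^ 2) := (Real.sqrt_sq (norm_nonneg _)).symm
      _ ≤ Real.sqrt (2 * ε ^ 2) := Real.sqrt_le_sqrt h2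
      _ = Real.sqrt 2 * ε := by
          rw [Real.sqrt_mul (by norm_num : (0:ℝ) ≤ 2), Real.sqrt_sq hε]
  have hCS : ∀ I J, ∑ ω, w ω * (u ω I * u ω J) ≤ sf I * sf J := by
    intro I J
    have key : (∑ ω, w ω * (u ω I * u ω J)) ^ 2 ≤ A I * A J := by
      have hcs := Finset.sum_mul_sq_le_sq_mul_sq Finset.univ
        (fun ω => Real.sqrt (w ω) * u ω I) (fun ω => Real.sqrt (w ω) * u ω J)
      have e2 : ∀ (K : Fin t → Fin n) ω, (Real.sqrt (w ω) * u ω K) ^ 2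
          = w ω * ∏ i, x ω (K i) ^ 2 := by
        intro K ω
        rw [mul_pow, Real.sq_sqrt (hw ω), show u ω K = ∏ i, x ω (K i) from rfl,
          ← Finset.prod_pow]
      calc (∑ ω, w ω * (u ω I * u ω J)) ^ 2
          = (∑ ω, (Real.sqrt (w ω) * u ω I) * (Real.sqrt (w ω) * u ω J)) ^ 2 := by
            congr 1
            exact Finset.sum_congr rfl fun ω _ => by
              rw [show (Real.sqrt (w ω) * u ω I) * (Real.sqrt (w ω) * u ω J)
                  = (Real.sqrt (w ω) * Real.sqrt (w ω)) * (u ω I * u ω J) by ring,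
                Real.mul_self_sqrt (hw ω)]
        _ ≤ (∑ ω, (Real.sqrt (w ω) * u ω I) ^ 2) * ∑ ω, (Real.sqrt (w ω) * u ω J) ^ 2 := hcs
        _ = A I * A J := by
            rw [Finset.sum_congr rfl fun ω _ => e2 I ω,
              Finset.sum_congr rfl fun ω _ => e2 J ω]
    calc ∑ ω, w ω * (u ω I * u ω J) ≤ |∑ ω, w ω * (u ω I * u ω J)| := le_abs_self _
      _ = Real.sqrt ((∑ ω, w ω * (u ω I * u ω J)) ^ 2) := (Real.sqrt_sq_eq_abs _).symm
      _ ≤ Real.sqrt (A I * A J) := Real.sqrt_le_sqrt key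
      _ = sf I * sf J := Real.sqrt_mul (hA0 I) _
  have hEM : (∑ ω, w ω * ∑ p : (Fin t → Fin n) × (Fin t → Fin n),
        Mhat p * (u ω p.1 * u ω p.2)) ≤ ⟪s, T s⟫ := by
    rw [hbil sf sf]
    calc ∑ ω, w ω * ∑ p : (Fin t → Fin n) × (Fin t → Fin n), Mhat p * (u ω p.1 * u ω p.2)
        = ∑ ω, ∑ p : (Fin t → Fin n) × (Fin t → Fin n),
            Mhat p * (w ω * (u ω p.1 * u ω p.2)) := by
          refine Finset.sum_congr rfl fun ω _ => ?_
          rw [Finset.mul_sum]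
          exact Finset.sum_congr rfl fun p _ => by ring
      _ = ∑ p : (Fin t → Fin n) × (Fin t → Fin n), ∑ ω,
            Mhat p * (w ω * (u ω p.1 * u ω p.2)) := Finset.sum_comm
      _ = ∑ p : (Fin t → Fin n) × (Fin t → Fin n),
            Mhat p * ∑ ω, w ω * (u ω p.1 * u ω p.2) :=
          Finset.sum_congr rfl fun p _ => (Finset.mul_sum _ _ _).symm
      _ ≤ ∑ p : (Fin t → Fin n) × (Fin t → Fin n), Mhat p * (sf p.1 * sf p.2) :=
          Finset.sum_le_sum fun p _ =>
            mul_le_mul_of_nonneg_left (hCS p.1 p.2) (hMnonneg p)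
      _ = ∑ I, ∑ J, sf I * (Mhat (I, J) * sf J) := by
          rw [Fintype.sum_prod_type]
          exact Finset.sum_congr rfl fun I _ => Finset.sum_congr rfl fun J _ => by ring
  have hvT : ⟪v, T v⟫ = ∑ p : (Fin t → Fin n) × (Fin t → Fin n),
      Mhat p * (vf p.1 * vf p.2) := by
    rw [hbil vf vf, Fintype.sum_prod_type]
    exact Finset.sum_congr rfl fun I _ => Finset.sum_congr rfl fun J _ => by ring
  have hop : ⟪s, T s⟫ - ⟪v, T v⟫ ≤ 2 * ‖T‖ * ‖s - v‖ := by
    have e : ⟪s, T s⟫ - ⟪v, T v⟫ = ⟪s - v, T s⟫ + ⟪v, T (s - v)⟫ := by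
      rw [inner_sub_left, map_sub, inner_sub_right]; ring
    have b1 : ⟪s - v, T s⟫ ≤ ‖s - v‖ * ‖T‖ := by
      calc ⟪s - v, T s⟫ ≤ ‖s - v‖ * ‖T s‖ := real_inner_le_norm _ _
        _ ≤ ‖s - v‖ * (‖T‖ * ‖s‖) :=
            mul_le_mul_of_nonneg_left (T.le_opNorm s) (norm_nonneg _)
        _ = ‖s - v‖ * ‖T‖ := by rw [hns, mul_one]
    have b2 : ⟪v, T (s - v)⟫ ≤ ‖T‖ * ‖s - v‖ := by
      calc ⟪v, T (s - v)⟫ ≤ ‖v‖ * ‖T (s - v)‖ := real_inner_le_norm _ _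
        _ ≤ ‖v‖ * (‖T‖ * ‖s - v‖) :=
            mul_le_mul_of_nonneg_left (T.le_opNorm _) (norm_nonneg _)
        _ = ‖T‖ * ‖s - v‖ := by rw [hnv, one_mul]
    linarith
  have hsqrt2 : Real.sqrt 2 ≤ 2 := by
    nlinarith [Real.sq_sqrt (by norm_num : (0:ℝ) ≤ 2), Real.sqrt_nonneg 2]
  have hTnn : (0:ℝ) ≤ ‖T‖ := norm_nonneg _
  have h2e : ‖s - v‖ ≤ 2 * ε := le_trans hdist (by nlinarith)
  have hkey : 2 * ‖T‖ * ‖s - v‖ ≤ 4 * ε * ‖T‖ := by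
    nlinarith [mul_le_mul_of_nonneg_left h2e hTnn]
  show ∑ p : (Fin t → Fin n) × (Fin t → Fin n), Mhat p * (vf p.1 * vf p.2)
    ≥ (∑ ω, w ω * ∑ p : (Fin t → Fin n) × (Fin t → Fin n),
        Mhat p * (u ω p.1 * u ω p.2)) - 4 * ε * ‖T‖
  rw [ge_iff_le, ← hvT]
  linarith [hEM, hop, hkey]
end

section
/- Let H be a finite-dimensional real inner product space, and let x and y be independent, finitely supported random vectors in H. Let x' be an independent copy of x and y' an independent copy of y. Then E[⟨x,y⟩⁴] ≤ (E[⟨x,x'⟩⁴])^{1/2} · (E[⟨y,y'⟩⁴])^{1/2}. -/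
lemma expand4 {n : Type*} [Fintype n] (t : n → ℝ) :
    (∑ i, t i) ^ 4 = ∑ p : n × n × n × n, t p.1 * t p.2.1 * t p.2.2.1 * t p.2.2.2 := by
  simp_rw [Fintype.sum_prod_type]
  rw [show (∑ i, t i) ^ 4 = (∑ i, t i) * ((∑ i, t i) * ((∑ i, t i) * (∑ i, t i))) by ring]
  rw [Finset.sum_mul_sum]
  simp_rw [Finset.sum_mul_sum, Finset.mul_sum]
  congr 1; ext i; congr 1; ext j; congr 1; ext k; congr 1; ext l; ring

lemma key_s10 {α β n : Type*} [Fintype α] [Fintype β] [Fintype n]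
    (w : α → ℝ) (v : β → ℝ) (f : α → n → ℝ) (g : β → n → ℝ) :
    ∑ a, ∑ c, w a * v c * (∑ i, f a i * g c i) ^ 4
      = ∑ p : n × n × n × n,
          (∑ a, w a * (f a p.1 * f a p.2.1 * f a p.2.2.1 * f a p.2.2.2)) *
          (∑ c, v c * (g c p.1 * g c p.2.1 * g c p.2.2.1 * g c p.2.2.2)) := by
  simp_rw [expand4, Finset.mul_sum, Finset.sum_mul]
  conv_lhs => enter [2,a]; rw [Finset.sum_comm]
  rw [Finset.sum_comm]
  congr 1; ext p
  rw [Finset.sum_comm]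
  congr 1; ext c
  congr 1; ext a
  ring


/-- For independent, finitely supported random vectors `x, y` in a finite-dimensional
real inner product space `H` (modelled by weights `w₁, w₂` on finite sample spaces),
with `x'` an independent copy of `x` and `y'` an independent copy of `y`:
`E⟨x,y⟩⁴ ≤ (E⟨x,x'⟩⁴)^{1/2} · (E⟨y,y'⟩⁴)^{1/2}`. -/
theorem fourth_moment_cauchy_schwarz
    (H : Type) [NormedAddCommGroup H] [InnerProductSpace ℝ H] [FiniteDimensional ℝ H]
    (Ω₁ Ω₂ : Type) [Fintype Ω₁] [Fintype Ω₂]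
    (w₁ : Ω₁ → ℝ) (hw₁ : ∀ a, 0 ≤ w₁ a) (hw₁1 : ∑ a, w₁ a = 1)
    (w₂ : Ω₂ → ℝ) (hw₂ : ∀ b, 0 ≤ w₂ b) (hw₂1 : ∑ b, w₂ b = 1)
    (x : Ω₁ → H) (y : Ω₂ → H) :
    ∑ a, ∑ b, w₁ a * w₂ b * (inner ℝ (x a) (y b) : ℝ) ^ 4
      ≤ Real.sqrt (∑ a, ∑ a', w₁ a * w₁ a' * (inner ℝ (x a) (x a') : ℝ) ^ 4) *
        Real.sqrt (∑ b, ∑ b', w₂ b * w₂ b' * (inner ℝ (y b) (y b') : ℝ) ^ 4) := by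
  classical
  set b := stdOrthonormalBasis ℝ H with hb
  set f : Ω₁ → Fin (Module.finrank ℝ H) → ℝ := fun a i => (inner ℝ (x a) (b i) : ℝ) with hf
  set g : Ω₂ → Fin (Module.finrank ℝ H) → ℝ := fun c i => (inner ℝ (y c) (b i) : ℝ) with hg
  have hin : ∀ (u v : H), (inner ℝ u v : ℝ) =
      ∑ i, (inner ℝ u (b i) : ℝ) * (inner ℝ v (b i) : ℝ) := by
    intro u v
    rw [← b.sum_inner_mul_inner u v]
    simp_rw [real_inner_comm (b _) v]
  have h1 : ∀ a c, (inner ℝ (x a) (y c) : ℝ) = ∑ i, f a i * g c i := fun a c => hin _ _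
  have h2 : ∀ a a', (inner ℝ (x a) (x a') : ℝ) = ∑ i, f a i * f a' i := fun a a' => hin _ _
  have h3 : ∀ c c', (inner ℝ (y c) (y c') : ℝ) = ∑ i, g c i * g c' i := fun c c' => hin _ _
  simp_rw [h1, h2, h3, key_s10]
  set F : Fin (Module.finrank ℝ H) × _ × _ × _ → ℝ :=
    fun p => ∑ a, w₁ a * (f a p.1 * f a p.2.1 * f a p.2.2.1 * f a p.2.2.2) with hF
  set G : Fin (Module.finrank ℝ H) × _ × _ × _ → ℝ :=
    fun p => ∑ c, w₂ c * (g c p.1 * g c p.2.1 * g c p.2.2.1 * g c p.2.2.2) with hG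
  calc ∑ p, F p * G p
      ≤ Real.sqrt (∑ p, F p ^ 2) * Real.sqrt (∑ p, G p ^ 2) :=
        Real.sum_mul_le_sqrt_mul_sqrt _ F G
    _ = Real.sqrt (∑ p, F p * F p) * Real.sqrt (∑ p, G p * G p) := by simp_rw [sq]
end

section
/- Let U be a finite nonempty set with |U| = n, let Π be an orthogonal projection on ℝ^U with respect to the expectation inner product, and let 𝒟 be a finitely supported probability distribution over ℝ^U. Then E_{f∼𝒟}[‖Πf‖₄⁴] ≤ (E_{f,f'∼𝒟 independent}[⟨f, Πf'⟩⁴])^{1/2} · ((1/n)·Σ_{u∈U} ‖Πδ_u‖₄⁴)^{1/2}. -/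
/-- The expectation inner product on `ℝ^U`: `⟨f,g⟩ = (1/|U|)·Σ_u f(u)·g(u)`. -/
noncomputable def eip {U : Type} [Fintype U] (f g : U → ℝ) : ℝ :=
  (Fintype.card U : ℝ)⁻¹ * ∑ u, f u * g u

private def Vq {U : Type} (a : U → ℝ) (q : U × U × U × U) : ℝ :=
  a q.1 * a q.2.1 * a q.2.2.1 * a q.2.2.2

private theorem sum_pow_four {U : Type} [Fintype U] (t : U → ℝ) :
    (∑ u, t u)^4 = ∑ q : U×U×U×U, t q.1 * t q.2.1 * t q.2.2.1 * t q.2.2.2 := by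
  have h2 : ∀ {A B : Type} [Fintype A] [Fintype B] (s : A → ℝ) (r : B → ℝ),
      (∑ a, s a) * (∑ b, r b) = ∑ p : A × B, s p.1 * r p.2 := by
    intro A B _ _ s r
    rw [Finset.sum_mul_sum, Fintype.sum_prod_type]
  calc (∑ u, t u)^4 = (∑ u, t u) * ((∑ u, t u) * ((∑ u, t u) * (∑ u, t u))) := by ring
    _ = (∑ u, t u) * ((∑ u, t u) * (∑ p : U×U, t p.1 * t p.2)) := by rw [h2]
    _ = (∑ u, t u) * (∑ p : U×U×U, t p.1 * (t p.2.1 * t p.2.2)) := by rw [h2]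
    _ = ∑ q : U×U×U×U, t q.1 * (t q.2.1 * (t q.2.2.1 * t q.2.2.2)) := by rw [h2]
    _ = ∑ q : U×U×U×U, t q.1 * t q.2.1 * t q.2.2.1 * t q.2.2.2 :=
        Finset.sum_congr rfl fun q _ => by ring

private theorem swap3 {A B C : Type} [Fintype A] [Fintype B] [Fintype C]
    (f : A → B → C → ℝ) :
    ∑ a, ∑ b, ∑ c, f a b c = ∑ c, ∑ a, ∑ b, f a b c := by
  have h : ∀ a, ∑ b, ∑ c, f a b c = ∑ c, ∑ b, f a b c := fun a => Finset.sum_comm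
  simp_rw [h]
  exact Finset.sum_comm

private theorem rearr {A B Q : Type} [Fintype A] [Fintype B] [Fintype Q]
    (p : A → ℝ) (r : B → ℝ) (X : A → Q → ℝ) (Y : B → Q → ℝ) :
    ∑ a, ∑ b, (p a * r b) * ∑ q, X a q * Y b q
      = ∑ q, (∑ a, p a * X a q) * (∑ b, r b * Y b q) := by
  simp_rw [Finset.sum_mul_sum, Finset.mul_sum]
  rw [swap3]
  exact Finset.sum_congr rfl fun q _ => Finset.sum_congr rfl fun a _ =>
    Finset.sum_congr rfl fun b _ => by ring

/-- **Coordinate projection rounding** (Lemma 4.5).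
For an orthogonal projection `Π` on `ℝ^U` (for the expectation inner product) and a
finitely supported distribution `𝒟` (weights `w` on a finite sample space `Ω`,
functions `F ω : U → ℝ`):
`E_{f∼𝒟} ‖Πf‖₄⁴ ≤ (E_{f,f'∼𝒟} ⟨f, Πf'⟩⁴)^{1/2} · (E_u ‖Πδ_u‖₄⁴)^{1/2}`,
where `δ_u(u') = |U|·[u' = u]`. -/
theorem coordinate_projection_rounding
    (U : Type) [Fintype U] [DecidableEq U] [Nonempty U]
    (Pi : (U → ℝ) →ₗ[ℝ] (U → ℝ))
    (hidem : ∀ f, Pi (Pi f) = Pi f)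
    (hselfadj : ∀ f g, eip (Pi f) g = eip f (Pi g))
    (Ω : Type) [Fintype Ω]
    (w : Ω → ℝ) (hw : ∀ ω, 0 ≤ w ω) (hw1 : ∑ ω, w ω = 1)
    (F : Ω → U → ℝ) :
    ∑ ω, w ω * ((Fintype.card U : ℝ)⁻¹ * ∑ u, (Pi (F ω) u) ^ 4)
      ≤ Real.sqrt (∑ ω, ∑ ω', w ω * w ω' * (eip (F ω) (Pi (F ω'))) ^ 4) *
        Real.sqrt ((Fintype.card U : ℝ)⁻¹ * ∑ u,
          ((Fintype.card U : ℝ)⁻¹ * ∑ v,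
            (Pi (fun v' => if v' = u then (Fintype.card U : ℝ) else 0) v) ^ 4)) := by
  set n : ℝ := (Fintype.card U : ℝ) with hn
  have hnne : n ≠ 0 := Nat.cast_ne_zero.2 Fintype.card_ne_zero
  set c : ℝ := n⁻¹ with hc
  set d : U → U → ℝ := fun u v' => if v' = u then n else 0 with hd
  -- delta evaluation
  have hdelta : ∀ (g : U → ℝ) (u : U), eip g (d u) = g u := by
    intro g u
    simp only [eip, hd, mul_ite, mul_zero, Finset.sum_ite_eq', Finset.mem_univ, if_true]
    rw [mul_comm (g u) n, ← mul_assoc]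
    rw [inv_mul_cancel₀ hnne, one_mul]
  -- eip x (Pi y) = eip (Pi x) (Pi y)
  have hBsym : ∀ x y : U → ℝ, eip x (Pi y) = eip (Pi x) (Pi y) := by
    intro x y
    conv_lhs => rw [← hidem y]
    rw [← hselfadj]
  -- key expansion
  have key : ∀ x y : U → ℝ, (eip (Pi x) (Pi y))^4
      = c^4 * ∑ q : U×U×U×U, Vq (Pi x) q * Vq (Pi y) q := by
    intro x y
    rw [eip, mul_pow, sum_pow_four]
    congr 1
    exact Finset.sum_congr rfl fun q _ => by simp only [Vq]; ring
  have key2 : ∀ x y : U → ℝ, (eip x (Pi y))^4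
      = c^4 * ∑ q : U×U×U×U, Vq (Pi x) q * Vq (Pi y) q := by
    intro x y
    rw [hBsym, key]
  -- pointwise coordinate formula
  have hcoord : ∀ (f : U → ℝ) (u : U),
      (Pi f u)^4 = c^4 * ∑ q : U×U×U×U, Vq (Pi f) q * Vq (Pi (d u)) q := by
    intro f u
    have h1 : Pi f u = eip (Pi f) (Pi (d u)) := by
      rw [← hBsym, ← hselfadj, hdelta]
    rw [h1, key]
  set S : U×U×U×U → ℝ := fun q => ∑ ω, w ω * Vq (Pi (F ω)) q with hS
  set T : U×U×U×U → ℝ := fun q => c * ∑ u, Vq (Pi (d u)) q with hT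
  -- the three identities
  have hL : ∑ ω, w ω * (c * ∑ u, (Pi (F ω) u) ^ 4) = c^4 * ∑ q, S q * T q := by
    calc ∑ ω, w ω * (c * ∑ u, (Pi (F ω) u) ^ 4)
        = c^5 * ∑ ω, ∑ u, (w ω * 1) * ∑ q : U×U×U×U,
            Vq (Pi (F ω)) q * Vq (Pi (d u)) q := by
          simp_rw [hcoord, Finset.mul_sum]
          exact Finset.sum_congr rfl fun ω _ => Finset.sum_congr rfl fun u _ =>
            Finset.sum_congr rfl fun q _ => by ring
      _ = c^5 * ∑ q, (∑ ω, w ω * Vq (Pi (F ω)) q) * (∑ u, 1 * Vq (Pi (d u)) q) := by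
          rw [rearr]
      _ = c^4 * ∑ q, S q * T q := by
          rw [Finset.mul_sum, Finset.mul_sum]
          refine Finset.sum_congr rfl fun q _ => ?_
          simp only [hS, hT, one_mul]
          ring
  have hA : ∑ ω, ∑ ω', w ω * w ω' * (eip (F ω) (Pi (F ω'))) ^ 4
      = c^4 * ∑ q, S q ^ 2 := by
    calc ∑ ω, ∑ ω', w ω * w ω' * (eip (F ω) (Pi (F ω'))) ^ 4
        = c^4 * ∑ ω, ∑ ω', (w ω * w ω') * ∑ q : U×U×U×U,
            Vq (Pi (F ω)) q * Vq (Pi (F ω')) q := by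
          simp_rw [key2, Finset.mul_sum]
          exact Finset.sum_congr rfl fun ω _ => Finset.sum_congr rfl fun ω' _ =>
            Finset.sum_congr rfl fun q _ => by ring
      _ = c^4 * ∑ q, (∑ ω, w ω * Vq (Pi (F ω)) q) * (∑ ω', w ω' * Vq (Pi (F ω')) q) := by
          rw [rearr]
      _ = c^4 * ∑ q, S q ^ 2 := by
          rw [Finset.mul_sum, Finset.mul_sum]
          refine Finset.sum_congr rfl fun q _ => ?_
          simp only [hS]
          ring
  have hB2 : c * ∑ u, (c * ∑ v, (Pi (d u) v) ^ 4) = c^4 * ∑ q, T q ^ 2 := by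
    calc c * ∑ u, (c * ∑ v, (Pi (d u) v) ^ 4)
        = c^6 * ∑ u, ∑ v, ((1:ℝ) * 1) * ∑ q : U×U×U×U,
            Vq (Pi (d u)) q * Vq (Pi (d v)) q := by
          simp_rw [hcoord, Finset.mul_sum]
          exact Finset.sum_congr rfl fun u _ => Finset.sum_congr rfl fun v _ =>
            Finset.sum_congr rfl fun q _ => by ring
      _ = c^6 * ∑ q, (∑ u, 1 * Vq (Pi (d u)) q) * (∑ v, 1 * Vq (Pi (d v)) q) := by
          rw [rearr]
      _ = c^4 * ∑ q, T q ^ 2 := by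
          rw [Finset.mul_sum, Finset.mul_sum]
          refine Finset.sum_congr rfl fun q _ => ?_
          simp only [hT, one_mul]
          ring
  -- nonnegativity
  have hc4 : (0:ℝ) ≤ c^4 := by positivity
  have hA0 : (0:ℝ) ≤ ∑ ω, ∑ ω', w ω * w ω' * (eip (F ω) (Pi (F ω'))) ^ 4 := by
    rw [hA]; positivity
  have hB0 : (0:ℝ) ≤ c * ∑ u, (c * ∑ v, (Pi (d u) v) ^ 4) := by
    rw [hB2]; positivity
  have hL0 : (0:ℝ) ≤ ∑ ω, w ω * (c * ∑ u, (Pi (F ω) u) ^ 4) := by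
    apply Finset.sum_nonneg
    intro ω _
    have : (0:ℝ) ≤ c * ∑ u, (Pi (F ω) u) ^ 4 := by positivity
    exact mul_nonneg (hw ω) this
  -- Cauchy–Schwarz
  have hCS : (∑ ω, w ω * (c * ∑ u, (Pi (F ω) u) ^ 4))^2
      ≤ (∑ ω, ∑ ω', w ω * w ω' * (eip (F ω) (Pi (F ω'))) ^ 4)
        * (c * ∑ u, (c * ∑ v, (Pi (d u) v) ^ 4)) := by
    rw [hL, hA, hB2]
    have h := Finset.sum_mul_sq_le_sq_mul_sq Finset.univ S T
    calc (c^4 * ∑ q, S q * T q)^2 = (c^4)^2 * (∑ q, S q * T q)^2 := by ring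
      _ ≤ (c^4)^2 * ((∑ q, S q ^ 2) * (∑ q, T q ^ 2)) := by
          apply mul_le_mul_of_nonneg_left h (by positivity)
      _ = (c^4 * ∑ q, S q ^ 2) * (c^4 * ∑ q, T q ^ 2) := by ring
  calc ∑ ω, w ω * (c * ∑ u, (Pi (F ω) u) ^ 4)
      = Real.sqrt ((∑ ω, w ω * (c * ∑ u, (Pi (F ω) u) ^ 4))^2) :=
        (Real.sqrt_sq hL0).symm
    _ ≤ Real.sqrt ((∑ ω, ∑ ω', w ω * w ω' * (eip (F ω) (Pi (F ω'))) ^ 4)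
        * (c * ∑ u, (c * ∑ v, (Pi (d u) v) ^ 4))) := Real.sqrt_le_sqrt hCS
    _ = _ := Real.sqrt_mul hA0 _
end

section
/- Let U be a finite nonempty set, let r be an even positive integer, and let 𝒟 be a finitely supported probability distribution over ℝ^U such that E_{f,g∼𝒟 independent}[⟨f², g²⟩^r] > 0, where f² denotes the pointwise square of f and ⟨·,·⟩ is the expectation inner product. Then there exist points u₁,…,u_r ∈ U with E_{f∼𝒟}[f(u₁)²⋯f(u_r)²] > 0 such that the reweighted distribution 𝒟' defined by Pr_{𝒟'}[f] = Pr_{𝒟}[f]·f(u₁)²⋯f(u_r)² / E_{h∼𝒟}[h(u₁)²⋯h(u_r)²] satisfies E_{f,g∼𝒟' independent}[⟨f², g²⟩] ≥ (E_{f,g∼𝒟 independent}[⟨f², g²⟩^r])^{1/r}. -/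
open Finset

/- auxiliary definitions -/
noncomputable def Efun {U Ω : Type} [Fintype U] (a : Ω → U → ℝ) (ω ω' : Ω) : ℝ :=
  (Fintype.card U : ℝ)⁻¹ * ∑ u, a ω u * a ω' u

noncomputable def Mfun {U Ω : Type} [Fintype Ω] (w : Ω → ℝ) (a : Ω → U → ℝ) {r : ℕ}
    (p : Fin r → U) : ℝ := ∑ ω, w ω * ∏ j, a ω (p j)

noncomputable def Sfun {U Ω : Type} [Fintype U] [Fintype Ω] (w : Ω → ℝ) (a : Ω → U → ℝ)
    (k : ℕ) : ℝ := ∑ ω, ∑ ω', w ω * w ω' * Efun a ω ω' ^ k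

noncomputable def Tfun {U Ω : Type} [Fintype U] [Fintype Ω] (w : Ω → ℝ) (a : Ω → U → ℝ)
    {r : ℕ} (p : Fin r → U) : ℝ :=
  ∑ ω, ∑ ω', (w ω * ∏ j, a ω (p j)) * (w ω' * ∏ j, a ω' (p j)) * Efun a ω ω'

lemma moment_lyapunov {Ω : Type} [Fintype Ω] (a x : Ω → ℝ)
    (ha : ∀ ω, 0 ≤ a ω) (hx : ∀ ω, 0 ≤ x ω) (ha1 : ∑ ω, a ω = 1) :
    ∀ k : ℕ, (∑ ω, a ω * x ω ^ k) ^ (k + 1) ≤ (∑ ω, a ω * x ω ^ (k + 1)) ^ k := by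
  intro k
  induction k with
  | zero => simp [ha1]
  | succ k ih =>
    have hnn : ∀ m : ℕ, 0 ≤ ∑ ω, a ω * x ω ^ m := fun m =>
      Finset.sum_nonneg fun ω _ => mul_nonneg (ha ω) (pow_nonneg (hx ω) m)
    have hcs : (∑ ω, a ω * x ω ^ (k + 1)) ^ 2 ≤
        (∑ ω, a ω * x ω ^ k) * (∑ ω, a ω * x ω ^ (k + 2)) :=
      Finset.sum_sq_le_sum_mul_sum_of_sq_eq_mul Finset.univ
        (fun ω _ => mul_nonneg (ha ω) (pow_nonneg (hx ω) k))
        (fun ω _ => mul_nonneg (ha ω) (pow_nonneg (hx ω) (k + 2)))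
        (fun ω _ => by ring)
    rcases (hnn (k + 1)).eq_or_lt with h0 | h0
    · rw [← h0, zero_pow (by omega)]
      exact pow_nonneg (hnn (k + 2)) _
    · have h2 : (∑ ω, a ω * x ω ^ (k + 1)) ^ (2 * (k + 1)) ≤
          (∑ ω, a ω * x ω ^ k) ^ (k + 1) * (∑ ω, a ω * x ω ^ (k + 2)) ^ (k + 1) := by
        rw [pow_mul, ← mul_pow]
        exact pow_le_pow_left₀ (sq_nonneg _) hcs (k + 1)
      have h3 : (∑ ω, a ω * x ω ^ k) ^ (k + 1) * (∑ ω, a ω * x ω ^ (k + 2)) ^ (k + 1)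
          ≤ (∑ ω, a ω * x ω ^ (k + 1)) ^ k * (∑ ω, a ω * x ω ^ (k + 2)) ^ (k + 1) :=
        mul_le_mul_of_nonneg_right ih (pow_nonneg (hnn (k + 2)) _)
      have h4 := h2.trans h3
      have h5 : (∑ ω, a ω * x ω ^ (k + 1)) ^ (2 * (k + 1)) =
          (∑ ω, a ω * x ω ^ (k + 1)) ^ k * (∑ ω, a ω * x ω ^ (k + 1)) ^ (k + 2) := by
        rw [← pow_add]
        congr 1
        omega
      rw [h5] at h4
      exact le_of_mul_le_mul_left h4 (pow_pos h0 k)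

lemma double_sum_swap {Ω : Type} [Fintype Ω] {P : Type} [Fintype P] (g : Ω → Ω → P → ℝ) :
    ∑ ω : Ω, ∑ ω' : Ω, ∑ p : P, g ω ω' p = ∑ p : P, ∑ ω : Ω, ∑ ω' : Ω, g ω ω' p :=
  calc ∑ ω : Ω, ∑ ω' : Ω, ∑ p : P, g ω ω' p
      = ∑ ω : Ω, ∑ p : P, ∑ ω' : Ω, g ω ω' p :=
        Finset.sum_congr rfl fun ω _ => Finset.sum_comm
    _ = ∑ p : P, ∑ ω : Ω, ∑ ω' : Ω, g ω ω' p := Finset.sum_comm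

lemma const_out {Ω Ω' : Type} [Fintype Ω] [Fintype Ω'] (c : ℝ) (Z : Ω → Ω' → ℝ) :
    ∑ ω, ∑ ω', c * Z ω ω' = c * ∑ ω, ∑ ω', Z ω ω' := by
  rw [Finset.mul_sum]
  exact Finset.sum_congr rfl fun ω _ => (Finset.mul_sum _ _ _).symm

lemma pow_expand {U : Type} [Fintype U] (c : U → ℝ) (k : ℕ) :
    (∑ u, c u) ^ k = ∑ p : Fin k → U, ∏ j, c (p j) := by
  rw [Finset.sum_pow', Fintype.piFinset_univ]

lemma main_aux {U Ω : Type} [Fintype U] [Nonempty U] [Fintype Ω]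
    (r : ℕ) (hr : 0 < r)
    (w : Ω → ℝ) (hw : ∀ ω, 0 ≤ w ω) (hw1 : ∑ ω, w ω = 1)
    (a : Ω → U → ℝ) (ha : ∀ ω u, 0 ≤ a ω u)
    (hpos : 0 < Sfun w a r) :
    ∃ pts : Fin r → U,
      (0 < Mfun w a pts) ∧
      ∑ ω, ∑ ω', (w ω * ∏ j, a ω (pts j)) / Mfun w a pts *
          ((w ω' * ∏ j, a ω' (pts j)) / Mfun w a pts) * Efun a ω ω'
        ≥ Sfun w a r ^ ((r : ℝ)⁻¹) := by
  classical
  have hNpos : (0:ℝ) < (Fintype.card U : ℝ)⁻¹ := by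
    have := Fintype.card_pos (α := U); positivity
  have he : ∀ ω ω', 0 ≤ Efun a ω ω' := fun ω ω' =>
    mul_nonneg hNpos.le (Finset.sum_nonneg fun u _ => mul_nonneg (ha _ _) (ha _ _))
  set N : ℝ := (Fintype.card U : ℝ)⁻¹ with hN
  -- step: expansion per pair
  have hstep : ∀ (k : ℕ) (ω ω' : Ω), w ω * w ω' * Efun a ω ω' ^ k
      = ∑ p : Fin k → U, N ^ k *
          ((w ω * ∏ j, a ω (p j)) * (w ω' * ∏ j, a ω' (p j))) := by
    intro k ω ω'
    have h1 : Efun a ω ω' ^ k = N ^ k * ∑ p : Fin k → U, ∏ j, a ω (p j) * a ω' (p j) := by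
      rw [Efun, mul_pow, pow_expand]
    rw [h1, Finset.mul_sum, Finset.mul_sum]
    exact Finset.sum_congr rfl fun p _ => by rw [Finset.prod_mul_distrib]; ring
  have hSexp : ∀ k : ℕ, Sfun w a k = N ^ k * ∑ p : Fin k → U, Mfun w a p * Mfun w a p := by
    intro k
    rw [Sfun]
    simp_rw [hstep k]
    rw [double_sum_swap, Finset.mul_sum]
    refine Finset.sum_congr rfl fun p _ => ?_
    rw [const_out, Mfun, Finset.sum_mul_sum]
  have hstep' : ∀ ω ω', w ω * w ω' * Efun a ω ω' ^ (r + 1)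
      = ∑ p : Fin r → U, N ^ r *
          ((w ω * ∏ j, a ω (p j)) * ((w ω' * ∏ j, a ω' (p j)) * Efun a ω ω')) := by
    intro ω ω'
    have h1 : w ω * w ω' * Efun a ω ω' ^ (r + 1)
        = w ω * w ω' * Efun a ω ω' ^ r * Efun a ω ω' := by ring
    rw [h1, hstep r, Finset.sum_mul]
    exact Finset.sum_congr rfl fun p _ => by ring
  have hS'exp : Sfun w a (r + 1) = N ^ r * ∑ p : Fin r → U, Tfun w a p := by
    rw [Sfun]
    simp_rw [hstep']
    rw [double_sum_swap, Finset.mul_sum]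
    refine Finset.sum_congr rfl fun p _ => ?_
    rw [const_out, Tfun]
    congr 1
    exact Finset.sum_congr rfl fun ω _ => Finset.sum_congr rfl fun ω' _ => by ring
  -- Lyapunov
  have hprod : ∀ k : ℕ, Sfun w a k = ∑ z : Ω × Ω, (w z.1 * w z.2) * Efun a z.1 z.2 ^ k := by
    intro k
    rw [Sfun]
    exact (Fintype.sum_prod_type fun z : Ω × Ω => w z.1 * w z.2 * Efun a z.1 z.2 ^ k).symm
  have ha1' : ∑ z : Ω × Ω, w z.1 * w z.2 = 1 := by
    rw [Fintype.sum_prod_type, ← Finset.sum_mul_sum, hw1, one_mul]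
  have hLy : Sfun w a r ^ (r + 1) ≤ Sfun w a (r + 1) ^ r := by
    rw [hprod r, hprod (r + 1)]
    exact moment_lyapunov (fun z : Ω × Ω => w z.1 * w z.2) (fun z : Ω × Ω => Efun a z.1 z.2)
      (fun z => mul_nonneg (hw _) (hw _)) (fun z => he _ _) ha1' r
  have hS1nn : 0 ≤ Sfun w a (r + 1) :=
    Finset.sum_nonneg fun ω _ => Finset.sum_nonneg fun ω' _ =>
      mul_nonneg (mul_nonneg (hw _) (hw _)) (pow_nonneg (he _ _) _)
  set c : ℝ := Sfun w a r ^ ((r : ℝ)⁻¹) with hc_def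
  have hc : 0 < c := Real.rpow_pos_of_pos hpos _
  have hrne : (r : ℝ) ≠ 0 := Nat.cast_ne_zero.2 hr.ne'
  have key : Sfun w a r * c ≤ Sfun w a (r + 1) := by
    have h1 : ((Sfun w a r ^ (r + 1) : ℝ)) ^ ((r : ℝ)⁻¹)
        ≤ ((Sfun w a (r + 1)) ^ r) ^ ((r : ℝ)⁻¹) :=
      Real.rpow_le_rpow (pow_nonneg hpos.le _) hLy (by positivity)
    rw [← Real.rpow_natCast (Sfun w a (r + 1)) r, ← Real.rpow_mul hS1nn,
      mul_inv_cancel₀ hrne, Real.rpow_one] at h1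
    rw [← Real.rpow_natCast (Sfun w a r) (r + 1), ← Real.rpow_mul hpos.le] at h1
    have h2 : ((r + 1 : ℕ) : ℝ) * (r : ℝ)⁻¹ = 1 + (r : ℝ)⁻¹ := by
      push_cast; field_simp
    rw [h2, Real.rpow_add hpos, Real.rpow_one] at h1
    exact h1
  -- transfer to tuple sums
  have hmain : c * ∑ p : Fin r → U, Mfun w a p * Mfun w a p ≤ ∑ p : Fin r → U, Tfun w a p := by
    rw [hSexp r, hS'exp] at key
    have key2 : N ^ r * (c * ∑ p : Fin r → U, Mfun w a p * Mfun w a p)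
        ≤ N ^ r * ∑ p : Fin r → U, Tfun w a p := by
      calc N ^ r * (c * ∑ p : Fin r → U, Mfun w a p * Mfun w a p)
          = (N ^ r * ∑ p : Fin r → U, Mfun w a p * Mfun w a p) * c := by ring
        _ ≤ N ^ r * ∑ p : Fin r → U, Tfun w a p := key
    exact le_of_mul_le_mul_left key2 (pow_pos hNpos r)
  have hMnn : ∀ p : Fin r → U, 0 ≤ Mfun w a p := fun p =>
    Finset.sum_nonneg fun ω _ => mul_nonneg (hw ω) (Finset.prod_nonneg fun j _ => ha ω (p j))
  have hApos : 0 < ∑ p : Fin r → U, Mfun w a p * Mfun w a p := by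
    have h0 := hpos
    rw [hSexp r] at h0
    by_contra h
    push_neg at h
    nlinarith [pow_pos hNpos r]
  obtain ⟨p₀, hp₀⟩ : ∃ p : Fin r → U, 0 < Mfun w a p := by
    by_contra h
    push_neg at h
    have hzz : ∑ p : Fin r → U, Mfun w a p * Mfun w a p = 0 :=
      Finset.sum_eq_zero fun p _ => by
        rw [le_antisymm (h p) (hMnn p), mul_zero]
    linarith
  have hex : ∃ p : Fin r → U, 0 < Mfun w a p ∧ c * (Mfun w a p * Mfun w a p) ≤ Tfun w a p := by
    by_contra hcon
    push_neg at hcon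
    have hlt : ∑ p : Fin r → U, Tfun w a p < ∑ p : Fin r → U, c * (Mfun w a p * Mfun w a p) := by
      apply Finset.sum_lt_sum
      · intro p _
        rcases (hMnn p).eq_or_lt with h0 | h0
        · have hz : ∀ ω, w ω * ∏ j, a ω (p j) = 0 := by
            intro ω
            have := (Finset.sum_eq_zero_iff_of_nonneg
              (fun ω _ => mul_nonneg (hw ω) (Finset.prod_nonneg fun j _ => ha ω (p j)))).1
              h0.symm ω (Finset.mem_univ ω)
            exact this
          have hT0 : Tfun w a p = 0 :=
            Finset.sum_eq_zero fun ω _ => Finset.sum_eq_zero fun ω' _ => by rw [hz ω]; ring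
          rw [hT0, ← h0]
          simp
        · exact (hcon p h0).le
      · exact ⟨p₀, Finset.mem_univ _, hcon p₀ hp₀⟩
    rw [← Finset.mul_sum] at hlt
    linarith
  obtain ⟨p, hMp, hTp⟩ := hex
  refine ⟨p, hMp, ?_⟩
  have hM2 : 0 < Mfun w a p * Mfun w a p := mul_pos hMp hMp
  have hfinal : ∑ ω, ∑ ω', (w ω * ∏ j, a ω (p j)) / Mfun w a p *
      ((w ω' * ∏ j, a ω' (p j)) / Mfun w a p) * Efun a ω ω'
      = Tfun w a p / (Mfun w a p * Mfun w a p) := by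
    rw [Tfun, Finset.sum_div]
    refine Finset.sum_congr rfl fun ω _ => ?_
    rw [Finset.sum_div]
    exact Finset.sum_congr rfl fun ω' _ => by rw [div_mul_div_comm, div_mul_eq_mul_div]
  rw [ge_iff_le, hfinal, le_div_iff₀ hM2]
  linarith [hTp]

/-- **Conditioning** (Lemma 4.7).
Let `r` be an even positive integer and `𝒟` a finitely supported distribution over
`ℝ^U` (weights `w` on a finite `Ω`, functions `F ω`) with
`E_{f,g∼𝒟} ⟨f²,g²⟩^r > 0`.  Then there are points `u₁,…,u_r ∈ U` with
`E_{f∼𝒟}[f(u₁)²⋯f(u_r)²] > 0` such that the distribution `𝒟'` obtained by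
reweighing `𝒟` proportionally to `f(u₁)²⋯f(u_r)²` satisfies
`E_{f,g∼𝒟'} ⟨f²,g²⟩ ≥ (E_{f,g∼𝒟} ⟨f²,g²⟩^r)^{1/r}`. -/
theorem conditioning
    (U : Type) [Fintype U] [Nonempty U]
    (r : ℕ) (hr : 0 < r) (hreven : Even r)
    (Ω : Type) [Fintype Ω]
    (w : Ω → ℝ) (hw : ∀ ω, 0 ≤ w ω) (hw1 : ∑ ω, w ω = 1)
    (F : Ω → U → ℝ)
    (hpos : 0 < ∑ ω, ∑ ω', w ω * w ω' *
        (eip (fun u => F ω u ^ 2) (fun u => F ω' u ^ 2)) ^ r) :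
    ∃ pts : Fin r → U,
      (0 < ∑ ω, w ω * ∏ j, F ω (pts j) ^ 2) ∧
      ∑ ω, ∑ ω',
          ((w ω * ∏ j, F ω (pts j) ^ 2) / (∑ ω'', w ω'' * ∏ j, F ω'' (pts j) ^ 2)) *
          ((w ω' * ∏ j, F ω' (pts j) ^ 2) / (∑ ω'', w ω'' * ∏ j, F ω'' (pts j) ^ 2)) *
          eip (fun u => F ω u ^ 2) (fun u => F ω' u ^ 2)
        ≥ (∑ ω, ∑ ω', w ω * w ω' *
            (eip (fun u => F ω u ^ 2) (fun u => F ω' u ^ 2)) ^ r) ^ ((r : ℝ)⁻¹) := by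
  have h := main_aux r hr w hw hw1 (fun ω u => F ω u ^ 2) (fun ω u => sq_nonneg _)
    (by simpa only [Sfun, Efun, eip] using hpos)
  simpa only [Sfun, Mfun, Efun, Tfun, eip] using h
end

section
/- Let U be a finite nonempty set, let 0 < ε ≤ 1/400, let Π be an orthogonal projection on ℝ^U with respect to the expectation inner product, and let f : U → {0,1} satisfy Pr_{u∈U}[f(u) = 1] = μ and ‖Πf‖₂² ≥ (1−ε)·μ. Then there exists a function g : U → ℝ such that (1) ‖g‖₄⁴ ≥ μ/32, and (2) (Πf)(u)² ≥ |g(u)|/2 for every u ∈ U. -/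
/-- **Truncation** (Lemma 4.8).
Let `0 < ε ≤ 1/400`, let `Π` be an orthogonal projection on `ℝ^U` (for the
expectation inner product), and let `f : U → {0,1}` with `Pr_u[f(u) = 1] = μ` and
`‖Πf‖₂² ≥ (1−ε)·μ`.  Then there is `g : U → ℝ` with `‖g‖₄⁴ ≥ μ/32` and
`(Πf)(u)² ≥ |g(u)|/2` for all `u`. -/
theorem truncation
    (U : Type) [Fintype U] [Nonempty U]
    (ε : ℝ) (hε0 : 0 < ε) (hε : ε ≤ 1 / 400)
    (Pi : (U → ℝ) →ₗ[ℝ] (U → ℝ))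
    (hidem : ∀ f, Pi (Pi f) = Pi f)
    (hselfadj : ∀ f g, eip (Pi f) g = eip f (Pi g))
    (f : U → ℝ) (hf01 : ∀ u, f u = 0 ∨ f u = 1)
    (μ : ℝ) (hμ : μ = (Fintype.card U : ℝ)⁻¹ * ∑ u, f u)
    (hproj : (Fintype.card U : ℝ)⁻¹ * ∑ u, (Pi f u) ^ 2 ≥ (1 - ε) * μ) :
    ∃ g : U → ℝ,
      (Fintype.card U : ℝ)⁻¹ * ∑ u, g u ^ 4 ≥ μ / 32 ∧
      ∀ u, (Pi f u) ^ 2 ≥ |g u| / 2 := by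
  classical
  set h : U → ℝ := Pi f with hh
  have hcard : (0:ℝ) < (Fintype.card U : ℝ) := by
    exact_mod_cast Fintype.card_pos
  set c : ℝ := (Fintype.card U : ℝ)⁻¹ with hc
  have hcpos : 0 < c := by positivity
  have hmu0 : 0 ≤ μ := by
    rw [hμ]
    apply mul_nonneg hcpos.le
    apply Finset.sum_nonneg
    intro u _
    rcases hf01 u with h0 | h0 <;> simp [h0]
  -- ⟨h,h⟩ = ⟨f,h⟩
  have hA : c * ∑ u, h u * h u = c * ∑ u, f u * h u := by
    have := hselfadj f (Pi f)
    rw [hidem] at this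
    simpa [eip, hc, hh] using this
  -- ‖f - h‖² ≤ ε μ
  have hfh : c * ∑ u, (f u - h u) ^ 2 ≤ ε * μ := by
    have expand : ∑ u, (f u - h u) ^ 2
        = ∑ u, f u * f u - 2 * ∑ u, f u * h u + ∑ u, h u * h u := by
      calc ∑ u, (f u - h u) ^ 2
          = ∑ u, (f u * f u - 2 * (f u * h u) + h u * h u) := by
            apply Finset.sum_congr rfl; intro u _; ring
        _ = _ := by
            rw [Finset.sum_add_distrib, Finset.sum_sub_distrib, ← Finset.mul_sum]
    have hff : ∑ u, f u * f u = ∑ u, f u := by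
      apply Finset.sum_congr rfl
      intro u _
      rcases hf01 u with h0 | h0 <;> simp [h0]
    have hsq : ∑ u, h u * h u = ∑ u, h u ^ 2 := by
      apply Finset.sum_congr rfl; intro u _; ring
    have hproj' : c * ∑ u, h u * h u ≥ (1 - ε) * μ := by
      rw [hsq]; exact hproj
    have : c * ∑ u, (f u - h u) ^ 2
        = c * ∑ u, f u - 2 * (c * ∑ u, f u * h u) + c * ∑ u, h u * h u := by
      rw [expand, hff]; ring
    rw [this, ← hA, ← hμ]
    nlinarith
  refine ⟨fun u => if (1:ℝ)/2 ≤ h u then 2 * (h u) ^ 2 else 0, ?_, ?_⟩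
  · -- pointwise inequality
    have point : ∀ u, (if (1:ℝ)/2 ≤ h u then 2 * (h u) ^ 2 else 0) ^ 4
        ≥ (1/16) * f u - 2 * (f u - h u) ^ 2 := by
      intro u
      rcases hf01 u with h0 | h1
      · rw [h0]
        split_ifs with hcond
        · nlinarith [sq_nonneg (h u), sq_nonneg ((h u) ^ 2), sq_nonneg ((h u) ^ 4)]
        · nlinarith [sq_nonneg (h u)]
      · rw [h1]
        split_ifs with hcond
        · have h2 : (1:ℝ)/4 ≤ (h u) ^ 2 := by nlinarith
          have h4 : (1:ℝ)/16 ≤ (h u) ^ 4 := by nlinarith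
          have h8 : (1:ℝ)/256 ≤ (h u) ^ 8 := by nlinarith
          nlinarith [sq_nonneg (1 - h u)]
        · nlinarith [sq_nonneg (1 - h u)]
    have hsum : c * ∑ u, ((1/16) * f u - 2 * (f u - h u) ^ 2)
        ≤ c * ∑ u, (if (1:ℝ)/2 ≤ h u then 2 * (h u) ^ 2 else 0) ^ 4 := by
      apply mul_le_mul_of_nonneg_left _ hcpos.le
      exact Finset.sum_le_sum (fun u _ => point u)
    have hsplit : c * ∑ u, ((1/16) * f u - 2 * (f u - h u) ^ 2)
        = (1/16) * (c * ∑ u, f u) - 2 * (c * ∑ u, (f u - h u) ^ 2) := by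
      rw [Finset.sum_sub_distrib, ← Finset.mul_sum, ← Finset.mul_sum]
      ring
    rw [hsplit, ← hμ] at hsum
    calc μ / 32 ≤ (1/16) * μ - 2 * (ε * μ) := by nlinarith
    _ ≤ (1/16) * μ - 2 * (c * ∑ u, (f u - h u) ^ 2) := by linarith
    _ ≤ _ := hsum
  · intro u
    dsimp only
    split_ifs with hcond
    · rw [abs_of_nonneg (by positivity)]
      linarith [sq_nonneg (h u)]
    · simp [sq_nonneg (h u)]
end

section
/- Let U be a finite nonempty set, and equip ℝ^U with the expectation inner product and norms. Let V' ⊆ ℝ^U be a linear subspace such that ‖g‖₄ ≤ c‖g‖₂ for every g ∈ V', and let f₀ ∈ ℝ^U be orthogonal to V' with ‖f₀‖₂ = 1 and ‖f₀‖₄ = C, where 0 ≤ 100c < C. Then every f in the span of V' ∪ {f₀} with ‖f‖₂ = 1 and ‖f‖₄ ≥ C satisfies ⟨f, f₀⟩² ≥ 1 − 2c/C. -/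
/-- The expectation `L²` norm on `ℝ^U`. -/
noncomputable def enorm2 {U : Type} [Fintype U] (f : U → ℝ) : ℝ :=
  Real.sqrt ((Fintype.card U : ℝ)⁻¹ * ∑ u, f u ^ 2)

/-- The expectation `L⁴` norm on `ℝ^U`. -/
noncomputable def enorm4 {U : Type} [Fintype U] (f : U → ℝ) : ℝ :=
  ((Fintype.card U : ℝ)⁻¹ * ∑ u, f u ^ 4) ^ ((1 : ℝ) / 4)

lemma abs_rpow_four (x : ℝ) : |x| ^ (4 : ℝ) = x ^ 4 := by
  rw [show (4:ℝ) = ((4:ℕ):ℝ) by norm_num, Real.rpow_natCast, ← abs_pow,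
    abs_of_nonneg (by positivity)]

lemma enorm4_add_le {U : Type} [Fintype U] (f g : U → ℝ) :
    enorm4 (f + g) ≤ enorm4 f + enorm4 g := by
  have key := Real.Lp_add_le (Finset.univ) f g (by norm_num : (1:ℝ) ≤ 4)
  simp only [abs_rpow_four] at key
  unfold enorm4
  simp only [Pi.add_apply]
  have h1 : (0:ℝ) ≤ (Fintype.card U : ℝ)⁻¹ := by positivity
  have hA : (0:ℝ) ≤ ∑ u, (f u + g u) ^ 4 := by positivity
  have hB : (0:ℝ) ≤ ∑ u, f u ^ 4 := by positivity
  have hC : (0:ℝ) ≤ ∑ u, g u ^ 4 := by positivity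
  rw [Real.mul_rpow h1 hA, Real.mul_rpow h1 hB, Real.mul_rpow h1 hC, ← mul_add]
  have := mul_le_mul_of_nonneg_left key (Real.rpow_nonneg h1 ((1:ℝ)/4))
  simpa [Pi.add_apply] using this

lemma enorm4_smul {U : Type} [Fintype U] (a : ℝ) (f : U → ℝ) :
    enorm4 (a • f) = |a| * enorm4 f := by
  unfold enorm4
  have h : ∑ u, (a • f) u ^ 4 = a ^ 4 * ∑ u, f u ^ 4 := by
    rw [Finset.mul_sum]; apply Finset.sum_congr rfl; intro u _
    simp [Pi.smul_apply, smul_eq_mul]; ring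
  rw [h, show (Fintype.card U : ℝ)⁻¹ * (a ^ 4 * ∑ u, f u ^ 4)
      = a ^ 4 * ((Fintype.card U : ℝ)⁻¹ * ∑ u, f u ^ 4) by ring,
    Real.mul_rpow (by positivity) (by positivity)]
  congr 1
  rw [← abs_rpow_four a, ← Real.rpow_mul (abs_nonneg a)]
  norm_num

/-- (Lemma 5.6.)  Let `V'` be a subspace of `ℝ^U` with `‖g‖₄ ≤ c‖g‖₂` for all
`g ∈ V'`, and let `f₀ ⊥ V'` with `‖f₀‖₂ = 1`, `‖f₀‖₄ = C` and `0 ≤ 100c < C`.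
Then every `f ∈ span(V' ∪ {f₀})` with `‖f‖₂ = 1` and `‖f‖₄ ≥ C` satisfies
`⟨f, f₀⟩² ≥ 1 − 2c/C` (expectation norms and inner product). -/
theorem approx_recovery
    (U : Type) [Fintype U] [Nonempty U]
    (V' : Submodule ℝ (U → ℝ)) (c C : ℝ) (hc : 0 ≤ c) (hcC : 100 * c < C)
    (hV' : ∀ g ∈ V', enorm4 g ≤ c * enorm2 g)
    (f₀ : U → ℝ)
    (horth : ∀ g ∈ V', eip f₀ g = 0)
    (hf₀2 : enorm2 f₀ = 1) (hf₀4 : enorm4 f₀ = C)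
    (f : U → ℝ) (hfV : f ∈ V' ⊔ Submodule.span ℝ {f₀})
    (hf2 : enorm2 f = 1) (hf4 : C ≤ enorm4 f) :
    1 - 2 * c / C ≤ (eip f f₀) ^ 2 := by
  obtain ⟨g, hg, h, hh, rfl⟩ := Submodule.mem_sup.mp hfV
  obtain ⟨α, rfl⟩ := Submodule.mem_span_singleton.mp hh
  set n : ℝ := (Fintype.card U : ℝ) with hndef
  have hn : (0:ℝ) < n := by
    simpa [hndef] using (Nat.cast_pos.mpr Fintype.card_pos : (0:ℝ) < Fintype.card U)
  have hC : (0:ℝ) < C := lt_of_le_of_lt (by linarith) hcC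
  -- orthogonality
  have hip0 : ∑ u, g u * f₀ u = 0 := by
    have h0 := horth g hg
    unfold eip at h0
    have : ∑ u, f₀ u * g u = 0 := by
      rcases mul_eq_zero.mp h0 with h1 | h1
      · exact absurd h1 (inv_ne_zero hn.ne')
      · exact h1
    calc ∑ u, g u * f₀ u = ∑ u, f₀ u * g u := by
          apply Finset.sum_congr rfl; intro u _; ring
      _ = 0 := this
  -- squared norms
  have hf₀sq : n⁻¹ * ∑ u, f₀ u ^ 2 = 1 := by
    have hX : (0:ℝ) ≤ n⁻¹ * ∑ u, f₀ u ^ 2 := by positivity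
    unfold enorm2 at hf₀2
    nlinarith [Real.sq_sqrt hX, hf₀2]
  have hf2sq : n⁻¹ * ∑ u, (g u + α * f₀ u) ^ 2 = 1 := by
    have hX : (0:ℝ) ≤ n⁻¹ * ∑ u, (g + α • f₀) u ^ 2 := by positivity
    unfold enorm2 at hf2
    have := Real.sq_sqrt hX
    rw [hf2] at this
    simpa [Pi.add_apply, Pi.smul_apply, smul_eq_mul] using this.symm
  -- the inner product equals α
  have heip : eip (g + α • f₀) f₀ = α := by
    unfold eip
    have hexp : ∑ u, (g + α • f₀) u * f₀ u
        = (∑ u, g u * f₀ u) + α * ∑ u, f₀ u ^ 2 := by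
      rw [Finset.mul_sum, ← Finset.sum_add_distrib]
      apply Finset.sum_congr rfl; intro u _
      simp [Pi.add_apply, Pi.smul_apply, smul_eq_mul]; ring
    rw [hexp, hip0, zero_add, mul_comm α, ← mul_assoc, hf₀sq, one_mul]
  rw [heip]
  -- Pythagoras
  have hpyth : n⁻¹ * (∑ u, g u ^ 2) + α ^ 2 = 1 := by
    have hexp : ∑ u, (g u + α * f₀ u) ^ 2
        = (∑ u, g u ^ 2) + 2 * α * (∑ u, g u * f₀ u) + α ^ 2 * ∑ u, f₀ u ^ 2 := by
      rw [Finset.mul_sum, Finset.mul_sum, ← Finset.sum_add_distrib, ← Finset.sum_add_distrib]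
      apply Finset.sum_congr rfl; intro u _; ring
    rw [hexp, hip0] at hf2sq
    have : n⁻¹ * (∑ u, g u ^ 2) + α ^ 2 * (n⁻¹ * ∑ u, f₀ u ^ 2) = 1 := by
      rw [← hf2sq]; ring
    rw [hf₀sq] at this; linarith
  have hgsq_nonneg : (0:ℝ) ≤ n⁻¹ * ∑ u, g u ^ 2 := by positivity
  have hg2 : enorm2 g ≤ 1 := by
    unfold enorm2
    rw [show (1:ℝ) = Real.sqrt 1 by simp]
    exact Real.sqrt_le_sqrt (by linarith [sq_nonneg α])
  have hg4 : enorm4 g ≤ c := by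
    have h1 := hV' g hg
    have h2 : c * enorm2 g ≤ c := by nlinarith
    linarith
  -- triangle inequality
  have htri : enorm4 (g + α • f₀) ≤ c + |α| * C := by
    calc enorm4 (g + α • f₀) ≤ enorm4 g + enorm4 (α • f₀) := enorm4_add_le g (α • f₀)
      _ = enorm4 g + |α| * C := by rw [enorm4_smul, hf₀4]
      _ ≤ c + |α| * C := by linarith
  have hαC : C - c ≤ |α| * C := by linarith [hf4.trans htri]
  have h1 : 1 - c / C ≤ |α| := by
    have hd : (C - c) / C ≤ |α| := (div_le_iff₀ hC).mpr hαC
    calc 1 - c / C = (C - c) / C := by field_simp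
      _ ≤ |α| := hd
  have h0 : 0 ≤ 1 - c / C := by
    have : c / C ≤ 1 := by rw [div_le_one hC]; linarith
    linarith
  have h2 : 2 * c / C = 2 * (c / C) := by ring
  nlinarith [sq_abs α, h1, h0, sq_nonneg (c / C)]
end

section
/- Let U be a finite nonempty set with |U| = n, and equip ℝ^U with the expectation inner product and norms. Let V' ⊆ ℝ^U be a linear subspace and let f₀ ∈ ℝ^U be nonzero with support S of size |S| = μ·n for some μ ∈ (0,1]; set V = span(V' ∪ {f₀}). Let α > 0, η ≥ 0 and 0 ≤ ε < 1, let f ∈ ℝ^U be nonzero, and suppose: (a) ‖f'‖₂ ≤ α·‖f'‖₁ for every f' ∈ V'; (b) ⟨f₀, f⟩ ≥ (1−ε)·‖f₀‖₂·‖f‖₂; (c) ⟨f', f⟩ ≤ η·‖f'‖₂·‖f‖₂ for every f' ∈ V'. If η/(1−ε) < 1/(α·√μ) − 2, then ⟨f₀, f⟩ > 0 and f₀/⟨f₀, f⟩ is the unique minimizer of ‖y‖₁ over all y ∈ V with ⟨y, f⟩ = 1; that is, every y ∈ V with ⟨y,f⟩ = 1 and y ≠ f₀/⟨f₀,f⟩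 satisfies ‖y‖₁ > ‖f₀/⟨f₀,f⟩‖₁. -/
/-- The expectation `L¹` norm on `ℝ^U`. -/
noncomputable def enorm1 {U : Type} [Fintype U] (f : U → ℝ) : ℝ :=
  (Fintype.card U : ℝ)⁻¹ * ∑ u, |f u|

section helpers
variable {U : Type} [Fintype U] [Nonempty U]

lemma ncard_pos' : (0:ℝ) < (Fintype.card U : ℝ) := by
  exact_mod_cast Fintype.card_pos

lemma enorm1_nonneg (g : U → ℝ) : 0 ≤ enorm1 g := by
  unfold enorm1
  positivity

lemma enorm2_nonneg (g : U → ℝ) : 0 ≤ enorm2 g := Real.sqrt_nonneg _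

lemma enorm1_pos {g : U → ℝ} (hg : g ≠ 0) : 0 < enorm1 g := by
  obtain ⟨u, hu⟩ := Function.ne_iff.mp hg
  unfold enorm1
  have h1 : 0 < ∑ u, |g u| :=
    Finset.sum_pos' (fun i _ => abs_nonneg _) ⟨u, Finset.mem_univ u, abs_pos.mpr hu⟩
  have := @ncard_pos' U _ _
  positivity

lemma enorm2_pos {g : U → ℝ} (hg : g ≠ 0) : 0 < enorm2 g := by
  obtain ⟨u, hu⟩ := Function.ne_iff.mp hg
  unfold enorm2
  have h1 : 0 < ∑ u, g u ^ 2 :=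
    Finset.sum_pos' (fun i _ => sq_nonneg _) ⟨u, Finset.mem_univ u, pow_pos (abs_pos.mpr hu) 2 |>.trans_eq (by rw [sq_abs])⟩
  have := @ncard_pos' U _ _
  positivity

lemma enorm1_smul (c : ℝ) (g : U → ℝ) : enorm1 (c • g) = |c| * enorm1 g := by
  unfold enorm1
  simp only [Pi.smul_apply, smul_eq_mul, abs_mul, ← Finset.mul_sum]
  ring

lemma eip_add_smul (a f₀ f : U → ℝ) (t : ℝ) :
    eip (a + t • f₀) f = eip a f + t * eip f₀ f := by
  unfold eip
  have h : ∀ u, (a + t • f₀) u * f u = a u * f u + t * (f₀ u * f u) := fun u => by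
    simp only [Pi.add_apply, Pi.smul_apply, smul_eq_mul]; ring
  rw [Finset.sum_congr rfl (fun u _ => h u), Finset.sum_add_distrib, ← Finset.mul_sum]
  ring

lemma cs_support (S : Finset U) (g : U → ℝ) (μ : ℝ) (hμ : 0 ≤ μ)
    (hcard : (S.card : ℝ) = μ * Fintype.card U) :
    (Fintype.card U : ℝ)⁻¹ * ∑ u ∈ S, |g u| ≤ Real.sqrt μ * enorm2 g := by
  set n : ℝ := (Fintype.card U : ℝ) with hn
  have hn0 : 0 < n := ncard_pos'
  have hL : 0 ≤ n⁻¹ * ∑ u ∈ S, |g u| := by positivity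
  rw [enorm2, ← Real.sqrt_mul hμ, Real.le_sqrt hL (by positivity)]
  have cs := Finset.sum_mul_sq_le_sq_mul_sq S (fun _ => (1:ℝ)) (fun u => |g u|)
  simp only [one_mul, one_pow, sq_abs, Finset.sum_const, nsmul_eq_mul, mul_one] at cs
  have hsub : ∑ u ∈ S, g u ^ 2 ≤ ∑ u, g u ^ 2 :=
    Finset.sum_le_sum_of_subset_of_nonneg (Finset.subset_univ S) (fun i _ _ => sq_nonneg _)
  have hB : (0:ℝ) ≤ ∑ u ∈ S, g u ^ 2 := Finset.sum_nonneg fun i _ => sq_nonneg _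
  have hinv : n⁻¹ * n = 1 := inv_mul_cancel₀ hn0.ne'
  rw [hcard] at cs
  have hμn : 0 ≤ μ * n⁻¹ := by positivity
  calc (n⁻¹ * ∑ u ∈ S, |g u|) ^ 2 = n⁻¹ ^ 2 * (∑ u ∈ S, |g u|) ^ 2 := by ring
    _ ≤ n⁻¹ ^ 2 * (μ * n * ∑ u ∈ S, g u ^ 2) := by
        apply mul_le_mul_of_nonneg_left cs (by positivity)
    _ = μ * (n⁻¹ * ∑ u ∈ S, g u ^ 2) * (n⁻¹ * n) := by ring
    _ = μ * (n⁻¹ * ∑ u ∈ S, g u ^ 2) := by rw [hinv, mul_one]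
    _ ≤ μ * (n⁻¹ * ∑ u, g u ^ 2) := by
        apply mul_le_mul_of_nonneg_left _ hμ
        apply mul_le_mul_of_nonneg_left hsub (by positivity)

lemma l1_lower (f₀ a : U → ℝ) (t : ℝ) (S : Finset U) (hS : ∀ u, u ∉ S → f₀ u = 0) :
    |t| * (∑ u, |f₀ u|) + ∑ u, |a u| - 2 * ∑ u ∈ S, |a u| ≤ ∑ u, |(a + t • f₀) u| := by
  classical
  have hf0 : ∑ u, |f₀ u| = ∑ u ∈ S, |f₀ u| := by
    refine (Finset.sum_subset (Finset.subset_univ S) fun u _ hu => by rw [hS u hu]; simp).symm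
  have hsplit : ∀ g : U → ℝ, ∑ u ∈ Finset.univ \ S, g u + ∑ u ∈ S, g u = ∑ u, g u :=
    fun g => Finset.sum_sdiff (Finset.subset_univ S)
  have h1 : ∑ u ∈ Finset.univ \ S, |(a + t • f₀) u| = ∑ u ∈ Finset.univ \ S, |a u| := by
    refine Finset.sum_congr rfl fun u hu => ?_
    rw [Finset.mem_sdiff] at hu
    simp [hS u hu.2]
  have h2 : |t| * ∑ u ∈ S, |f₀ u| - ∑ u ∈ S, |a u| ≤ ∑ u ∈ S, |(a + t • f₀) u| := by
    rw [Finset.mul_sum, ← Finset.sum_sub_distrib]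
    refine Finset.sum_le_sum fun u _ => ?_
    have : |t * f₀ u| ≤ |a u + t * f₀ u| + |a u| := by
      have := abs_add_le (a u + t * f₀ u) (-(a u)); simpa [add_assoc] using this
    simp only [Pi.add_apply, Pi.smul_apply, smul_eq_mul]
    rw [← abs_mul]
    linarith [this]
  have e1 := hsplit (fun u => |(a + t • f₀) u|)
  have e2 := hsplit (fun u => |a u|)
  have hf0' : |t| * ∑ u, |f₀ u| = |t| * ∑ u ∈ S, |f₀ u| := by rw [hf0]
  linarith [h2, h1, e1, e2, hf0']

end helpers

/-- **Exact recovery** (Theorem 5.4).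
Let `V = span(V' ∪ {f₀})` where `f₀ ≠ 0` is `μ`-sparse (`|supp f₀| = μ·n`).  Suppose
(a) `‖f'‖₂ ≤ α‖f'‖₁` on `V'`, (b) `⟨f₀,f⟩ ≥ (1−ε)‖f₀‖₂‖f‖₂`, and
(c) `⟨f',f⟩ ≤ η‖f'‖₂‖f‖₂` on `V'`.  If `η/(1−ε) < 1/(α√μ) − 2`, then `⟨f₀,f⟩ > 0`
and `f₀/⟨f₀,f⟩` is the unique minimizer of `‖y‖₁` over `y ∈ V` with `⟨y,f⟩ = 1`. -/
theorem exact_recovery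
    (U : Type) [Fintype U] [Nonempty U]
    (V' : Submodule ℝ (U → ℝ)) (f₀ : U → ℝ) (hf₀ : f₀ ≠ 0)
    (μ : ℝ) (hμ0 : 0 < μ) (hμ1 : μ ≤ 1)
    (hsupp : ((Function.support f₀).ncard : ℝ) = μ * Fintype.card U)
    (α η ε : ℝ) (hα : 0 < α) (hη : 0 ≤ η) (hε0 : 0 ≤ ε) (hε1 : ε < 1)
    (f : U → ℝ) (hf : f ≠ 0)
    (hL21 : ∀ f' ∈ V', enorm2 f' ≤ α * enorm1 f')
    (hcorr : eip f₀ f ≥ (1 - ε) * enorm2 f₀ * enorm2 f)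
    (huncorr : ∀ f' ∈ V', eip f' f ≤ η * enorm2 f' * enorm2 f)
    (hcond : η / (1 - ε) < 1 / (α * Real.sqrt μ) - 2) :
    0 < eip f₀ f ∧
    ∀ y ∈ V' ⊔ Submodule.span ℝ {f₀}, eip y f = 1 →
      y ≠ (eip f₀ f)⁻¹ • f₀ → enorm1 ((eip f₀ f)⁻¹ • f₀) < enorm1 y := by
  classical
  have hN2 : 0 < enorm2 f₀ := enorm2_pos hf₀
  have hF2 : 0 < enorm2 f := enorm2_pos hf
  have hε' : 0 < 1 - ε := by linarith
  set c := eip f₀ f with hc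
  have hcpos : 0 < c := lt_of_lt_of_le (by positivity) hcorr
  refine ⟨hcpos, ?_⟩
  intro y hy hyf hne
  obtain ⟨a, ha, b, hb, hab⟩ := Submodule.mem_sup.mp hy
  obtain ⟨t, rfl⟩ := Submodule.mem_span_singleton.mp hb
  subst hab
  rw [eip_add_smul, ← hc] at hyf
  -- the sparsity parameter
  set P := α * Real.sqrt μ with hP
  have hsμ : 0 < Real.sqrt μ := Real.sqrt_pos.mpr hμ0
  have hPpos : 0 < P := mul_pos hα hsμ
  have h2P : 2 * P < 1 := by
    have h0 : (0:ℝ) ≤ η / (1 - ε) := div_nonneg hη hε'.le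
    have : 2 < 1 / P := by linarith
    have := (lt_div_iff₀ hPpos).mp this
    linarith
  have hcond' : η * P < (1 - ε) * (1 - 2 * P) := by
    have h1 : η < (1 / P - 2) * (1 - ε) := (div_lt_iff₀ hε').mp hcond
    have h2 := mul_lt_mul_of_pos_right h1 hPpos
    have hPP : 1 / P * P = 1 := div_mul_cancel₀ 1 hPpos.ne'
    nlinarith [h2, hPP]
  -- the support finset
  set n : ℝ := (Fintype.card U : ℝ) with hn
  have hn0 : 0 < n := ncard_pos'
  set S : Finset U := Finset.univ.filter (fun u => f₀ u ≠ 0) with hSdef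
  have hS : ∀ u ∉ S, f₀ u = 0 := by
    intro u hu
    by_contra h
    exact hu (Finset.mem_filter.mpr ⟨Finset.mem_univ u, h⟩)
  have hcardS : (S.card : ℝ) = μ * n := by
    rw [← hsupp]
    congr 1
    rw [show Function.support f₀ = (↑S : Set U) by ext u; simp [hSdef, Function.mem_support]]
    rw [Set.ncard_coe_finset]
  clear_value c P S
  -- basic norm facts
  have hN1le : enorm1 f₀ ≤ Real.sqrt μ * enorm2 f₀ := by
    have hsum : ∑ u, |f₀ u| = ∑ u ∈ S, |f₀ u| :=
      (Finset.sum_subset (Finset.subset_univ S) fun u _ hu => by rw [hS u hu]; simp).symm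
    have := cs_support S f₀ μ hμ0.le hcardS
    unfold enorm1
    rw [hsum]
    exact this
  have hN1nn : 0 ≤ enorm1 f₀ := enorm1_nonneg f₀
  -- split on whether a = 0
  by_cases ha0 : a = 0
  · exfalso
    apply hne
    have he0 : eip a f = 0 := by simp [eip, ha0]
    have ht : t = c⁻¹ := by
      rw [he0, zero_add] at hyf
      exact eq_inv_of_mul_eq_one_left hyf
    rw [ha0, zero_add, ht]
  · -- main case
    have hA1 : 0 < enorm1 a := enorm1_pos ha0
    have hA2 : enorm2 a ≤ α * enorm1 a := hL21 a ha
    have hcs_a := cs_support S a μ hμ0.le hcardS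
    have hQ : n⁻¹ * ∑ u ∈ S, |a u| ≤ P * enorm1 a := by
      calc n⁻¹ * ∑ u ∈ S, |a u| ≤ Real.sqrt μ * enorm2 a := hcs_a
        _ ≤ Real.sqrt μ * (α * enorm1 a) :=
            mul_le_mul_of_nonneg_left hA2 hsμ.le
        _ = P * enorm1 a := by rw [hP]; ring
    have hlow : |t| * enorm1 f₀ + enorm1 a - 2 * (n⁻¹ * ∑ u ∈ S, |a u|)
        ≤ enorm1 (a + t • f₀) := by
      have h := mul_le_mul_of_nonneg_left (l1_lower f₀ a t S hS) (inv_nonneg.mpr hn0.le)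
      unfold enorm1
      rw [← hn]
      ring_nf at h ⊢
      linarith [h]
    -- the inner product constraint
    have heipa : eip a f ≤ η * (α * enorm1 a) * enorm2 f := by
      calc eip a f ≤ η * enorm2 a * enorm2 f := huncorr a ha
        _ ≤ η * (α * enorm1 a) * enorm2 f := by
            apply mul_le_mul_of_nonneg_right _ hF2.le
            exact mul_le_mul_of_nonneg_left hA2 hη
    have htc : 1 - η * α * enorm1 a * enorm2 f ≤ t * c := by linarith [heipa, hyf]
    -- key scalar inequality
    have s4 : η * α * enorm2 f * enorm1 f₀ < (1 - 2 * P) * c := by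
      have u1 : η * α * enorm2 f * enorm1 f₀ ≤ η * P * (enorm2 f * enorm2 f₀) := by
        rw [hP]
        have := mul_le_mul_of_nonneg_left hN1le
          (mul_nonneg (mul_nonneg hη hα.le) hF2.le)
        linarith [this]
      have u2 : η * P * (enorm2 f * enorm2 f₀) * (1 - ε) ≤ η * P * c := by
        have h2 : (1 - ε) * enorm2 f₀ * enorm2 f ≤ c := hcorr
        linarith [mul_le_mul_of_nonneg_left h2 (mul_nonneg hη hPpos.le)]
      have u3 : η * P * c < (1 - ε) * (1 - 2 * P) * c :=
        mul_lt_mul_of_pos_right hcond' hcpos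
      have u4 : (1 - ε) * (η * α * enorm2 f * enorm1 f₀) < (1 - ε) * ((1 - 2 * P) * c) := by
        linarith [mul_le_mul_of_nonneg_right u1 hε'.le, u2, u3]
      exact lt_of_mul_lt_mul_left u4 hε'.le
    have key1 : c⁻¹ * enorm1 f₀ < t * enorm1 f₀ + (1 - 2 * P) * enorm1 a := by
      rw [inv_mul_eq_div, div_lt_iff₀ hcpos]
      have p1 : (1 - η * α * enorm1 a * enorm2 f) * enorm1 f₀ ≤ (t * c) * enorm1 f₀ :=
        mul_le_mul_of_nonneg_right htc hN1nn
      have p2 : (η * α * enorm2 f * enorm1 f₀) * enorm1 a < ((1 - 2 * P) * c) * enorm1 a :=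
        mul_lt_mul_of_pos_right s4 hA1
      linarith [p1, p2]
    -- conclude
    rw [enorm1_smul, abs_of_pos (inv_pos.mpr hcpos)]
    calc c⁻¹ * enorm1 f₀ < t * enorm1 f₀ + (1 - 2 * P) * enorm1 a := key1
      _ ≤ |t| * enorm1 f₀ + (1 - 2 * P) * enorm1 a := by
          linarith [mul_le_mul_of_nonneg_right (le_abs_self t) hN1nn]
      _ ≤ |t| * enorm1 f₀ + enorm1 a - 2 * (n⁻¹ * ∑ u ∈ S, |a u|) := by
          linarith [hQ]
      _ ≤ enorm1 (a + t • f₀) := hlow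
end

section
/- Let P : ℝⁿ → ℝ be a homogeneous polynomial of degree 4 and let c ∈ ℝ. Then the following are equivalent: (i) there exists a symmetric n²×n² real matrix M such that (x⊗x)ᵀM(x⊗x) = P(x) for all x ∈ ℝⁿ and all eigenvalues of M are at most c (equivalently, cI − M is positive semidefinite); (ii) there exist finitely many real polynomials R₁,…,R_m on ℝⁿ, each of degree at most 2, such that P(x) = c·(Σᵢ xᵢ²)² − Σⱼ Rⱼ(x)² for all x ∈ ℝⁿ. -/
open MvPolynomial Finset

section aux

variable {n : ℕ}

/-- A finsupp of total weight 2 is a sum of two singles. -/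
lemma exists_pair_of_weight_two {d : Fin n →₀ ℕ} (hd : (Finsupp.weight 1) d = 2) :
    ∃ i k : Fin n, d = Finsupp.single i 1 + Finsupp.single k 1 := by
  classical
  have hdeg : d.degree = 2 := by rw [Finsupp.degree_eq_weight_one]; exact hd
  have hcard : Multiset.card d.toMultiset = 2 := by
    rw [Finsupp.card_toMultiset]
    simpa [Finsupp.degree_apply, Finsupp.sum] using hdeg
  obtain ⟨i, k, hik⟩ := Multiset.card_eq_two.mp hcard
  refine ⟨i, k, ?_⟩
  have h2 := congrArg Multiset.toFinsupp hik
  rw [Finsupp.toMultiset_toFinsupp] at h2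
  rw [h2]
  have : ({i, k} : Multiset (Fin n)) = {i} + {k} := by
    rw [Multiset.singleton_add]
    rfl
  rw [this, map_add, Multiset.toFinsupp_singleton, Multiset.toFinsupp_singleton]

lemma pair_eq {a b i k : Fin n}
    (h : Finsupp.single a 1 + Finsupp.single b 1 = Finsupp.single i 1 + Finsupp.single k 1) :
    (a = i ∧ b = k) ∨ (a = k ∧ b = i) := by
  classical
  have h2 := congrArg Finsupp.toMultiset h
  simp only [map_add, Finsupp.toMultiset_single, one_smul] at h2
  rw [Multiset.singleton_add, Multiset.singleton_add, Multiset.cons_eq_cons] at h2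
  rcases h2 with ⟨h1, h2⟩ | ⟨hne, cs, h1, h2⟩
  · left
    exact ⟨h1, by simpa using h2⟩
  · right
    have hcs : cs = 0 := by
      have := congrArg Multiset.card h1
      simpa using this
    subst hcs
    have hb : b = i := by simpa using h1
    have hk : k = a := by simpa using h2
    exact ⟨hk.symm, hb⟩

end aux


section quad

variable {n : ℕ}

/-- Evaluation of a homogeneous quadratic polynomial as a quadratic form in the
pair monomials. -/
lemma eval_homog_two (q : MvPolynomial (Fin n) ℝ) (hq : q.IsHomogeneous 2) (x : Fin n → ℝ) :
    eval x q = ∑ p : Fin n × Fin n,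
      ((if p.1 = p.2 then (1:ℝ) else 2⁻¹)
          * coeff (Finsupp.single p.1 1 + Finsupp.single p.2 1) q) * (x p.1 * x p.2) := by
  classical
  set g : Fin n × Fin n → ℝ := fun p =>
    ((if p.1 = p.2 then (1:ℝ) else 2⁻¹)
        * coeff (Finsupp.single p.1 1 + Finsupp.single p.2 1) q) * (x p.1 * x p.2) with hg
  rw [eval_eq]
  have step : ∀ p : Fin n × Fin n, g p = ∑ d ∈ q.support,
      if Finsupp.single p.1 1 + Finsupp.single p.2 1 = d then g p else 0 := by
    intro p
    rw [Finset.sum_ite_eq q.support (Finsupp.single p.1 1 + Finsupp.single p.2 1) (fun _ => g p)]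
    by_cases h : Finsupp.single p.1 1 + Finsupp.single p.2 1 ∈ q.support
    · simp [h]
    · have hc : coeff (Finsupp.single p.1 1 + Finsupp.single p.2 1) q = 0 :=
        notMem_support_iff.mp h
      simp [h, hg, hc]
  rw [show (∑ p : Fin n × Fin n, g p)
      = ∑ p : Fin n × Fin n, ∑ d ∈ q.support,
          (if Finsupp.single p.1 1 + Finsupp.single p.2 1 = d then g p else 0) from
    Finset.sum_congr rfl (fun p _ => step p)]
  rw [Finset.sum_comm]
  refine Finset.sum_congr rfl (fun d hd => ?_)
  obtain ⟨i, k, rfl⟩ := exists_pair_of_weight_two (hq (mem_support_iff.mp hd))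
  have hcond : ∀ p : Fin n × Fin n,
      (Finsupp.single p.1 1 + Finsupp.single p.2 1
        = Finsupp.single i 1 + Finsupp.single k 1) ↔ (p = (i,k) ∨ p = (k,i)) := by
    intro p
    constructor
    · intro h
      rcases pair_eq h with ⟨h1, h2⟩ | ⟨h1, h2⟩
      · left; exact Prod.ext h1 h2
      · right; exact Prod.ext h1 h2
    · rintro (rfl | rfl)
      · rfl
      · exact add_comm _ _
  have hprod : ∏ t ∈ (Finsupp.single i 1 + Finsupp.single k 1 : Fin n →₀ ℕ).support,
      x t ^ ((Finsupp.single i 1 + Finsupp.single k 1 : Fin n →₀ ℕ) t) = x i * x k := by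
    have hrw : ∀ f : Fin n →₀ ℕ, (∏ t ∈ f.support, x t ^ f t) = f.prod fun t e => x t ^ e :=
      fun f => rfl
    rw [hrw, Finsupp.prod_add_index (by intros; simp) (by intros; rw [pow_add]),
      Finsupp.prod_single_index (by simp), Finsupp.prod_single_index (by simp), pow_one, pow_one]
  simp_rw [hcond]
  by_cases hik : i = k
  · subst hik
    rw [show (∑ p : Fin n × Fin n, if p = (i,i) ∨ p = (i,i) then g p else 0)
        = ∑ p : Fin n × Fin n, if p = (i,i) then g p else 0 from by simp only [or_self],
      Finset.sum_ite_eq' Finset.univ ((i,i) : Fin n × Fin n) g]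
    simp only [Finset.mem_univ, if_true]
    rw [hprod, hg]
    simp
  · have hne : ((i,k) : Fin n × Fin n) ≠ (k,i) := by
      simp [Prod.ext_iff, hik]
    have hset : ∀ p : Fin n × Fin n, (p = (i,k) ∨ p = (k,i)) ↔
        p ∈ ({(i,k), (k,i)} : Finset (Fin n × Fin n)) := by
      intro p; simp
    simp_rw [hset]
    rw [Finset.sum_ite_mem, Finset.univ_inter, Finset.sum_pair hne, hprod, hg]
    have hcoeff : coeff (Finsupp.single k 1 + Finsupp.single i 1) q
        = coeff (Finsupp.single i 1 + Finsupp.single k 1) q := by rw [add_comm]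
    simp only [hik, Ne.symm hik, if_false]
    rw [hcoeff]
    ring

end quad

section sums

lemma sum_squares_pairs {n : ℕ} (x : Fin n → ℝ) :
    ∑ p : Fin n × Fin n, (x p.1 * x p.2) ^ 2 = (∑ i, x i ^ 2) ^ 2 := by
  rw [sq (∑ i, x i ^ 2), Finset.sum_mul_sum, Fintype.sum_prod_type]
  exact Finset.sum_congr rfl fun i _ => Finset.sum_congr rfl fun k _ => by ring

lemma sum_delta_form {κ : Type*} [Fintype κ] [DecidableEq κ] (c : ℝ) (y : κ → ℝ) :
    ∑ p : κ, ∑ q : κ,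
      y p * (c * (if p = q then (1:ℝ) else 0)) * y q = c * ∑ p : κ, (y p) ^ 2 := by
  rw [Finset.mul_sum]
  refine Finset.sum_congr rfl fun p _ => ?_
  rw [Finset.sum_eq_single p]
  · simp; ring
  · intro q _ hq; simp [Ne.symm hq]
  · simp

lemma sum_gram_form {ι κ : Type*} [Fintype ι] [Fintype κ] (b : ι → κ → ℝ) (y : κ → ℝ) :
    ∑ p : κ, ∑ q : κ,
      y p * (∑ j, b j p * b j q) * y q = ∑ j, (∑ p : κ, b j p * y p) ^ 2 := by
  have h1 : ∀ p q : κ, y p * (∑ j, b j p * b j q) * y q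
      = ∑ j, (b j p * y p) * (b j q * y q) := by
    intro p q
    rw [Finset.mul_sum, Finset.sum_mul]
    exact Finset.sum_congr rfl fun j _ => by ring
  calc ∑ p : κ, ∑ q : κ, y p * (∑ j, b j p * b j q) * y q
      = ∑ p : κ, ∑ q : κ, ∑ j, (b j p * y p) * (b j q * y q) :=
        Finset.sum_congr rfl fun p _ => Finset.sum_congr rfl fun q _ => h1 p q
    _ = ∑ p : κ, ∑ j, ∑ q : κ, (b j p * y p) * (b j q * y q) :=
        Finset.sum_congr rfl fun p _ => Finset.sum_comm
    _ = ∑ j, ∑ p : κ, ∑ q : κ, (b j p * y p) * (b j q * y q) :=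
        Finset.sum_comm
    _ = ∑ j, (∑ p : κ, b j p * y p) ^ 2 := by
        refine Finset.sum_congr rfl fun j _ => ?_
        rw [sq, Finset.sum_mul_sum]

lemma totalDegree_CXX {n : ℕ} (b : ℝ) (i k : Fin n) :
    (C b * (X i * X k) : MvPolynomial (Fin n) ℝ).totalDegree ≤ 2 := by
  refine le_trans (totalDegree_mul _ _) ?_
  have h2 : (X i * X k : MvPolynomial (Fin n) ℝ).totalDegree ≤ 2 := by
    refine le_trans (totalDegree_mul _ _) ?_
    simp [totalDegree_X]
  simpa [totalDegree_C] using h2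

end sums

section homog

lemma hc_mul_homog {n : ℕ} {p r : MvPolynomial (Fin n) ℝ} {s t m : ℕ}
    (hp : p.IsHomogeneous s) (hr : r.IsHomogeneous t) :
    homogeneousComponent m (p * r) = if m = s + t then p * r else 0 :=
  homogeneousComponent_of_mem (by rw [mem_homogeneousSubmodule]; exact hp.mul hr)

lemma hc4_sq {n : ℕ} (R : MvPolynomial (Fin n) ℝ) (hdeg : R.totalDegree ≤ 2) :
    homogeneousComponent 4 (R ^ 2) = (homogeneousComponent 2 R) ^ 2 := by
  set a := homogeneousComponent 0 R with ha
  set l := homogeneousComponent 1 R with hl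
  set q := homogeneousComponent 2 R with hq
  have h0 : a.IsHomogeneous 0 := homogeneousComponent_isHomogeneous 0 R
  have h1 : l.IsHomogeneous 1 := homogeneousComponent_isHomogeneous 1 R
  have h2 : q.IsHomogeneous 2 := homogeneousComponent_isHomogeneous 2 R
  have hsplit : R = a + l + q := by
    have hsum := sum_homogeneousComponent R
    have hsub : Finset.range (R.totalDegree + 1) ⊆ Finset.range 3 :=
      Finset.range_subset_range.mpr (by omega)
    rw [Finset.sum_subset hsub (fun i _ hi => homogeneousComponent_eq_zero i R
      (by simp only [Finset.mem_range] at hi ⊢; omega))] at hsum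
    rw [← hsum]
    simp only [Finset.sum_range_succ, Finset.sum_range_zero, zero_add]
    rfl
  have expand : R ^ 2 = a*a + (a*l + (a*q + (l*a + (l*l + (l*q + (q*a + (q*l + q*q))))))) := by
    rw [hsplit]; ring
  rw [expand]
  simp only [map_add]
  rw [hc_mul_homog h0 h0, hc_mul_homog h0 h1, hc_mul_homog h0 h2, hc_mul_homog h1 h0,
    hc_mul_homog h1 h1, hc_mul_homog h1 h2, hc_mul_homog h2 h0, hc_mul_homog h2 h1,
    hc_mul_homog h2 h2]
  norm_num [sq]

end homog


/-- **Spectral norm and SOS proofs** (Lemma A.12).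
For a homogeneous degree-4 polynomial `P` on `ℝⁿ` and `c ∈ ℝ`, the following are
equivalent: (i) there is a symmetric `n²×n²` matrix `M` with
`(x⊗x)ᵀM(x⊗x) = P(x)` for all `x` and `cI − M` positive semidefinite;
(ii) there are polynomials `R₁,…,R_m` of degree at most 2 with
`P(x) = c·(Σᵢ xᵢ²)² − Σⱼ Rⱼ(x)²` for all `x ∈ ℝⁿ`. -/
theorem spectral_norm_sos
    (n : ℕ) (P : MvPolynomial (Fin n) ℝ) (hP : P.IsHomogeneous 4) (c : ℝ) :
    (∃ M : Matrix (Fin n × Fin n) (Fin n × Fin n) ℝ, M.IsSymm ∧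
        (∀ x : Fin n → ℝ,
          ∑ p : Fin n × Fin n, ∑ q : Fin n × Fin n,
            (x p.1 * x p.2) * M p q * (x q.1 * x q.2) = MvPolynomial.eval x P) ∧
        (c • (1 : Matrix (Fin n × Fin n) (Fin n × Fin n) ℝ) - M).PosSemidef)
    ↔ (∃ (m : ℕ) (R : Fin m → MvPolynomial (Fin n) ℝ),
        (∀ j, (R j).totalDegree ≤ 2) ∧
        ∀ x : Fin n → ℝ,
          MvPolynomial.eval x P
            = c * (∑ i, x i ^ 2) ^ 2 - ∑ j, (MvPolynomial.eval x (R j)) ^ 2) := by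
  classical
  constructor
  · rintro ⟨M, _hsymm, hform, hpsd⟩
    open scoped MatrixOrder in
    obtain ⟨B, hB⟩ := CStarAlgebra.nonneg_iff_eq_star_mul_self.mp hpsd.nonneg
    rw [Matrix.star_eq_conjTranspose] at hB
    let e : Fin n × Fin n ≃ Fin (n * n) := finProdFinEquiv
    refine ⟨n * n, fun j => ∑ p : Fin n × Fin n, C (B (e.symm j) p) * (X p.1 * X p.2), ?_, ?_⟩
    · intro j
      refine le_trans (totalDegree_finset_sum _ _) ?_
      exact Finset.sup_le fun p _ => totalDegree_CXX _ _ _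
    · intro x
      set y : Fin n × Fin n → ℝ := fun p => x p.1 * x p.2 with hy
      have heval : ∀ j : Fin (n * n),
          eval x (∑ p : Fin n × Fin n, C (B (e.symm j) p) * (X p.1 * X p.2))
            = ∑ p : Fin n × Fin n, B (e.symm j) p * y p := by
        intro j
        simp [hy]
      have hMentry : ∀ p q : Fin n × Fin n,
          M p q = c * (if p = q then (1:ℝ) else 0) - ∑ j, B j p * B j q := by
        intro p q
        have h := congrFun (congrFun hB p) q
        simp only [Matrix.sub_apply, Matrix.smul_apply, Matrix.one_apply, Matrix.mul_apply,
          Matrix.conjTranspose_apply, star_trivial, smul_eq_mul] at h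
        linarith
      rw [← hform x]
      have hsplit : ∀ p q : Fin n × Fin n,
          y p * M p q * y q
            = y p * (c * (if p = q then (1:ℝ) else 0)) * y q
              - y p * (∑ j, B j p * B j q) * y q := by
        intro p q; rw [hMentry p q]; ring
      calc ∑ p : Fin n × Fin n, ∑ q : Fin n × Fin n, y p * M p q * y q
          = (∑ p : Fin n × Fin n, ∑ q : Fin n × Fin n,
              y p * (c * (if p = q then (1:ℝ) else 0)) * y q)
            - ∑ p : Fin n × Fin n, ∑ q : Fin n × Fin n,
                y p * (∑ j, B j p * B j q) * y q := by
            rw [← Finset.sum_sub_distrib]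
            refine Finset.sum_congr rfl fun p _ => ?_
            rw [← Finset.sum_sub_distrib]
            exact Finset.sum_congr rfl fun q _ => hsplit p q
        _ = c * (∑ i, x i ^ 2) ^ 2 - ∑ j, (eval x
              (∑ p : Fin n × Fin n, C (B (e.symm j) p) * (X p.1 * X p.2))) ^ 2 := by
            rw [sum_delta_form, sum_gram_form (b := B)]
            congr 1
            · rw [show (∑ p : Fin n × Fin n, y p ^ 2) = (∑ i, x i ^ 2) ^ 2 from
                sum_squares_pairs x]
            · rw [← Equiv.sum_comp e.symm
                (fun j' => (∑ p : Fin n × Fin n, B j' p * y p) ^ 2)]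
              exact Finset.sum_congr rfl fun j _ => by rw [heval j]
  · rintro ⟨m, R, hdeg, hval⟩
    -- polynomial identity
    have hQ : (C c * (∑ i, X i ^ 2) ^ 2 - P : MvPolynomial (Fin n) ℝ) = ∑ j, (R j) ^ 2 := by
      apply MvPolynomial.funext
      intro x
      have h := hval x
      simp only [map_sub, map_mul, eval_C, map_pow, map_sum, eval_X]
      rw [h]; ring
    have hQhom : (C c * (∑ i, X i ^ 2) ^ 2 - P : MvPolynomial (Fin n) ℝ).IsHomogeneous 4 := by
      refine IsHomogeneous.sub ?_ hP
      have hS : (∑ i : Fin n, (X i : MvPolynomial (Fin n) ℝ) ^ 2).IsHomogeneous 2 :=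
        IsHomogeneous.sum _ _ _ (fun i _ => isHomogeneous_X_pow _ _)
      simpa using (isHomogeneous_C (Fin n) c).mul (hS.pow 2)
    set q : Fin m → MvPolynomial (Fin n) ℝ := fun j => homogeneousComponent 2 (R j) with hq
    have hqhom : ∀ j, (q j).IsHomogeneous 2 := fun j => homogeneousComponent_isHomogeneous 2 _
    have key : (C c * (∑ i, X i ^ 2) ^ 2 - P : MvPolynomial (Fin n) ℝ) = ∑ j, (q j) ^ 2 := by
      have h4 : homogeneousComponent 4 (C c * (∑ i, X i ^ 2) ^ 2 - P : MvPolynomial (Fin n) ℝ)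
          = C c * (∑ i, X i ^ 2) ^ 2 - P := by
        rw [homogeneousComponent_of_mem ((mem_homogeneousSubmodule _ _).mpr hQhom)]
        simp
      calc (C c * (∑ i, X i ^ 2) ^ 2 - P : MvPolynomial (Fin n) ℝ)
          = homogeneousComponent 4 (C c * (∑ i, X i ^ 2) ^ 2 - P : MvPolynomial (Fin n) ℝ) :=
            h4.symm
        _ = homogeneousComponent 4 (∑ j, (R j) ^ 2) := by rw [hQ]
        _ = ∑ j, homogeneousComponent 4 ((R j) ^ 2) := by rw [map_sum]
        _ = ∑ j, (q j) ^ 2 := Finset.sum_congr rfl fun j _ => hc4_sq (R j) (hdeg j)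
    -- evaluation form with homogeneous quadratics
    have hval' : ∀ x : Fin n → ℝ,
        eval x P = c * (∑ i, x i ^ 2) ^ 2 - ∑ j, (eval x (q j)) ^ 2 := by
      intro x
      have h := congrArg (eval x) key
      simp only [map_sub, map_mul, eval_C, map_pow, map_sum, eval_X] at h
      linarith
    -- coefficients
    set b : Fin m → (Fin n × Fin n) → ℝ := fun j p =>
      (if p.1 = p.2 then (1:ℝ) else 2⁻¹)
        * coeff (Finsupp.single p.1 1 + Finsupp.single p.2 1) (q j) with hb
    have hevalq : ∀ j (x : Fin n → ℝ),
        eval x (q j) = ∑ p : Fin n × Fin n, b j p * (x p.1 * x p.2) := fun j x =>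
      eval_homog_two (q j) (hqhom j) x
    set A : Matrix (Fin n × Fin n) (Fin n × Fin n) ℝ :=
      Matrix.of (fun p q' => ∑ j, b j p * b j q') with hA
    refine ⟨c • (1 : Matrix (Fin n × Fin n) (Fin n × Fin n) ℝ) - A, ?_, ?_, ?_⟩
    · -- symmetry
      unfold Matrix.IsSymm
      rw [Matrix.transpose_sub, Matrix.transpose_smul, Matrix.transpose_one]
      congr 1
      ext p q'
      simp only [Matrix.transpose_apply, hA, Matrix.of_apply]
      exact Finset.sum_congr rfl fun j _ => mul_comm _ _
    · -- quadratic form equals P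
      intro x
      set y : Fin n × Fin n → ℝ := fun p => x p.1 * x p.2 with hy
      have hentry : ∀ p q' : Fin n × Fin n,
          (c • (1 : Matrix (Fin n × Fin n) (Fin n × Fin n) ℝ) - A) p q'
            = c * (if p = q' then (1:ℝ) else 0) - ∑ j, b j p * b j q' := by
        intro p q'
        simp [hA, Matrix.sub_apply, Matrix.smul_apply, Matrix.one_apply, smul_eq_mul]
      calc ∑ p : Fin n × Fin n, ∑ q' : Fin n × Fin n,
            y p * (c • (1 : Matrix (Fin n × Fin n) (Fin n × Fin n) ℝ) - A) p q' * y q'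
          = (∑ p : Fin n × Fin n, ∑ q' : Fin n × Fin n,
              y p * (c * (if p = q' then (1:ℝ) else 0)) * y q')
            - ∑ p : Fin n × Fin n, ∑ q' : Fin n × Fin n,
                y p * (∑ j, b j p * b j q') * y q' := by
            rw [← Finset.sum_sub_distrib]
            refine Finset.sum_congr rfl fun p _ => ?_
            rw [← Finset.sum_sub_distrib]
            refine Finset.sum_congr rfl fun q' _ => ?_
            rw [hentry p q']; ring
        _ = c * (∑ i, x i ^ 2) ^ 2 - ∑ j, (eval x (q j)) ^ 2 := by
            rw [sum_delta_form, sum_gram_form, sum_squares_pairs]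
            congr 1
            exact Finset.sum_congr rfl fun j _ => by rw [hevalq j x]
        _ = eval x P := (hval' x).symm
    · -- PSD
      have hsub : c • (1 : Matrix (Fin n × Fin n) (Fin n × Fin n) ℝ)
          - (c • (1 : Matrix (Fin n × Fin n) (Fin n × Fin n) ℝ) - A) = A := by
        rw [sub_sub_cancel]
      rw [hsub, Matrix.posSemidef_iff_dotProduct_mulVec]
      constructor
      · -- Hermitian
        ext p q'
        simp only [Matrix.conjTranspose_apply, star_trivial, hA, Matrix.of_apply]
        exact Finset.sum_congr rfl fun j _ => mul_comm _ _
      · intro z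
        have hz : dotProduct (star z) (A.mulVec z)
            = ∑ p : Fin n × Fin n, ∑ q' : Fin n × Fin n, z p * (∑ j, b j p * b j q') * z q' := by
          simp only [dotProduct, Matrix.mulVec, Pi.star_apply,
            star_trivial, hA, Matrix.of_apply]
          refine Finset.sum_congr rfl fun p _ => ?_
          rw [Finset.mul_sum]
          exact Finset.sum_congr rfl fun q' _ => by ring
        rw [hz, sum_gram_form]
        exact Finset.sum_nonneg fun j _ => sq_nonneg _
end

section
/- Let n ≥ 1 and let G be an n×n real symmetric matrix with nonnegative entries each of whose rows sums to 1 (the normalized adjacency matrix of a regular graph on a vertex set V with |V| = n). Let λ ∈ (0,1) and let q ≥ 2 be a real number. Equip ℝ^V with the expectation inner product and norms, let V_{≥λ} be the sum of the eigenspaces of G for eigenvalues at least λ, let P_{≥λ} be the orthogonal projection onto V_{≥λ}, and let ‖P_{≥λ}‖_{q/(q−1)→2} = sup{ ‖P_{≥λ}y‖₂ : y ∈ ℝ^V, ‖y‖_{q/(q−1)} ≤ 1 }. Then for every nonempty subset S ⊆ V with μ(S) = |S|/n and indicator function 1_S, one has 1 − ⟨1_S, G·1_S⟩/μ(S) ≥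 1 − λ − ‖P_{≥λ}‖²_{q/(q−1)→2} · μ(S)^{(q−2)/q}. -/
open scoped RealInnerProductSpace

private lemma nbie_spectral_bound (n : ℕ) (G : Matrix (Fin n) (Fin n) ℝ) (hH : G.IsHermitian)
    (hsym' : ∀ a b, G a b = G b a)
    (lam : ℝ) (x : Fin n → ℝ)
    (hx : ∀ i, lam ≤ hH.eigenvalues i → ∑ v, (hH.eigenvectorBasis i) v * x v = 0) :
    ∑ v, x v * (G.mulVec x) v ≤ lam * ∑ v, x v ^ 2 := by
  set b := hH.eigenvectorBasis with hb
  set μ := hH.eigenvalues with hμ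
  set c : Fin n → ℝ := fun i => ∑ v, b i v * x v with hc
  have hexp : ∀ v, x v = ∑ i, c i * b i v := by
    intro v
    have h1 : ∀ i, ⟪b i, (WithLp.toLp 2 x)⟫ = c i := by
      intro i; simp [PiLp.inner_apply, RCLike.inner_apply, hc, mul_comm]
    have : (WithLp.toLp 2 x) v
        = ∑ i, (⟪b i, (WithLp.toLp 2 x)⟫) * (b i v) := by
      conv_lhs => rw [← b.sum_repr (WithLp.toLp 2 x)]
      rw [WithLp.ofLp_sum, Finset.sum_apply]
      refine Finset.sum_congr rfl fun i _ => ?_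
      rw [b.repr_apply_apply]
      rfl
    simpa [h1] using this
  have key : ∀ i, ∑ v, b i v * (G.mulVec x) v = μ i * c i := by
    intro i
    have hev := congrFun (hH.mulVec_eigenvectorBasis i)
    calc ∑ v, b i v * (G.mulVec x) v
        = ∑ v, ∑ j, G v j * x j * b i v := by
          refine Finset.sum_congr rfl fun v _ => ?_
          show b i v * ∑ j, G v j * x j = _
          rw [Finset.mul_sum]
          exact Finset.sum_congr rfl fun j _ => by ring
      _ = ∑ j, (∑ v, G j v * b i v) * x j := by
          rw [Finset.sum_comm]
          refine Finset.sum_congr rfl fun j _ => ?_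
          rw [Finset.sum_mul]
          refine Finset.sum_congr rfl fun v _ => ?_
          rw [hsym' j v]
          ring
      _ = ∑ j, (μ i * b i j) * x j := by
          refine Finset.sum_congr rfl fun j _ => ?_
          congr 1
          have := hev j
          simpa [Matrix.mulVec, dotProduct] using this
      _ = μ i * c i := by rw [hc, Finset.mul_sum]; exact Finset.sum_congr rfl fun j _ => by ring
  have hS1 : ∑ v, x v * (G.mulVec x) v = ∑ i, c i * (μ i * c i) := by
    calc ∑ v, x v * (G.mulVec x) v
        = ∑ v, ∑ i, c i * b i v * (G.mulVec x) v := by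
          refine Finset.sum_congr rfl fun v _ => ?_
          rw [hexp v, Finset.sum_mul]
      _ = ∑ i, c i * ∑ v, b i v * (G.mulVec x) v := by
          rw [Finset.sum_comm]
          exact Finset.sum_congr rfl fun i _ => by
            rw [Finset.mul_sum]; exact Finset.sum_congr rfl fun v _ => by ring
      _ = ∑ i, c i * (μ i * c i) :=
          Finset.sum_congr rfl fun i _ => by rw [key i]
  have hS2 : ∑ v, x v ^ 2 = ∑ i, c i * c i := by
    calc ∑ v, x v ^ 2 = ∑ v, ∑ i, c i * b i v * x v := by
          refine Finset.sum_congr rfl fun v _ => ?_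
          have : x v ^ 2 = (∑ i, c i * b i v) * x v := by rw [← hexp v]; ring
          rw [this, Finset.sum_mul]
      _ = ∑ i, c i * ∑ v, b i v * x v := by
          rw [Finset.sum_comm]
          exact Finset.sum_congr rfl fun i _ => by
            rw [Finset.mul_sum]; exact Finset.sum_congr rfl fun v _ => by ring
      _ = ∑ i, c i * c i := rfl
  rw [hS1, hS2, Finset.mul_sum]
  refine Finset.sum_le_sum fun i _ => ?_
  rcases le_or_gt lam (μ i) with h | h
  · have hc0 : c i = 0 := hx i h
    rw [hc0]; simp
  · have hcc : 0 ≤ c i * c i := mul_self_nonneg _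
    nlinarith [hcc, h]

private lemma nbie_quad_le (n : ℕ) (G : Matrix (Fin n) (Fin n) ℝ)
    (hsym' : ∀ a b, G a b = G b a)
    (hnonneg : ∀ i j, 0 ≤ G i j) (hrow : ∀ i, ∑ j, G i j = 1)
    (x : Fin n → ℝ) :
    ∑ v, x v * (G.mulVec x) v ≤ ∑ v, x v ^ 2 := by
  have h1 : ∑ v, x v * (G.mulVec x) v = ∑ v, ∑ j, G v j * (x v * x j) := by
    refine Finset.sum_congr rfl fun v _ => ?_
    show x v * ∑ j, G v j * x j = _
    rw [Finset.mul_sum]; exact Finset.sum_congr rfl fun j _ => by ring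
  have h2 : ∑ v, ∑ j, G v j * (x v * x j) ≤ ∑ v, ∑ j, G v j * ((x v ^ 2 + x j ^ 2) / 2) := by
    refine Finset.sum_le_sum fun v _ => Finset.sum_le_sum fun j _ => ?_
    refine mul_le_mul_of_nonneg_left ?_ (hnonneg v j)
    nlinarith [sq_nonneg (x v - x j)]
  have h3 : ∑ v, ∑ j, G v j * ((x v ^ 2 + x j ^ 2) / 2) = ∑ v, x v ^ 2 := by
    have e1 : ∀ v j : Fin n, G v j * ((x v ^ 2 + x j ^ 2) / 2)
        = G v j * x v ^ 2 / 2 + G v j * x j ^ 2 / 2 := fun v j => by ring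
    simp only [e1, Finset.sum_add_distrib]
    have t1 : ∑ v, ∑ j, G v j * x v ^ 2 / 2 = ∑ v, x v ^ 2 / 2 := by
      refine Finset.sum_congr rfl fun v _ => ?_
      rw [show ∑ j, G v j * x v ^ 2 / 2 = (∑ j, G v j) * (x v ^ 2 / 2) by
        rw [Finset.sum_mul]; exact Finset.sum_congr rfl fun j _ => by ring]
      rw [hrow v]; ring
    have t2 : ∑ v, ∑ j, G v j * x j ^ 2 / 2 = ∑ j, x j ^ 2 / 2 := by
      rw [Finset.sum_comm]
      refine Finset.sum_congr rfl fun j _ => ?_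
      rw [show ∑ v, G v j * x j ^ 2 / 2 = (∑ v, G j v) * (x j ^ 2 / 2) by
        rw [Finset.sum_mul]; exact Finset.sum_congr rfl fun v _ => by rw [hsym' v j]; ring]
      rw [hrow j]; ring
    rw [t1, t2, ← Finset.sum_add_distrib]
    exact Finset.sum_congr rfl fun v _ => by ring
  linarith [h1 ▸ h2, h3]

private lemma nbie_swap_sum (n : ℕ) (G : Matrix (Fin n) (Fin n) ℝ)
    (hsym' : ∀ a b, G a b = G b a) (a c : Fin n → ℝ) :
    ∑ v, a v * (G.mulVec c) v = ∑ v, c v * (G.mulVec a) v := by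
  have e : ∀ (a c : Fin n → ℝ),
      ∑ v, a v * (G.mulVec c) v = ∑ v, ∑ j, G v j * a v * c j := by
    intro a c
    refine Finset.sum_congr rfl fun v _ => ?_
    show a v * ∑ j, G v j * c j = _
    rw [Finset.mul_sum]; exact Finset.sum_congr rfl fun j _ => by ring
  rw [e, e, Finset.sum_comm]
  exact Finset.sum_congr rfl fun j _ => Finset.sum_congr rfl fun v _ => by rw [hsym' j v]; ring

private lemma nbie_mem_Vge (n : ℕ) (G : Matrix (Fin n) (Fin n) ℝ) (lam : ℝ)
    (Vge : Submodule ℝ (Fin n → ℝ))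
    (hVge : Vge = ⨆ (t : ℝ) (_ : lam ≤ t),
      Module.End.eigenspace (Matrix.mulVecLin G) t)
    (f : Fin n → ℝ) (hf : f ∈ Vge) : G.mulVec f ∈ Vge := by
  have hmap : Submodule.map (Matrix.mulVecLin G) Vge ≤ Vge := by
    rw [hVge, Submodule.map_iSup]
    refine iSup_le fun t => ?_
    rw [Submodule.map_iSup]
    refine iSup_le fun ht => ?_
    refine le_trans ?_ (le_iSup₂_of_le t ht le_rfl)
    rintro y ⟨z, hz, rfl⟩
    rw [SetLike.mem_coe] at hz
    rw [Module.End.mem_eigenspace_iff] at hz ⊢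
    rw [hz, map_smul, hz]
  have : G.mulVec f = Matrix.mulVecLin G f := by simp
  rw [this]
  exact hmap ⟨f, hf, rfl⟩

/-- **Norm bound implies small-set expansion** (Lemma D.3). -/
theorem norm_bound_implies_expansion
    (n : ℕ) (hn : 1 ≤ n)
    (G : Matrix (Fin n) (Fin n) ℝ) (hsymm : G.IsSymm)
    (hnonneg : ∀ i j, 0 ≤ G i j) (hrow : ∀ i, ∑ j, G i j = 1)
    (lam : ℝ) (hlam : lam ∈ Set.Ioo (0 : ℝ) 1) (q : ℝ) (hq : 2 ≤ q)
    (Vge : Submodule ℝ (Fin n → ℝ))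
    (hVge : Vge = ⨆ (t : ℝ) (_ : lam ≤ t),
      Module.End.eigenspace (Matrix.mulVecLin G) t)
    (P : (Fin n → ℝ) →ₗ[ℝ] (Fin n → ℝ))
    (hPmem : ∀ f, P f ∈ Vge)
    (hPid : ∀ f ∈ Vge, P f = f)
    (hPorth : ∀ f : Fin n → ℝ, ∀ g ∈ Vge,
      (n : ℝ)⁻¹ * ∑ v, (f v - P f v) * g v = 0)
    (Pnorm : ℝ)
    (hPnorm : Pnorm = sSup {z : ℝ | ∃ y : Fin n → ℝ,
        ((n : ℝ)⁻¹ * ∑ v, |y v| ^ (q / (q - 1))) ^ ((q - 1) / q) ≤ 1 ∧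
        z = Real.sqrt ((n : ℝ)⁻¹ * ∑ v, (P y v) ^ 2)})
    (S : Finset (Fin n)) (hS : S.Nonempty) :
    1 - ((n : ℝ)⁻¹ * ∑ v, (if v ∈ S then (1 : ℝ) else 0) *
          (G.mulVec (fun u => if u ∈ S then (1 : ℝ) else 0)) v) / ((S.card : ℝ) / n)
      ≥ 1 - lam - Pnorm ^ 2 * (((S.card : ℝ) / n) ^ ((q - 2) / q)) := by
  classical
  obtain ⟨hlam0, hlam1⟩ := hlam
  have hn0 : (0:ℝ) < n := by exact_mod_cast hn
  have hn1 : (1:ℝ) ≤ n := by exact_mod_cast hn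
  have hninv : (0:ℝ) < (n:ℝ)⁻¹ := by positivity
  have hq0 : (0:ℝ) < q := by linarith
  have hq1 : (0:ℝ) < q - 1 := by linarith
  have hsym' : ∀ a b, G a b = G b a := fun a b => (congrFun (congrFun hsymm b) a)
  have hH : G.IsHermitian := by
    rwa [Matrix.IsHermitian, Matrix.conjTranspose_eq_transpose_of_trivial]
  obtain ⟨q', hq'def⟩ : ∃ q' : ℝ, q' = q / (q - 1) := ⟨_, rfl⟩
  obtain ⟨p, hpdef⟩ : ∃ p : ℝ, p = (q - 1) / q := ⟨_, rfl⟩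
  rw [← hq'def, ← hpdef] at hPnorm
  have hq'0 : 0 < q' := by rw [hq'def]; positivity
  have hp0 : 0 < p := by rw [hpdef]; positivity
  have hp1 : p ≤ 1 := by rw [hpdef, div_le_one hq0]; linarith
  have hq'p : q' * p = 1 := by rw [hq'def, hpdef]; field_simp
  obtain ⟨f, hfdef⟩ : ∃ f : Fin n → ℝ, f = fun v => if v ∈ S then (1:ℝ) else 0 := ⟨_, rfl⟩
  obtain ⟨μ, hμdef⟩ : ∃ μ : ℝ, μ = (S.card : ℝ) / n := ⟨_, rfl⟩
  have hgsum : ∑ v, (if v ∈ S then (1 : ℝ) else 0) *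
      (G.mulVec (fun u => if u ∈ S then (1 : ℝ) else 0)) v
      = ∑ v, f v * (G.mulVec f) v := by rw [hfdef]
  rw [hgsum, ← hμdef]
  have hcard : 0 < (S.card : ℝ) := by exact_mod_cast Finset.card_pos.mpr hS
  have hμ : 0 < μ := by rw [hμdef]; exact div_pos hcard hn0
  obtain ⟨N, hNdef⟩ : ∃ N : ℝ, N = μ ^ p := ⟨_, rfl⟩
  have hN : 0 < N := by rw [hNdef]; exact Real.rpow_pos_of_pos hμ p
  obtain ⟨f', hf'def⟩ : ∃ f' : Fin n → ℝ, f' = P f := ⟨_, rfl⟩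
  obtain ⟨f'', hf''def⟩ : ∃ f'' : Fin n → ℝ, f'' = fun v => f v - f' v := ⟨_, rfl⟩
  have horthsum : ∀ g ∈ Vge, ∑ v, f'' v * g v = 0 := by
    intro g hg
    have h := hPorth f g hg
    have h2 := (mul_eq_zero.mp h).resolve_left (ne_of_gt hninv)
    calc ∑ v, f'' v * g v = ∑ v, (f v - P f v) * g v := by
          simp only [hf''def, hf'def]
      _ = 0 := h2
  obtain ⟨Z, hZdef⟩ : ∃ Z : Set ℝ, Z = {z : ℝ | ∃ y : Fin n → ℝ,
      ((n : ℝ)⁻¹ * ∑ v, |y v| ^ q') ^ p ≤ 1 ∧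
      z = Real.sqrt ((n : ℝ)⁻¹ * ∑ v, (P y v) ^ 2)} := ⟨_, rfl⟩
  rw [← hZdef] at hPnorm
  have hZbdd : BddAbove Z := by
    refine ⟨Real.sqrt ((n : ℝ)⁻¹ * ∑ v, (∑ u, (n:ℝ) *
      |P (fun j => if u = j then (1:ℝ) else 0) v|) ^ 2), ?_⟩
    rw [hZdef]
    rintro z ⟨y, hy1, rfl⟩
    have hA : (n:ℝ)⁻¹ * ∑ v, |y v| ^ q' ≤ 1 := by
      by_contra h
      push_neg at h
      have h2 : (1:ℝ) < ((n:ℝ)⁻¹ * ∑ v, |y v| ^ q') ^ p := by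
        rw [Real.one_lt_rpow_iff_of_pos (by linarith)]
        exact Or.inl ⟨h, hp0⟩
      linarith
    have hyb : ∀ u, |y u| ≤ (n:ℝ) := by
      intro u
      have h1 : |y u| ^ q' ≤ (n:ℝ) := by
        have hs : (n:ℝ)⁻¹ * |y u| ^ q' ≤ (n:ℝ)⁻¹ * ∑ v, |y v| ^ q' := by
          refine mul_le_mul_of_nonneg_left ?_ (le_of_lt hninv)
          exact Finset.single_le_sum (fun v _ => Real.rpow_nonneg (abs_nonneg _) _)
            (Finset.mem_univ u)
        have h2 : (n:ℝ)⁻¹ * |y u| ^ q' ≤ 1 := le_trans hs hA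
        calc |y u| ^ q' = (n:ℝ) * ((n:ℝ)⁻¹ * |y u| ^ q') := by field_simp
          _ ≤ (n:ℝ) * 1 := mul_le_mul_of_nonneg_left h2 (le_of_lt hn0)
          _ = n := mul_one _
      have h3 : |y u| = (|y u| ^ q') ^ (1/q') := by
        rw [← Real.rpow_mul (abs_nonneg _), mul_one_div, div_self (ne_of_gt hq'0),
          Real.rpow_one]
      rw [h3]
      calc (|y u| ^ q') ^ (1/q') ≤ (n:ℝ) ^ (1/q') :=
            Real.rpow_le_rpow (Real.rpow_nonneg (abs_nonneg _) _) h1 (by positivity)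
        _ ≤ (n:ℝ) ^ (1:ℝ) := by
            refine Real.rpow_le_rpow_of_exponent_le hn1 ?_
            rw [div_le_one hq'0, hq'def, le_div_iff₀ hq1]
            linarith
        _ = n := Real.rpow_one _
    refine Real.sqrt_le_sqrt ?_
    refine mul_le_mul_of_nonneg_left ?_ (le_of_lt hninv)
    refine Finset.sum_le_sum fun v _ => ?_
    have hyv : |P y v| ≤ ∑ u, (n:ℝ) * |P (fun j => if u = j then (1:ℝ) else 0) v| := by
      have hyexp : P y = ∑ u, y u • P (fun j => if u = j then (1:ℝ) else 0) := by
        conv_lhs => rw [pi_eq_sum_univ y]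
        rw [map_sum]
        exact Finset.sum_congr rfl fun u _ => by rw [map_smul]
      rw [hyexp, Finset.sum_apply]
      refine le_trans (Finset.abs_sum_le_sum_abs _ _) (Finset.sum_le_sum fun u _ => ?_)
      rw [Pi.smul_apply, smul_eq_mul, abs_mul]
      exact mul_le_mul_of_nonneg_right (hyb u) (abs_nonneg _)
    calc (P y v) ^ 2 = |P y v| ^ 2 := (sq_abs _).symm
      _ ≤ (∑ u, (n:ℝ) * |P (fun j => if u = j then (1:ℝ) else 0) v|) ^ 2 :=
          pow_le_pow_left₀ (abs_nonneg _) hyv 2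
  obtain ⟨D, hDdef⟩ : ∃ D : ℝ, D = (n:ℝ)⁻¹ * ∑ v, f' v ^ 2 := ⟨_, rfl⟩
  have hD0 : 0 ≤ D := by
    rw [hDdef]
    exact mul_nonneg (le_of_lt hninv) (Finset.sum_nonneg fun v _ => sq_nonneg _)
  have hz0mem : N⁻¹ * Real.sqrt D ∈ Z := by
    rw [hZdef]
    refine ⟨N⁻¹ • f, ?_, ?_⟩
    · have hsum : ∑ v, |(N⁻¹ • f) v| ^ q' = N⁻¹ ^ q' * S.card := by
        have per : ∀ v, |(N⁻¹ • f) v| ^ q'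
            = N⁻¹ ^ q' * (if v ∈ S then (1:ℝ) else 0) := by
          intro v
          have hv1 : (N⁻¹ • f) v = N⁻¹ * f v := rfl
          rw [hv1, abs_mul, Real.mul_rpow (abs_nonneg _) (abs_nonneg _),
            abs_of_pos (inv_pos.mpr hN)]
          congr 1
          by_cases hv : v ∈ S
          · simp [hfdef, hv, Real.one_rpow]
          · simp [hfdef, hv, Real.zero_rpow (ne_of_gt hq'0)]
        rw [Finset.sum_congr rfl fun v _ => per v, ← Finset.mul_sum]
        congr 1
        simp
      rw [hsum]
      have he : (n:ℝ)⁻¹ * (N⁻¹ ^ q' * S.card) = N⁻¹ ^ q' * μ := by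
        rw [hμdef]; ring
      rw [he, Real.mul_rpow (Real.rpow_nonneg (by positivity) _) (le_of_lt hμ),
        ← Real.rpow_mul (by positivity), hq'p, Real.rpow_one, ← hNdef,
        inv_mul_cancel₀ (ne_of_gt hN)]
    · have hPs : P (N⁻¹ • f) = N⁻¹ • f' := by rw [map_smul, hf'def]
      rw [hPs]
      have hper : ∀ v, ((N⁻¹ • f') v) ^ 2 = N⁻¹ ^ 2 * f' v ^ 2 := by
        intro v
        have hv1 : (N⁻¹ • f') v = N⁻¹ * f' v := rfl
        rw [hv1, mul_pow]
      rw [Finset.sum_congr rfl fun v _ => hper v, ← Finset.mul_sum,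
        show (n:ℝ)⁻¹ * (N⁻¹ ^ 2 * ∑ v, f' v ^ 2) = N⁻¹ ^ 2 * D by rw [hDdef]; ring,
        Real.sqrt_mul (sq_nonneg _), Real.sqrt_sq (by positivity)]
  have hz00 : 0 ≤ N⁻¹ * Real.sqrt D := by positivity
  have hPnorm0 : 0 ≤ Pnorm := by
    rw [hPnorm]
    exact le_trans hz00 (le_csSup hZbdd hz0mem)
  have hDle : D ≤ N ^ 2 * Pnorm ^ 2 := by
    have hz0 : N⁻¹ * Real.sqrt D ≤ Pnorm := by
      rw [hPnorm]; exact le_csSup hZbdd hz0mem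
    have hsq : Real.sqrt D ≤ N * Pnorm := by
      calc Real.sqrt D = N * (N⁻¹ * Real.sqrt D) := by
            field_simp
        _ ≤ N * Pnorm := mul_le_mul_of_nonneg_left hz0 (le_of_lt hN)
    calc D = Real.sqrt D ^ 2 := (Real.sq_sqrt hD0).symm
      _ ≤ (N * Pnorm) ^ 2 := pow_le_pow_left₀ (Real.sqrt_nonneg _) hsq 2
      _ = N ^ 2 * Pnorm ^ 2 := mul_pow _ _ _
  -- decomposition of the quadratic form
  have hf'mem : f' ∈ Vge := by rw [hf'def]; exact hPmem f
  have hfsplit : f = f' + f'' := by funext v; simp [hf''def]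
  have hcross1 : ∑ v, f'' v * (G.mulVec f') v = 0 :=
    horthsum _ (nbie_mem_Vge n G lam Vge hVge f' hf'mem)
  have hcross2 : ∑ v, f' v * (G.mulVec f'') v = 0 := by
    rw [nbie_swap_sum n G hsym' f' f'']
    exact hcross1
  have hdecomp : ∑ v, f v * (G.mulVec f) v
      = ∑ v, f' v * (G.mulVec f') v + ∑ v, f'' v * (G.mulVec f'') v := by
    conv_lhs => rw [hfsplit]
    rw [Matrix.mulVec_add]
    have hper : ∀ v, (f' + f'') v * (G.mulVec f' + G.mulVec f'') v
        = f' v * (G.mulVec f') v + f'' v * (G.mulVec f'') v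
          + (f'' v * (G.mulVec f') v + f' v * (G.mulVec f'') v) := by
      intro v
      simp only [Pi.add_apply]
      ring
    rw [Finset.sum_congr rfl fun v _ => hper v]
    rw [Finset.sum_add_distrib, Finset.sum_add_distrib, Finset.sum_add_distrib,
      hcross1, hcross2]
    ring
  have hcrossP : ∑ v, f'' v * f' v = 0 := horthsum f' hf'mem
  have hPyth : ∑ v, f v ^ 2 = ∑ v, f' v ^ 2 + ∑ v, f'' v ^ 2 := by
    have hper : ∀ v, f v ^ 2 = f' v ^ 2 + f'' v ^ 2 + 2 * (f'' v * f' v) := by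
      intro v
      have hv : f v = f' v + f'' v := by simp [hf''def]
      rw [hv]; ring
    rw [Finset.sum_congr rfl fun v _ => hper v, Finset.sum_add_distrib,
      Finset.sum_add_distrib, ← Finset.mul_sum, hcrossP]
    ring
  have hcardsum : ∑ v, f v ^ 2 = (S.card : ℝ) := by
    have hper : ∀ v, f v ^ 2 = if v ∈ S then (1:ℝ) else 0 := by
      intro v
      by_cases hv : v ∈ S <;> simp [hfdef, hv]
    rw [Finset.sum_congr rfl fun v _ => hper v]
    simp
  -- spectral bounds
  have hQ1 : ∑ v, f' v * (G.mulVec f') v ≤ ∑ v, f' v ^ 2 :=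
    nbie_quad_le n G hsym' hnonneg hrow f'
  have hQ2 : ∑ v, f'' v * (G.mulVec f'') v ≤ lam * ∑ v, f'' v ^ 2 := by
    refine nbie_spectral_bound n G hH hsym' lam f'' fun i hi => ?_
    have hbmem : (fun v => hH.eigenvectorBasis i v : Fin n → ℝ) ∈ Vge := by
      rw [hVge]
      refine Submodule.mem_iSup_of_mem (hH.eigenvalues i) ?_
      refine Submodule.mem_iSup_of_mem hi ?_
      rw [Module.End.mem_eigenspace_iff]
      funext v
      exact congrFun (hH.mulVec_eigenvectorBasis i) v
    have h := horthsum _ hbmem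
    calc ∑ v, (hH.eigenvectorBasis i) v * f'' v
        = ∑ v, f'' v * (fun v => hH.eigenvectorBasis i v) v :=
          Finset.sum_congr rfl fun v _ => mul_comm _ _
      _ = 0 := h
  -- put everything together
  have hf'sq0 : 0 ≤ ∑ v, f' v ^ 2 := Finset.sum_nonneg fun v _ => sq_nonneg _
  have hf''sq0 : 0 ≤ ∑ v, f'' v ^ 2 := Finset.sum_nonneg fun v _ => sq_nonneg _
  have hsum1 : ∑ v, f v * (G.mulVec f) v
      ≤ lam * (S.card : ℝ) + (1 - lam) * ∑ v, f' v ^ 2 := by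
    have h2 : ∑ v, f'' v ^ 2 = (S.card : ℝ) - ∑ v, f' v ^ 2 := by
      linarith only [hPyth, hcardsum]
    rw [hdecomp]
    calc ∑ v, f' v * (G.mulVec f') v + ∑ v, f'' v * (G.mulVec f'') v
        ≤ ∑ v, f' v ^ 2 + lam * ∑ v, f'' v ^ 2 := add_le_add hQ1 hQ2
      _ = lam * (S.card : ℝ) + (1 - lam) * ∑ v, f' v ^ 2 := by rw [h2]; ring
  have hNsq : N ^ 2 = μ ^ ((q-2)/q) * μ := by
    rw [hNdef, ← Real.rpow_natCast (μ ^ p) 2, ← Real.rpow_mul (le_of_lt hμ)]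
    rw [show (p * ((2:ℕ):ℝ) : ℝ) = (q-2)/q + 1 by
      push_cast; rw [hpdef]; field_simp; ring]
    rw [Real.rpow_add hμ, Real.rpow_one]
  have key : ((n:ℝ)⁻¹ * ∑ v, f v * (G.mulVec f) v) / μ
      ≤ lam + Pnorm ^ 2 * μ ^ ((q-2)/q) := by
    rw [div_le_iff₀ hμ]
    have hL : (n:ℝ)⁻¹ * ∑ v, f v * (G.mulVec f) v
        ≤ (n:ℝ)⁻¹ * (lam * (S.card : ℝ) + (1 - lam) * ∑ v, f' v ^ 2) :=
      mul_le_mul_of_nonneg_left hsum1 (le_of_lt hninv)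
    have hE : (n:ℝ)⁻¹ * (lam * (S.card : ℝ) + (1 - lam) * ∑ v, f' v ^ 2)
        = lam * μ + (1 - lam) * D := by
      rw [hμdef, hDdef]; ring
    have hstep : (1 - lam) * D ≤ D := mul_le_of_le_one_left hD0 (by linarith only [hlam0])
    have hfinal : lam * μ + D ≤ (lam + Pnorm ^ 2 * μ ^ ((q-2)/q)) * μ := by
      have hNP : Pnorm ^ 2 * μ ^ ((q-2)/q) * μ = N ^ 2 * Pnorm ^ 2 := by
        rw [hNsq]; ring
      have hexpand : (lam + Pnorm ^ 2 * μ ^ ((q-2)/q)) * μ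
          = lam * μ + N ^ 2 * Pnorm ^ 2 := by
        rw [← hNP]; ring
      rw [hexpand]
      linarith only [hDle]
    rw [hE] at hL
    calc (n:ℝ)⁻¹ * ∑ v, f v * (G.mulVec f) v
        ≤ lam * μ + (1 - lam) * D := hL
      _ ≤ lam * μ + D := by linarith only [hstep]
      _ ≤ (lam + Pnorm ^ 2 * μ ^ ((q-2)/q)) * μ := hfinal
  linarith only [key]
end

section
/- Let I be a finite set, let p : I → [0,1] be a probability mass function (Σᵢ pᵢ = 1), let N be a positive integer with Σᵢ pᵢ² ≤ 1/N, and let g : I → ℝ. Then there exists a subset T ⊆ I with |T| = N such that (1/N)·Σ_{x∈T} g(x)² ≥ (Σᵢ pᵢ·|g(i)|)²/4. -/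
/-- (Lemma D.4.)  Let `p` be a probability mass function on a finite set `I` with
collision probability `Σᵢ pᵢ² ≤ 1/N`, and let `g : I → ℝ`.  Then there is a subset
`T ⊆ I` of size `N` with `(1/N)·Σ_{x∈T} g(x)² ≥ (Σᵢ pᵢ·|g(i)|)²/4`. -/
theorem collision_probability_large_set
    (I : Type) [Fintype I]
    (p : I → ℝ) (hp : ∀ i, 0 ≤ p i) (hp1 : ∑ i, p i = 1)
    (N : ℕ) (hN : 0 < N) (hcp : ∑ i, p i ^ 2 ≤ 1 / N)
    (g : I → ℝ) :
    ∃ T : Finset I, T.card = N ∧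
      (N : ℝ)⁻¹ * ∑ x ∈ T, g x ^ 2 ≥ (∑ i, p i * |g i|) ^ 2 / 4 := by
  classical
  set μ := ∑ i, p i * |g i| with hμdef
  have hμ : 0 ≤ μ := Finset.sum_nonneg fun i _ => mul_nonneg (hp i) (abs_nonneg _)
  have hNpos : (0:ℝ) < N := by exact_mod_cast hN
  -- |I| ≥ N
  have hcard : N ≤ Fintype.card I := by
    have h1 : (1:ℝ) ≤ (Fintype.card I : ℝ) * (1 / N) := by
      calc (1:ℝ) = (∑ i, p i) ^ 2 := by rw [hp1]; ring
        _ ≤ (Finset.univ.card : ℝ) * ∑ i, p i ^ 2 := sq_sum_le_card_mul_sum_sq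
        _ ≤ (Fintype.card I : ℝ) * (1 / N) := by
            rw [Finset.card_univ]
            exact mul_le_mul_of_nonneg_left hcp (by positivity)
    have : (N:ℝ) ≤ (Fintype.card I : ℝ) := by
      rw [mul_one_div, le_div_iff₀ hNpos, one_mul] at h1
      linarith
    exact_mod_cast this
  set S := Finset.univ.filter (fun i => μ/2 ≤ |g i|) with hSdef
  have hSsq : ∀ x ∈ S, μ^2/4 ≤ g x ^ 2 := by
    intro x hx
    have hx' : μ/2 ≤ |g x| := (Finset.mem_filter.mp hx).2
    have := mul_le_mul hx' hx' (by linarith) (abs_nonneg _)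
    calc μ^2/4 = (μ/2) * (μ/2) := by ring
      _ ≤ |g x| * |g x| := this
      _ = g x ^ 2 := by rw [← sq_abs]; ring
  rcases le_or_gt S.card N with hle | hlt
  · -- extend S to T of card N
    obtain ⟨T, hST, hTcard⟩ := Finset.exists_superset_card_eq hle (by
      simpa [Finset.card_univ] using hcard)
    refine ⟨T, hTcard, ?_⟩
    -- key: ∑_S g² ≥ N μ²/4
    have hhalf : μ/2 ≤ ∑ i ∈ S, p i * |g i| := by
      have hsplit : μ = (∑ i ∈ S, p i * |g i|) + ∑ i ∈ Sᶜ, p i * |g i| := by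
        rw [hμdef]
        exact (Finset.sum_add_sum_compl S _).symm
      have hcompl : ∑ i ∈ Sᶜ, p i * |g i| ≤ μ/2 := by
        calc ∑ i ∈ Sᶜ, p i * |g i| ≤ ∑ i ∈ Sᶜ, p i * (μ/2) := by
              apply Finset.sum_le_sum
              intro i hi
              have : ¬ (μ/2 ≤ |g i|) := by
                simpa [hSdef] using (Finset.mem_compl.mp hi)
              exact mul_le_mul_of_nonneg_left (le_of_not_ge this) (hp i)
          _ = (∑ i ∈ Sᶜ, p i) * (μ/2) := by rw [Finset.sum_mul]
          _ ≤ 1 * (μ/2) := by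
              apply mul_le_mul_of_nonneg_right _ (by linarith)
              rw [← hp1]
              exact Finset.sum_le_sum_of_subset_of_nonneg (Finset.subset_univ _)
                (fun i _ _ => hp i)
          _ = μ/2 := one_mul _
      linarith
    have hcs : (∑ i ∈ S, p i * |g i|) ^ 2 ≤ (∑ i ∈ S, p i ^ 2) * ∑ i ∈ S, |g i| ^ 2 :=
      Finset.sum_mul_sq_le_sq_mul_sq S p (fun i => |g i|)
    have hpS : ∑ i ∈ S, p i ^ 2 ≤ 1 / N := by
      refine le_trans (Finset.sum_le_sum_of_subset_of_nonneg (Finset.subset_univ _)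
        (fun i _ _ => sq_nonneg _)) hcp
    have hgS : ∑ i ∈ S, |g i| ^ 2 = ∑ i ∈ S, g i ^ 2 := by
      simp [sq_abs]
    have hgSnn : 0 ≤ ∑ i ∈ S, g i ^ 2 := Finset.sum_nonneg fun i _ => sq_nonneg _
    have hkey : (N:ℝ) * (μ^2/4) ≤ ∑ i ∈ S, g i ^ 2 := by
      have h1 : (μ/2)^2 ≤ (1/N) * ∑ i ∈ S, g i ^ 2 := by
        calc (μ/2)^2 ≤ (∑ i ∈ S, p i * |g i|) ^ 2 := by
              apply sq_le_sq' <;> nlinarith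
          _ ≤ (∑ i ∈ S, p i ^ 2) * ∑ i ∈ S, |g i| ^ 2 := hcs
          _ ≤ (1/N) * ∑ i ∈ S, g i ^ 2 := by
              rw [hgS]
              exact mul_le_mul_of_nonneg_right hpS hgSnn
      have := mul_le_mul_of_nonneg_left h1 (le_of_lt hNpos)
      rw [← mul_assoc] at this
      field_simp at this ⊢
      nlinarith
    have hsub : ∑ i ∈ S, g i ^ 2 ≤ ∑ x ∈ T, g x ^ 2 :=
      Finset.sum_le_sum_of_subset_of_nonneg hST (fun i _ _ => sq_nonneg _)
    rw [ge_iff_le, div_le_iff₀ (by norm_num : (0:ℝ) < 4)]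
    rw [le_div_iff₀ hNpos] at hcp
    calc μ ^ 2 = 4 * (μ^2/4) := by ring
      _ ≤ 4 * ((N:ℝ)⁻¹ * ∑ x ∈ T, g x ^ 2) := by
          apply mul_le_mul_of_nonneg_left _ (by norm_num)
          rw [le_inv_mul_iff₀ hNpos]
          calc (N:ℝ) * (μ^2/4) ≤ ∑ i ∈ S, g i ^ 2 := hkey
            _ ≤ ∑ x ∈ T, g x ^ 2 := hsub
      _ = (N : ℝ)⁻¹ * (∑ x ∈ T, g x ^ 2) * 4 := by ring
  · -- take T ⊆ S of card N
    obtain ⟨T, hTS, hTcard⟩ := Finset.exists_subset_card_eq hlt.le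
    refine ⟨T, hTcard, ?_⟩
    have : (N:ℝ) * (μ^2/4) ≤ ∑ x ∈ T, g x ^ 2 := by
      calc (N:ℝ) * (μ^2/4) = ∑ _x ∈ T, μ^2/4 := by
            rw [Finset.sum_const, hTcard, nsmul_eq_mul]
        _ ≤ ∑ x ∈ T, g x ^ 2 := Finset.sum_le_sum fun x hx => hSsq x (hTS hx)
    rw [ge_iff_le, div_le_iff₀ (by norm_num : (0:ℝ) < 4)]
    calc μ ^ 2 = 4 * (μ^2/4) := by ring
      _ ≤ 4 * ((N:ℝ)⁻¹ * ∑ x ∈ T, g x ^ 2) := by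
          apply mul_le_mul_of_nonneg_left _ (by norm_num)
          rw [le_inv_mul_iff₀ hNpos]
          exact this
      _ = (N : ℝ)⁻¹ * (∑ x ∈ T, g x ^ 2) * 4 := by ring
end
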